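/- arXiv:2312.08538 — 5 statements merged into one kernel-verified Lean document; each statement's English description precedes it below -/
import Mathlib

section
/- Under the iConEF-v2 algorithm (p_t^i = η g_t^i + ẽ_t^i + q_t^i; Δ_t^i = Q(p_t^i); x_{t+1} = x_t − (1/N)Σ_i Δ_t^i; ẽ_{t+1}^i = Q(p_t^i − Δ_t^i); q_{t+1}^i = C(p_t^i − Δ_t^i − ẽ_{t+1}^i); ẽ_0^i = q_0^i = 0), with stochastic gradients satisfying E[g_t^i | x_t] = ∇f(x_t), E[||g_t^i − ∇f(x_t)||² | x_t] ≤ σ², E[||∇f(x_t)||²] ≤ G², error compressor C unbiased with E[||C(x) − x||² | x] ≤ θ||x||², and gradient compressor Q satisfying E[||Q(x) − x||² | x] ≤ δ||x||²: if δ = c/((1+λ)(1+√θ)²) for some c ∈ (0,1), λ > 0, then writing e_{t+1}^i = ẽ_{t+1}^i + q_{t+1}^i, it holds for every t ≥ 0 that E[|| (1/N) Σ_{i=1}^N e_{t+1}^i ||²] ≤ (c/((1−c)λ)) · η² (σ² + G²). -/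
open MeasureTheory ProbabilityTheory
open scoped ENNReal BigOperators

section Helpers

lemma lintegral_le_sqrt_lintegral_sq {α : Type*} [MeasurableSpace α] {m : Measure α}
    [IsProbabilityMeasure m] {r : α → ℝ≥0∞} (hr : AEMeasurable r m) :
    ∫⁻ a, r a ∂m ≤ (∫⁻ a, (r a) ^ 2 ∂m) ^ (1/2 : ℝ) := by
  have hconj : Real.HolderConjugate 2 2 := by constructor <;> norm_num
  have h := ENNReal.lintegral_mul_le_Lp_mul_Lq m hconj hr (aemeasurable_const (b := (1:ℝ≥0∞)))
  simp only [Pi.mul_apply, mul_one, ENNReal.one_rpow, lintegral_const, measure_univ,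
    one_mul, ENNReal.one_rpow] at h
  calc ∫⁻ a, r a ∂m ≤ (∫⁻ a, r a ^ (2:ℝ) ∂m) ^ (1/2 : ℝ) * 1 := by
        simpa using h
    _ = (∫⁻ a, (r a) ^ 2 ∂m) ^ (1/2 : ℝ) := by
        rw [mul_one]
        congr 1
        refine lintegral_congr fun a => ?_
        rw [← ENNReal.rpow_natCast (r a) 2]
        norm_num

lemma rpow_half_ofReal_sq {s : ℝ} (hs : 0 ≤ s) :
    (ENNReal.ofReal (s ^ 2)) ^ (1/2 : ℝ) = ENNReal.ofReal s := by
  rw [ENNReal.ofReal_rpow_of_nonneg (by positivity) (by norm_num)]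
  congr 1
  rw [← Real.rpow_natCast s 2, ← Real.rpow_mul hs]
  norm_num

lemma lintegral_sq_add_const {α : Type*} [MeasurableSpace α] {m : Measure α}
    [IsProbabilityMeasure m] {r : α → ℝ≥0∞} (hr : AEMeasurable r m) {K s : ℝ}
    (hK : 0 ≤ K) (hs : 0 ≤ s)
    (hvar : ∫⁻ a, (r a) ^ 2 ∂m ≤ ENNReal.ofReal (s ^ 2)) :
    ∫⁻ a, (ENNReal.ofReal K + r a) ^ 2 ∂m ≤ ENNReal.ofReal ((K + s) ^ 2) := by
  have hmean : ∫⁻ a, r a ∂m ≤ ENNReal.ofReal s := by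
    calc ∫⁻ a, r a ∂m ≤ (∫⁻ a, (r a) ^ 2 ∂m) ^ (1/2 : ℝ) :=
          lintegral_le_sqrt_lintegral_sq hr
      _ ≤ (ENNReal.ofReal (s ^ 2)) ^ (1/2 : ℝ) :=
          ENNReal.rpow_le_rpow hvar (by norm_num)
      _ = ENNReal.ofReal s := rpow_half_ofReal_sq hs
  have hexp : ∀ a, (ENNReal.ofReal K + r a) ^ 2
      = ENNReal.ofReal (K ^ 2) + ((2 * ENNReal.ofReal K) * r a + (r a) ^ 2) := by
    intro a
    rw [add_sq, ← ENNReal.ofReal_pow hK]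
    ring
  calc ∫⁻ a, (ENNReal.ofReal K + r a) ^ 2 ∂m
      = ENNReal.ofReal (K ^ 2) + ∫⁻ a, ((2 * ENNReal.ofReal K) * r a + (r a) ^ 2) ∂m := by
        simp only [hexp]
        rw [lintegral_add_left measurable_const]
        simp
    _ = ENNReal.ofReal (K ^ 2) + ((2 * ENNReal.ofReal K) * ∫⁻ a, r a ∂m + ∫⁻ a, (r a) ^ 2 ∂m) := by
        rw [lintegral_add_left' (hr.const_mul _), lintegral_const_mul'' _ hr]
    _ ≤ ENNReal.ofReal (K ^ 2) + ((2 * ENNReal.ofReal K) * ENNReal.ofReal s + ENNReal.ofReal (s ^ 2)) := by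
        gcongr
    _ = ENNReal.ofReal ((K + s) ^ 2) := by
        rw [← ENNReal.ofReal_ofNat, ← ENNReal.ofReal_mul (by norm_num),
          ← ENNReal.ofReal_mul (by positivity), ← ENNReal.ofReal_add (by positivity) (by positivity),
          ← ENNReal.ofReal_add (by positivity) (by positivity)]
        ring_nf

open scoped RealInnerProductSpace in
lemma lintegral_sq_of_unbiased {α F : Type*} [MeasurableSpace α] {m : Measure α}
    [IsProbabilityMeasure m] [NormedAddCommGroup F] [InnerProductSpace ℝ F]
    [MeasurableSpace F] [BorelSpace F] [SecondCountableTopology F] [CompleteSpace F]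
    {h : α → F} (hmeas : Measurable h) {v : F} {s2 : ℝ}
    (hs2 : 0 ≤ s2) (hmean : ∫ a, h a ∂m = v)
    (hvar : ∫⁻ a, (‖h a - v‖₊ : ℝ≥0∞) ^ 2 ∂m ≤ ENNReal.ofReal s2) :
    ∫⁻ a, (‖h a‖₊ : ℝ≥0∞) ^ 2 ∂m ≤ ENNReal.ofReal (s2 + ‖v‖ ^ 2) := by
  set g : α → F := fun a => h a - v with hg
  have hgmeas : Measurable g := hmeas.sub measurable_const
  have hfin : ∫⁻ a, (‖g a‖₊ : ℝ≥0∞) ^ 2 ∂m ≠ ⊤ :=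
    (lt_of_le_of_lt hvar ENNReal.ofReal_lt_top).ne
  have hintg2 : Integrable (fun a => ‖g a‖ ^ 2) m := by
    refine ⟨(hgmeas.norm.pow_const 2).aestronglyMeasurable, ?_⟩
    rw [hasFiniteIntegral_def]
    calc ∫⁻ a, ‖‖g a‖ ^ 2‖₊ ∂m = ∫⁻ a, (‖g a‖₊ : ℝ≥0∞) ^ 2 ∂m := by
          refine lintegral_congr fun a => ?_
          rw [← ENNReal.coe_pow]
          congr 1
          ext
          simp [abs_of_nonneg (sq_nonneg (‖g a‖))]
      _ < ⊤ := hfin.lt_top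
  have hintg : Integrable g m := by
    refine ⟨hgmeas.aestronglyMeasurable, ?_⟩
    rw [hasFiniteIntegral_def]
    calc ∫⁻ a, (‖g a‖₊ : ℝ≥0∞) ∂m ≤ (∫⁻ a, (‖g a‖₊ : ℝ≥0∞) ^ 2 ∂m) ^ (1/2 : ℝ) :=
          lintegral_le_sqrt_lintegral_sq (hgmeas.nnnorm.coe_nnreal_ennreal.aemeasurable)
      _ < ⊤ := ENNReal.rpow_lt_top_of_nonneg (by norm_num) hfin
  have hinth : Integrable h m := by
    have : h = fun a => g a + v := by funext a; simp [hg]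
    rw [this]; exact hintg.add (integrable_const v)
  have hgint0 : ∫ a, g a ∂m = 0 := by
    rw [integral_sub hinth (integrable_const v), hmean]
    simp
  have hintinner : Integrable (fun a => ⟪g a, v⟫) m := hintg.inner_const v
  have hinner0 : ∫ a, ⟪g a, v⟫ ∂m = 0 := by
    have : ∫ a, ⟪v, g a⟫ ∂m = ⟪v, ∫ a, g a ∂m⟫ := integral_inner hintg v
    rw [hgint0, inner_zero_right] at this
    calc ∫ a, ⟪g a, v⟫ ∂m = ∫ a, ⟪v, g a⟫ ∂m := by
          simp_rw [real_inner_comm]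
      _ = 0 := this
  have hid : ∀ a, ‖h a‖ ^ 2 = ‖g a‖ ^ 2 + 2 * ⟪g a, v⟫ + ‖v‖ ^ 2 := by
    intro a
    have : h a = g a + v := by simp [hg]
    rw [this, norm_add_sq_real]
  have hinth2 : Integrable (fun a => ‖h a‖ ^ 2) m := by
    simp_rw [hid]
    exact (hintg2.add (hintinner.const_mul 2)).add (integrable_const _)
  have hgval : ∫ a, ‖g a‖ ^ 2 ∂m ≤ s2 := by
    have heq : ENNReal.ofReal (∫ a, ‖g a‖ ^ 2 ∂m) = ∫⁻ a, (‖g a‖₊ : ℝ≥0∞) ^ 2 ∂m := by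
      rw [ofReal_integral_eq_lintegral_ofReal hintg2
        (Filter.Eventually.of_forall fun a => sq_nonneg _)]
      refine lintegral_congr fun a => ?_
      rw [ENNReal.ofReal_pow (norm_nonneg _), ofReal_norm, enorm_eq_nnnorm]
    have := heq.trans_le hvar
    rwa [ENNReal.ofReal_le_ofReal_iff hs2] at this
  have hval : ∫ a, ‖h a‖ ^ 2 ∂m ≤ s2 + ‖v‖ ^ 2 := by
    calc ∫ a, ‖h a‖ ^ 2 ∂m
        = ∫ a, ‖g a‖ ^ 2 ∂m + 2 * ∫ a, ⟪g a, v⟫ ∂m + ‖v‖ ^ 2 := by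
          simp_rw [hid]
          have e1 : ∫ a, (‖g a‖ ^ 2 + 2 * ⟪g a, v⟫ + ‖v‖ ^ 2) ∂m
              = (∫ a, (‖g a‖ ^ 2 + 2 * ⟪g a, v⟫) ∂m) + ∫ _a, (‖v‖ ^ 2 : ℝ) ∂m :=
            integral_add (hintg2.add (hintinner.const_mul 2)) (integrable_const _)
          have e2 : ∫ a, (‖g a‖ ^ 2 + 2 * ⟪g a, v⟫) ∂m
              = (∫ a, ‖g a‖ ^ 2 ∂m) + ∫ a, 2 * ⟪g a, v⟫ ∂m :=
            integral_add hintg2 (hintinner.const_mul 2)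
          rw [e1, e2, MeasureTheory.integral_const_mul, integral_const]
          simp
      _ ≤ s2 + ‖v‖ ^ 2 := by rw [hinner0]; simpa using hgval
  calc ∫⁻ a, (‖h a‖₊ : ℝ≥0∞) ^ 2 ∂m
      = ENNReal.ofReal (∫ a, ‖h a‖ ^ 2 ∂m) := by
        rw [ofReal_integral_eq_lintegral_ofReal hinth2
          (Filter.Eventually.of_forall fun a => sq_nonneg _)]
        refine lintegral_congr fun a => ?_
        rw [ENNReal.ofReal_pow (norm_nonneg _), ofReal_norm, enorm_eq_nnnorm]
    _ ≤ ENNReal.ofReal (s2 + ‖v‖ ^ 2) := ENNReal.ofReal_le_ofReal hval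

lemma enorm_sq_eq {F : Type*} [NormedAddCommGroup F] (z : F) :
    (‖z‖₊ : ℝ≥0∞) ^ 2 = ENNReal.ofReal (‖z‖ ^ 2) := by
  rw [ENNReal.ofReal_pow (norm_nonneg _), ofReal_norm, enorm_eq_nnnorm]

lemma young_sq {lam : ℝ} (hlam : 0 < lam) {F : Type*} [SeminormedAddGroup F] (u w : F) :
    ‖u + w‖ ^ 2 ≤ (1 + 1/lam) * ‖u‖ ^ 2 + (1 + lam) * ‖w‖ ^ 2 := by
  have h3 : ‖u + w‖ ^ 2 ≤ (‖u‖ + ‖w‖) ^ 2 := by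
    nlinarith [norm_add_le u w, norm_nonneg (u + w)]
  have key : lam * (‖u‖ + ‖w‖) ^ 2 ≤ lam * ((1 + 1/lam) * ‖u‖ ^ 2 + (1 + lam) * ‖w‖ ^ 2) := by
    have : lam * ((1 + 1/lam) * ‖u‖ ^ 2 + (1 + lam) * ‖w‖ ^ 2)
        = (lam + 1) * ‖u‖ ^ 2 + (lam * (1 + lam)) * ‖w‖ ^ 2 := by
      field_simp
    rw [this]
    nlinarith [sq_nonneg (‖u‖ - lam * ‖w‖)]
  have := (mul_le_mul_iff_right₀ hlam).mp key
  linarith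

/-- One full round of the iConEF-v2 update, as a function of the state triple
`(x, ẽ, q)` and the fresh seeds. Returns `ẽ⁺ + q⁺`, the new accumulated error. -/
def algStep {F Ωg ΩQ ΩC : Type*} [NormedAddCommGroup F] [NormedSpace ℝ F]
    (η : ℝ) (G1 : F → Ωg → F) (Q : F → ΩQ → F) (C : F → ΩC → F)
    (z : (F × F × F) × (Ωg × ΩQ × ΩQ × ΩC)) : F :=
  let pp := η • G1 z.1.1 z.2.1 + z.1.2.1 + z.1.2.2
  let dd := Q pp z.2.2.1
  let ee := Q (pp - dd) z.2.2.2.1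
  ee + C (pp - dd - ee) z.2.2.2.2

lemma algStep_measurable {F Ωg ΩQ ΩC : Type*} [NormedAddCommGroup F] [NormedSpace ℝ F]
    [MeasurableSpace F] [BorelSpace F] [SecondCountableTopology F]
    [MeasurableSpace Ωg] [MeasurableSpace ΩQ] [MeasurableSpace ΩC]
    (η : ℝ) {G1 : F → Ωg → F} {Q : F → ΩQ → F} {C : F → ΩC → F}
    (hG1 : Measurable (Function.uncurry G1)) (hQ : Measurable (Function.uncurry Q))
    (hC : Measurable (Function.uncurry C)) :
    Measurable (algStep η G1 Q C) := by
  have hpp : Measurable (fun z : (F × F × F) × (Ωg × ΩQ × ΩQ × ΩC) =>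
      η • G1 z.1.1 z.2.1 + z.1.2.1 + z.1.2.2) := by
    have hG : Measurable (fun z : (F × F × F) × (Ωg × ΩQ × ΩQ × ΩC) => G1 z.1.1 z.2.1) :=
      hG1.comp (measurable_fst.fst.prodMk measurable_snd.fst)
    exact ((hG.const_smul η).add measurable_fst.snd.fst).add measurable_fst.snd.snd
  have hdd : Measurable (fun z : (F × F × F) × (Ωg × ΩQ × ΩQ × ΩC) =>
      Q (η • G1 z.1.1 z.2.1 + z.1.2.1 + z.1.2.2) z.2.2.1) :=
    hQ.comp (hpp.prodMk measurable_snd.snd.fst)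
  have hee : Measurable (fun z : (F × F × F) × (Ωg × ΩQ × ΩQ × ΩC) =>
      Q ((η • G1 z.1.1 z.2.1 + z.1.2.1 + z.1.2.2)
        - Q (η • G1 z.1.1 z.2.1 + z.1.2.1 + z.1.2.2) z.2.2.1) z.2.2.2.1) :=
    hQ.comp ((hpp.sub hdd).prodMk measurable_snd.snd.snd.fst)
  exact hee.add (hC.comp (((hpp.sub hdd).sub hee).prodMk measurable_snd.snd.snd.snd))

end Helpers
set_option maxHeartbeats 2000000 in
/-- **iConEF-v2 error-energy bound (Lemma 5).**
Under iConEF-v2 (`p t i = η • g t i + ẽ t i + q t i`, `Δ t i = Q (p t i)`,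
`x (t+1) = x t - (1/N) • ∑ i, Δ t i`, `ẽ (t+1) i = Q (p t i - Δ t i)`,
`q (t+1) i = C (p t i - Δ t i - ẽ (t+1) i)`, `ẽ 0 i = q 0 i = 0`), with unbiased
stochastic gradients of variance `≤ σ²` and `E[‖∇f(x t)‖²] ≤ G²`, an unbiased error
compressor `C` with `E[‖C a - a‖²|a] ≤ θ‖a‖²`, and a gradient compressor `Q` with
`E[‖Q a - a‖²|a] ≤ δ‖a‖²` where `δ = c/((1+λ)(1+√θ)²)` for some `c ∈ (0,1)`, `λ > 0`:
writing `e (t+1) i = ẽ (t+1) i + q (t+1) i`, for every `t ≥ 0`,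
`E[‖(1/N) ∑ i, e (t+1) i‖²] ≤ (c/((1-c)λ)) η² (σ² + G²)`. -/
theorem iconef_v2_error_energy_bound
    (d N : ℕ) (hN : 0 < N)
    (σ G δ θ c lam η : ℝ)
    (hσ : 0 ≤ σ) (hG : 0 ≤ G) (hθ : 0 ≤ θ)
    (hδ0 : 0 < δ) (hδ1 : δ < 1) (hc : c ∈ Set.Ioo (0 : ℝ) 1) (hlam : 0 < lam)
    (hδeq : δ = c / ((1 + lam) * (1 + Real.sqrt θ) ^ 2))
    (hη : 0 < η)
    (f : EuclideanSpace ℝ (Fin d) → ℝ) (hf : Differentiable ℝ f)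
    -- seed spaces for the stochastic gradients and the compressor calls
    {Ωg ΩQ ΩC : Type} [MeasurableSpace Ωg] [MeasurableSpace ΩQ] [MeasurableSpace ΩC]
    (νg : Measure Ωg) (νQ : Measure ΩQ) (νC : Measure ΩC)
    [IsProbabilityMeasure νg] [IsProbabilityMeasure νQ] [IsProbabilityMeasure νC]
    (G' : ℕ → Fin N → EuclideanSpace ℝ (Fin d) → Ωg → EuclideanSpace ℝ (Fin d))
    (Q : EuclideanSpace ℝ (Fin d) → ΩQ → EuclideanSpace ℝ (Fin d))
    (C : EuclideanSpace ℝ (Fin d) → ΩC → EuclideanSpace ℝ (Fin d))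
    (hGmeas : ∀ t i, Measurable (Function.uncurry (G' t i)))
    (hQmeas : Measurable (Function.uncurry Q))
    (hCmeas : Measurable (Function.uncurry C))
    -- Assumption 2: unbiased stochastic gradients with bounded variance
    (hGmean : ∀ t i a, ∫ ω, G' t i a ω ∂νg = gradient f a)
    (hGvar : ∀ t i a,
      ∫⁻ ω, (‖G' t i a ω - gradient f a‖₊ : ℝ≥0∞) ^ 2 ∂νg ≤ ENNReal.ofReal (σ ^ 2))
    -- Assumption 4: contractive gradient compressor
    (hQvar : ∀ a, ∫⁻ ω, (‖Q a ω - a‖₊ : ℝ≥0∞) ^ 2 ∂νQ ≤ ENNReal.ofReal (δ * ‖a‖ ^ 2))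
    -- Assumption 3: unbiased error compressor
    (hCmean : ∀ a, ∫ ω, C a ω ∂νC = a)
    (hCvar : ∀ a, ∫⁻ ω, (‖C a ω - a‖₊ : ℝ≥0∞) ^ 2 ∂νC ≤ ENNReal.ofReal (θ * ‖a‖ ^ 2))
    -- the underlying sample space carrying i.i.d. fresh seeds for every (t, i):
    -- one gradient seed and two Q seeds plus one C seed per step
    {Ω : Type} [MeasurableSpace Ω] (μ : Measure Ω) [IsProbabilityMeasure μ]
    (seed : ℕ → Fin N → Ω → Ωg × ΩQ × ΩQ × ΩC)
    (hseedMeas : ∀ t i, Measurable (seed t i))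
    (hseedLaw : ∀ t i, Measure.map (seed t i) μ = νg.prod (νQ.prod (νQ.prod νC)))
    (hseedIndep : iIndepFun
      (fun q : ℕ × Fin N => seed q.1 q.2) μ)
    -- the iConEF-v2 trajectories
    (x0 : EuclideanSpace ℝ (Fin d))
    (x : ℕ → Ω → EuclideanSpace ℝ (Fin d))
    (et q g p Δ : ℕ → Fin N → Ω → EuclideanSpace ℝ (Fin d))
    (hx0 : ∀ ω, x 0 ω = x0)
    (het0 : ∀ i ω, et 0 i ω = 0)
    (hq0 : ∀ i ω, q 0 i ω = 0)
    (hg : ∀ t i ω, g t i ω = G' t i (x t ω) (seed t i ω).1)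
    (hp : ∀ t i ω, p t i ω = η • g t i ω + et t i ω + q t i ω)
    (hΔ : ∀ t i ω, Δ t i ω = Q (p t i ω) (seed t i ω).2.1)
    (hx : ∀ t ω, x (t + 1) ω = x t ω - (N : ℝ)⁻¹ • ∑ i, Δ t i ω)
    (het : ∀ t i ω, et (t + 1) i ω = Q (p t i ω - Δ t i ω) (seed t i ω).2.2.1)
    (hq : ∀ t i ω,
      q (t + 1) i ω = C (p t i ω - Δ t i ω - et (t + 1) i ω) (seed t i ω).2.2.2)
    -- Assumption 2: bounded expected squared gradient norm
    (hgradbound : ∀ t,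
      ∫⁻ ω, (‖gradient f (x t ω)‖₊ : ℝ≥0∞) ^ 2 ∂μ ≤ ENNReal.ofReal (G ^ 2)) :
    ∀ t : ℕ,
      ∫⁻ ω, (‖(N : ℝ)⁻¹ • ∑ i, (et (t + 1) i ω + q (t + 1) i ω)‖₊ : ℝ≥0∞) ^ 2 ∂μ
        ≤ ENNReal.ofReal ((c / ((1 - c) * lam)) * η ^ 2 * (σ ^ 2 + G ^ 2)) := by
  obtain ⟨hc0, hc1⟩ := hc
  have hsqθ : (0:ℝ) ≤ Real.sqrt θ := Real.sqrt_nonneg θ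
  have hlam1 : (0:ℝ) < 1 + lam := by linarith
  have hlamne : lam ≠ 0 := ne_of_gt hlam
  have h1c : (0:ℝ) < 1 - c := by linarith
  set κ : ℝ := c / (1 + lam) with hκdef
  have hκ0 : 0 < κ := div_pos hc0 hlam1
  have hδκ : (1 + Real.sqrt θ) ^ 2 * δ = κ := by
    rw [hδeq, hκdef]
    have h1 : ((1:ℝ) + Real.sqrt θ) ^ 2 ≠ 0 := by positivity
    field_simp
  -- the filtration generated by the seeds strictly before time u
  set 𝓕 : ℕ → MeasurableSpace Ω := fun u =>
    ⨆ r ∈ {r : ℕ × Fin N | r.1 < u}, MeasurableSpace.comap (seed r.1 r.2) inferInstance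
    with h𝓕def
  have h𝓕le : ∀ u, 𝓕 u ≤ ‹MeasurableSpace Ω› := fun u =>
    iSup₂_le fun r _ => (hseedMeas r.1 r.2).comap_le
  have h𝓕mono : ∀ u v, u ≤ v → 𝓕 u ≤ 𝓕 v := fun u v huv =>
    biSup_mono fun r hr => lt_of_lt_of_le hr huv
  have hseed𝓕 : ∀ u i, MeasurableSpace.comap (seed u i) inferInstance ≤ 𝓕 (u + 1) := by
    intro u i
    exact le_biSup (fun r : ℕ × Fin N => MeasurableSpace.comap (seed r.1 r.2) inferInstance)
      (show ((u, i) : ℕ × Fin N) ∈ {r : ℕ × Fin N | r.1 < u + 1} from Nat.lt_succ_self u)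
  -- trajectory measurability with respect to the filtration
  have htraj : ∀ u, Measurable[𝓕 u] (x u) ∧
      ∀ i, Measurable[𝓕 u] (et u i) ∧ Measurable[𝓕 u] (q u i) := by
    intro u
    induction u with
    | zero =>
      refine ⟨?_, fun i => ⟨?_, ?_⟩⟩
      · have hh : x 0 = fun _ => x0 := funext hx0
        rw [hh]; exact measurable_const
      · have hh : et 0 i = fun _ => (0 : EuclideanSpace ℝ (Fin d)) := funext (het0 i)
        rw [hh]; exact measurable_const
      · have hh : q 0 i = fun _ => (0 : EuclideanSpace ℝ (Fin d)) := funext (hq0 i)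
        rw [hh]; exact measurable_const
    | succ u ih =>
      obtain ⟨ihx, ihe⟩ := ih
      have hle : 𝓕 u ≤ 𝓕 (u+1) := h𝓕mono u (u+1) (Nat.le_succ u)
      have hseedm : ∀ i, Measurable[𝓕 (u+1)] (seed u i) := fun i =>
        Measurable.of_comap_le (hseed𝓕 u i)
      have hxm : Measurable[𝓕 (u+1)] (x u) := ihx.mono hle le_rfl
      have hgm : ∀ i, Measurable[𝓕 (u+1)] (g u i) := by
        intro i
        have hh : g u i = fun ω => Function.uncurry (G' u i) (x u ω, (seed u i ω).1) :=
          funext fun ω => hg u i ω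
        rw [hh]
        exact (hGmeas u i).comp (hxm.prodMk ((hseedm i).fst))
      have hpm : ∀ i, Measurable[𝓕 (u+1)] (p u i) := by
        intro i
        have hh : p u i = fun ω => η • g u i ω + et u i ω + q u i ω := funext fun ω => hp u i ω
        rw [hh]
        exact (((hgm i).const_smul η).add ((ihe i).1.mono hle le_rfl)).add
          ((ihe i).2.mono hle le_rfl)
      have hΔm : ∀ i, Measurable[𝓕 (u+1)] (Δ u i) := by
        intro i
        have hh : Δ u i = fun ω => Function.uncurry Q (p u i ω, (seed u i ω).2.1) :=
          funext fun ω => hΔ u i ω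
        rw [hh]
        exact hQmeas.comp ((hpm i).prodMk ((hseedm i).snd.fst))
      have hetm : ∀ i, Measurable[𝓕 (u+1)] (et (u+1) i) := by
        intro i
        have hh : et (u+1) i
            = fun ω => Function.uncurry Q (p u i ω - Δ u i ω, (seed u i ω).2.2.1) :=
          funext fun ω => het u i ω
        rw [hh]
        exact hQmeas.comp (((hpm i).sub (hΔm i)).prodMk ((hseedm i).snd.snd.fst))
      refine ⟨?_, fun i => ⟨hetm i, ?_⟩⟩
      · have hh : x (u+1) = fun ω => x u ω - (N : ℝ)⁻¹ • ∑ i, Δ u i ω :=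
          funext fun ω => hx u ω
        rw [hh]
        exact hxm.sub ((Finset.measurable_sum Finset.univ fun i _ => hΔm i).const_smul ((N : ℝ)⁻¹))
      · have hh : q (u+1) i = fun ω =>
            Function.uncurry C (p u i ω - Δ u i ω - et (u+1) i ω, (seed u i ω).2.2.2) :=
          funext fun ω => hq u i ω
        rw [hh]
        exact hCmeas.comp ((((hpm i).sub (hΔm i)).sub (hetm i)).prodMk
          ((hseedm i).snd.snd.snd))
  have hxg : ∀ u, Measurable (x u) := fun u => ((htraj u).1).mono (h𝓕le u) le_rfl
  have hetg : ∀ u i, Measurable (et u i) := fun u i => ((htraj u).2 i).1.mono (h𝓕le u) le_rfl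
  have hqg : ∀ u i, Measurable (q u i) := fun u i => ((htraj u).2 i).2.mono (h𝓕le u) le_rfl
  have heqg : ∀ u i, Measurable (fun ω => et u i ω + q u i ω) := fun u i =>
    (hetg u i).add (hqg u i)
  have hgradmeas : Measurable (gradient f) := by
    have h1 : Measurable (fderiv ℝ f) := measurable_fderiv ℝ f
    exact ((InnerProductSpace.toDual ℝ
      (EuclideanSpace ℝ (Fin d))).symm.continuous.measurable).comp h1
  -- the one-step energy bound
  have hstep : ∀ u i, ∫⁻ ω, (‖et (u+1) i ω + q (u+1) i ω‖₊ : ℝ≥0∞) ^ 2 ∂μ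
      ≤ ENNReal.ofReal c * ∫⁻ ω, (‖et u i ω + q u i ω‖₊ : ℝ≥0∞) ^ 2 ∂μ
        + ENNReal.ofReal (c / lam * η ^ 2 * σ ^ 2)
        + ENNReal.ofReal (c / lam * η ^ 2) * ENNReal.ofReal (G ^ 2) := by
    intro u i
    set Φ := algStep η (G' u i) Q C with hΦdef
    have hΦmeas : Measurable Φ := algStep_measurable η (hGmeas u i) hQmeas hCmeas
    set V : Ω → (EuclideanSpace ℝ (Fin d)) × (EuclideanSpace ℝ (Fin d))
        × (EuclideanSpace ℝ (Fin d)) := fun ω => (x u ω, et u i ω, q u i ω) with hVdef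
    have hVmeasF : Measurable[𝓕 u] V :=
      (htraj u).1.prodMk (((htraj u).2 i).1.prodMk ((htraj u).2 i).2)
    have hVmeas : Measurable V := hVmeasF.mono (h𝓕le u) le_rfl
    have hWmeas : Measurable (seed u i) := hseedMeas u i
    have hkey : ∀ ω, et (u+1) i ω + q (u+1) i ω = Φ (V ω, seed u i ω) := by
      intro ω
      simp only [hΦdef, hVdef, algStep]
      rw [hq u i ω, het u i ω, hΔ u i ω, hp u i ω, hg u i ω]
    have hIndepσ : Indep (𝓕 u) (MeasurableSpace.comap (seed u i) inferInstance) μ := by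
      have hd : Disjoint {r : ℕ × Fin N | r.1 < u} ({(u, i)} : Set (ℕ × Fin N)) := by
        rw [Set.disjoint_singleton_right]
        simp
      have h2 := indep_iSup_of_disjoint
        (fun r : ℕ × Fin N => (hseedMeas r.1 r.2).comap_le) hseedIndep.iIndep hd
      rw [h𝓕def]
      simpa using h2
    have hIndep : IndepFun V (seed u i) μ :=
      indep_of_indep_of_le_left hIndepσ hVmeasF.comap_le
    have hlaw : μ.map (fun ω => (V ω, seed u i ω))
        = (μ.map V).prod (νg.prod (νQ.prod (νQ.prod νC))) := by
      rw [← hseedLaw u i]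
      exact (indepFun_iff_map_prod_eq_prod_map_map hVmeas.aemeasurable
        hWmeas.aemeasurable).mp hIndep
    set Bnd : (EuclideanSpace ℝ (Fin d)) × (EuclideanSpace ℝ (Fin d))
        × (EuclideanSpace ℝ (Fin d)) → ℝ≥0∞ := fun v =>
      ENNReal.ofReal (c * ‖v.2.1 + v.2.2‖ ^ 2 + c / lam * η ^ 2 * σ ^ 2
        + c / lam * η ^ 2 * ‖gradient f v.1‖ ^ 2) with hBnddef
    have hBndmeas : Measurable Bnd := by
      apply ENNReal.measurable_ofReal.comp
      refine Measurable.add (Measurable.add ?_ measurable_const) ?_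
      · exact measurable_const.mul
          (((measurable_snd.fst.add measurable_snd.snd).norm).pow_const 2)
      · exact measurable_const.mul (((hgradmeas.comp measurable_fst).norm).pow_const 2)
    have hFmeas : Measurable fun z : ((EuclideanSpace ℝ (Fin d)) × (EuclideanSpace ℝ (Fin d))
        × (EuclideanSpace ℝ (Fin d))) × (Ωg × ΩQ × ΩQ × ΩC) => (‖Φ z‖₊ : ℝ≥0∞) ^ 2 :=
      hΦmeas.nnnorm.coe_nnreal_ennreal.pow_const 2
    have hcond : ∀ v, ∫⁻ w, (‖Φ (v, w)‖₊ : ℝ≥0∞) ^ 2 ∂(νg.prod (νQ.prod (νQ.prod νC)))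
        ≤ Bnd v := by
      intro v
      have bC : ∀ bb ee0 : EuclideanSpace ℝ (Fin d),
          ∫⁻ w3, (‖ee0 + C (bb - ee0) w3‖₊ : ℝ≥0∞) ^ 2 ∂νC
            ≤ ENNReal.ofReal ((‖bb‖ + Real.sqrt θ * ‖bb - ee0‖) ^ 2) := by
        intro bb ee0
        have hr : Measurable fun w3 => (‖C (bb - ee0) w3 - (bb - ee0)‖₊ : ℝ≥0∞) :=
          ((hCmeas.comp measurable_prodMk_left).sub measurable_const).nnnorm.coe_nnreal_ennreal
        have hpt : ∀ w3, (‖ee0 + C (bb - ee0) w3‖₊ : ℝ≥0∞) ^ 2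
            ≤ (ENNReal.ofReal ‖bb‖ + (‖C (bb - ee0) w3 - (bb - ee0)‖₊ : ℝ≥0∞)) ^ 2 := by
          intro w3
          have h1 : ‖ee0 + C (bb - ee0) w3‖ ≤ ‖bb‖ + ‖C (bb - ee0) w3 - (bb - ee0)‖ := by
            have h0 : ee0 + C (bb - ee0) w3 = bb + (C (bb - ee0) w3 - (bb - ee0)) := by abel
            rw [h0]; exact norm_add_le _ _
          calc (‖ee0 + C (bb - ee0) w3‖₊ : ℝ≥0∞) ^ 2
              = ENNReal.ofReal (‖ee0 + C (bb - ee0) w3‖) ^ 2 := by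
                rw [ofReal_norm, enorm_eq_nnnorm]
            _ ≤ (ENNReal.ofReal (‖bb‖ + ‖C (bb - ee0) w3 - (bb - ee0)‖)) ^ 2 :=
                pow_le_pow_left' (ENNReal.ofReal_le_ofReal h1) 2
            _ = (ENNReal.ofReal ‖bb‖ + (‖C (bb - ee0) w3 - (bb - ee0)‖₊ : ℝ≥0∞)) ^ 2 := by
                rw [ENNReal.ofReal_add (norm_nonneg _) (norm_nonneg _),
                  ofReal_norm, enorm_eq_nnnorm, ofReal_norm, enorm_eq_nnnorm]
        have hvarC : ∫⁻ w3, ((‖C (bb - ee0) w3 - (bb - ee0)‖₊ : ℝ≥0∞)) ^ 2 ∂νC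
            ≤ ENNReal.ofReal ((Real.sqrt θ * ‖bb - ee0‖) ^ 2) := by
          have := hCvar (bb - ee0)
          rwa [show (Real.sqrt θ * ‖bb - ee0‖) ^ 2 = θ * ‖bb - ee0‖ ^ 2 by
            rw [mul_pow, Real.sq_sqrt hθ]]
        calc ∫⁻ w3, (‖ee0 + C (bb - ee0) w3‖₊ : ℝ≥0∞) ^ 2 ∂νC
            ≤ ∫⁻ w3, (ENNReal.ofReal ‖bb‖
                + (‖C (bb - ee0) w3 - (bb - ee0)‖₊ : ℝ≥0∞)) ^ 2 ∂νC := lintegral_mono hpt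
          _ ≤ ENNReal.ofReal ((‖bb‖ + Real.sqrt θ * ‖bb - ee0‖) ^ 2) :=
              lintegral_sq_add_const hr.aemeasurable (norm_nonneg _) (by positivity) hvarC
      have bQ2 : ∀ bb : EuclideanSpace ℝ (Fin d),
          ∫⁻ w2, ENNReal.ofReal ((‖bb‖ + Real.sqrt θ * ‖bb - Q bb w2‖) ^ 2) ∂νQ
            ≤ ENNReal.ofReal (((1 + Real.sqrt θ) * ‖bb‖) ^ 2) := by
        intro bb
        have hrmeas : Measurable fun w2 => (‖Q bb w2 - bb‖₊ : ℝ≥0∞) :=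
          ((hQmeas.comp measurable_prodMk_left).sub measurable_const).nnnorm.coe_nnreal_ennreal
        have hid : ∀ w2, ENNReal.ofReal ((‖bb‖ + Real.sqrt θ * ‖bb - Q bb w2‖) ^ 2)
            = (ENNReal.ofReal ‖bb‖
              + ENNReal.ofReal (Real.sqrt θ) * (‖Q bb w2 - bb‖₊ : ℝ≥0∞)) ^ 2 := by
          intro w2
          rw [← enorm_eq_nnnorm, ← ofReal_norm, ← ENNReal.ofReal_mul hsqθ,
            ← ENNReal.ofReal_add (norm_nonneg _) (by positivity),
            ← ENNReal.ofReal_pow (by positivity), norm_sub_rev]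
        simp_rw [hid]
        have hvar2 : ∫⁻ w2,
            (ENNReal.ofReal (Real.sqrt θ) * (‖Q bb w2 - bb‖₊ : ℝ≥0∞)) ^ 2 ∂νQ
            ≤ ENNReal.ofReal ((Real.sqrt θ * ‖bb‖) ^ 2) := by
          calc ∫⁻ w2, (ENNReal.ofReal (Real.sqrt θ) * (‖Q bb w2 - bb‖₊ : ℝ≥0∞)) ^ 2 ∂νQ
              = (ENNReal.ofReal (Real.sqrt θ)) ^ 2
                * ∫⁻ w2, (‖Q bb w2 - bb‖₊ : ℝ≥0∞) ^ 2 ∂νQ := by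
                rw [← lintegral_const_mul'' _ ((hrmeas.pow_const 2).aemeasurable)]
                exact lintegral_congr fun w2 => mul_pow _ _ 2
            _ ≤ (ENNReal.ofReal (Real.sqrt θ)) ^ 2 * ENNReal.ofReal (δ * ‖bb‖ ^ 2) := by
                gcongr
                exact hQvar bb
            _ = ENNReal.ofReal (θ * (δ * ‖bb‖ ^ 2)) := by
                rw [← ENNReal.ofReal_pow hsqθ, Real.sq_sqrt hθ,
                  ← ENNReal.ofReal_mul hθ]
            _ ≤ ENNReal.ofReal ((Real.sqrt θ * ‖bb‖) ^ 2) := by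
                apply ENNReal.ofReal_le_ofReal
                rw [mul_pow, Real.sq_sqrt hθ]
                have hd : δ * ‖bb‖ ^ 2 ≤ ‖bb‖ ^ 2 := by nlinarith [sq_nonneg ‖bb‖]
                exact mul_le_mul_of_nonneg_left hd hθ
        have := lintegral_sq_add_const ((hrmeas.const_mul _).aemeasurable)
          (norm_nonneg bb) (by positivity) hvar2
        calc ∫⁻ w2, (ENNReal.ofReal ‖bb‖
            + ENNReal.ofReal (Real.sqrt θ) * (‖Q bb w2 - bb‖₊ : ℝ≥0∞)) ^ 2 ∂νQ
            ≤ ENNReal.ofReal ((‖bb‖ + Real.sqrt θ * ‖bb‖) ^ 2) := this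
          _ = ENNReal.ofReal (((1 + Real.sqrt θ) * ‖bb‖) ^ 2) := by ring_nf
      have bQ1 : ∀ pv : EuclideanSpace ℝ (Fin d),
          ∫⁻ w1, ENNReal.ofReal (((1 + Real.sqrt θ) * ‖pv - Q pv w1‖) ^ 2) ∂νQ
            ≤ ENNReal.ofReal (κ * ‖pv‖ ^ 2) := by
        intro pv
        have hrmeas : Measurable fun w1 => (‖Q pv w1 - pv‖₊ : ℝ≥0∞) :=
          ((hQmeas.comp measurable_prodMk_left).sub measurable_const).nnnorm.coe_nnreal_ennreal
        calc ∫⁻ w1, ENNReal.ofReal (((1 + Real.sqrt θ) * ‖pv - Q pv w1‖) ^ 2) ∂νQ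
            = ∫⁻ w1, ENNReal.ofReal ((1 + Real.sqrt θ) ^ 2)
              * (‖Q pv w1 - pv‖₊ : ℝ≥0∞) ^ 2 ∂νQ := by
              refine lintegral_congr fun w1 => ?_
              rw [mul_pow, ENNReal.ofReal_mul (by positivity), enorm_sq_eq, norm_sub_rev]
          _ = ENNReal.ofReal ((1 + Real.sqrt θ) ^ 2)
              * ∫⁻ w1, (‖Q pv w1 - pv‖₊ : ℝ≥0∞) ^ 2 ∂νQ :=
              lintegral_const_mul'' _ ((hrmeas.pow_const 2).aemeasurable)
          _ ≤ ENNReal.ofReal ((1 + Real.sqrt θ) ^ 2) * ENNReal.ofReal (δ * ‖pv‖ ^ 2) := by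
              gcongr
              exact hQvar pv
          _ = ENNReal.ofReal (κ * ‖pv‖ ^ 2) := by
              rw [← ENNReal.ofReal_mul (by positivity)]
              congr 1
              rw [← hδκ]; ring
      have bG : ∫⁻ wg, ENNReal.ofReal (κ * ‖η • G' u i v.1 wg + v.2.1 + v.2.2‖ ^ 2) ∂νg
          ≤ Bnd v := by
        have hsec : Measurable fun wg => G' u i v.1 wg :=
          (hGmeas u i).comp measurable_prodMk_left
        have hGb : ∫⁻ wg, (‖G' u i v.1 wg‖₊ : ℝ≥0∞) ^ 2 ∂νg
            ≤ ENNReal.ofReal (σ ^ 2 + ‖gradient f v.1‖ ^ 2) :=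
          lintegral_sq_of_unbiased hsec (sq_nonneg σ) (hGmean u i v.1) (hGvar u i v.1)
        have hpt : ∀ wg, ENNReal.ofReal (κ * ‖η • G' u i v.1 wg + v.2.1 + v.2.2‖ ^ 2)
            ≤ ENNReal.ofReal (κ * (1 + 1/lam) * η ^ 2) * (‖G' u i v.1 wg‖₊ : ℝ≥0∞) ^ 2
              + ENNReal.ofReal (κ * (1 + lam) * ‖v.2.1 + v.2.2‖ ^ 2) := by
          intro wg
          have hsm : ‖η • G' u i v.1 wg‖ ^ 2 = η ^ 2 * ‖G' u i v.1 wg‖ ^ 2 := by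
            rw [norm_smul, mul_pow, Real.norm_eq_abs, sq_abs]
          have h1 : ‖η • G' u i v.1 wg + v.2.1 + v.2.2‖ ^ 2
              ≤ (1 + 1/lam) * (η ^ 2 * ‖G' u i v.1 wg‖ ^ 2)
                + (1 + lam) * ‖v.2.1 + v.2.2‖ ^ 2 := by
            have h2 := young_sq hlam (η • G' u i v.1 wg) (v.2.1 + v.2.2)
            rw [add_assoc]
            rw [hsm] at h2
            exact h2
          calc ENNReal.ofReal (κ * ‖η • G' u i v.1 wg + v.2.1 + v.2.2‖ ^ 2)
              ≤ ENNReal.ofReal (κ * (1 + 1/lam) * η ^ 2 * ‖G' u i v.1 wg‖ ^ 2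
                + κ * (1 + lam) * ‖v.2.1 + v.2.2‖ ^ 2) := by
                apply ENNReal.ofReal_le_ofReal
                nlinarith [hκ0.le, h1, mul_le_mul_of_nonneg_left h1 hκ0.le]
            _ = ENNReal.ofReal (κ * (1 + 1/lam) * η ^ 2) * (‖G' u i v.1 wg‖₊ : ℝ≥0∞) ^ 2
                + ENNReal.ofReal (κ * (1 + lam) * ‖v.2.1 + v.2.2‖ ^ 2) := by
                rw [ENNReal.ofReal_add (by positivity) (by positivity),
                  ENNReal.ofReal_mul (by positivity), enorm_sq_eq]
        calc ∫⁻ wg, ENNReal.ofReal (κ * ‖η • G' u i v.1 wg + v.2.1 + v.2.2‖ ^ 2) ∂νg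
            ≤ ∫⁻ wg, (ENNReal.ofReal (κ * (1 + 1/lam) * η ^ 2)
                * (‖G' u i v.1 wg‖₊ : ℝ≥0∞) ^ 2
                + ENNReal.ofReal (κ * (1 + lam) * ‖v.2.1 + v.2.2‖ ^ 2)) ∂νg :=
              lintegral_mono hpt
          _ = ENNReal.ofReal (κ * (1 + 1/lam) * η ^ 2)
                * ∫⁻ wg, (‖G' u i v.1 wg‖₊ : ℝ≥0∞) ^ 2 ∂νg
                + ENNReal.ofReal (κ * (1 + lam) * ‖v.2.1 + v.2.2‖ ^ 2) := by
              rw [lintegral_add_right _ measurable_const,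
                lintegral_const_mul _ (hsec.nnnorm.coe_nnreal_ennreal.pow_const 2), lintegral_const,
                measure_univ, mul_one]
          _ ≤ ENNReal.ofReal (κ * (1 + 1/lam) * η ^ 2)
                * ENNReal.ofReal (σ ^ 2 + ‖gradient f v.1‖ ^ 2)
                + ENNReal.ofReal (κ * (1 + lam) * ‖v.2.1 + v.2.2‖ ^ 2) := by
              gcongr
          _ = Bnd v := by
              rw [hBnddef]
              rw [← ENNReal.ofReal_mul (by positivity),
                ← ENNReal.ofReal_add (by positivity) (by positivity)]
              apply congrArg
              rw [hκdef]
              field_simp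
              ring
      have hF1 : Measurable fun w0 : Ωg × ΩQ × ΩQ × ΩC => (‖Φ (v, w0)‖₊ : ℝ≥0∞) ^ 2 :=
        hFmeas.comp measurable_prodMk_left
      have hsplit : ∫⁻ w0, (‖Φ (v, w0)‖₊ : ℝ≥0∞) ^ 2 ∂(νg.prod (νQ.prod (νQ.prod νC)))
          = ∫⁻ wg, ∫⁻ w1, ∫⁻ w2, ∫⁻ w3,
              (‖Φ (v, (wg, w1, w2, w3))‖₊ : ℝ≥0∞) ^ 2 ∂νC ∂νQ ∂νQ ∂νg := by
        rw [lintegral_prod _ hF1.aemeasurable]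
        refine lintegral_congr fun wg => ?_
        have hF2 : Measurable fun wr : ΩQ × ΩQ × ΩC =>
            (‖Φ (v, (wg, wr))‖₊ : ℝ≥0∞) ^ 2 := hF1.comp measurable_prodMk_left
        rw [lintegral_prod _ hF2.aemeasurable]
        refine lintegral_congr fun w1 => ?_
        have hF3 : Measurable fun wr : ΩQ × ΩC =>
            (‖Φ (v, (wg, w1, wr))‖₊ : ℝ≥0∞) ^ 2 := hF2.comp measurable_prodMk_left
        rw [lintegral_prod _ hF3.aemeasurable]
      calc ∫⁻ w, (‖Φ (v, w)‖₊ : ℝ≥0∞) ^ 2 ∂(νg.prod (νQ.prod (νQ.prod νC)))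
          = ∫⁻ wg, ∫⁻ w1, ∫⁻ w2, ∫⁻ w3,
              (‖Φ (v, (wg, w1, w2, w3))‖₊ : ℝ≥0∞) ^ 2 ∂νC ∂νQ ∂νQ ∂νg := hsplit
        _ ≤ ∫⁻ wg, ENNReal.ofReal (κ * ‖η • G' u i v.1 wg + v.2.1 + v.2.2‖ ^ 2) ∂νg := by
            refine lintegral_mono fun wg => ?_
            set pv : EuclideanSpace ℝ (Fin d) := η • G' u i v.1 wg + v.2.1 + v.2.2 with hpv
            calc ∫⁻ w1, ∫⁻ w2, ∫⁻ w3,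
                (‖Φ (v, (wg, w1, w2, w3))‖₊ : ℝ≥0∞) ^ 2 ∂νC ∂νQ ∂νQ
                ≤ ∫⁻ w1, ∫⁻ w2, ENNReal.ofReal ((‖pv - Q pv w1‖
                  + Real.sqrt θ * ‖(pv - Q pv w1) - Q (pv - Q pv w1) w2‖) ^ 2) ∂νQ ∂νQ := by
                  refine lintegral_mono fun w1 => lintegral_mono fun w2 => ?_
                  have hΦeq : ∀ w3, Φ (v, (wg, w1, w2, w3))
                      = Q (pv - Q pv w1) w2
                        + C ((pv - Q pv w1) - Q (pv - Q pv w1) w2) w3 := by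
                    intro w3
                    simp only [hΦdef, algStep, hpv]
                  simp_rw [hΦeq]
                  exact bC (pv - Q pv w1) (Q (pv - Q pv w1) w2)
              _ ≤ ∫⁻ w1, ENNReal.ofReal (((1 + Real.sqrt θ) * ‖pv - Q pv w1‖) ^ 2) ∂νQ :=
                  lintegral_mono fun w1 => bQ2 (pv - Q pv w1)
              _ ≤ ENNReal.ofReal (κ * ‖pv‖ ^ 2) := bQ1 pv
        _ ≤ Bnd v := bG
    have hops : Measurable fun ω => (V ω, seed u i ω) := hVmeas.prodMk hWmeas
    calc ∫⁻ ω, (‖et (u+1) i ω + q (u+1) i ω‖₊ : ℝ≥0∞) ^ 2 ∂μ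
        = ∫⁻ ω, (fun z => (‖Φ z‖₊ : ℝ≥0∞) ^ 2) (V ω, seed u i ω) ∂μ := by
          refine lintegral_congr fun ω => ?_
          rw [hkey ω]
      _ = ∫⁻ z, (‖Φ z‖₊ : ℝ≥0∞) ^ 2 ∂(μ.map fun ω => (V ω, seed u i ω)) :=
          (lintegral_map hFmeas hops).symm
      _ = ∫⁻ z, (‖Φ z‖₊ : ℝ≥0∞) ^ 2
            ∂((μ.map V).prod (νg.prod (νQ.prod (νQ.prod νC)))) := by rw [hlaw]
      _ = ∫⁻ v, ∫⁻ w, (‖Φ (v, w)‖₊ : ℝ≥0∞) ^ 2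
            ∂(νg.prod (νQ.prod (νQ.prod νC))) ∂(μ.map V) :=
          lintegral_prod _ hFmeas.aemeasurable
      _ ≤ ∫⁻ v, Bnd v ∂(μ.map V) := lintegral_mono hcond
      _ = ∫⁻ ω, Bnd (V ω) ∂μ := lintegral_map hBndmeas hVmeas
      _ = ENNReal.ofReal c * ∫⁻ ω, (‖et u i ω + q u i ω‖₊ : ℝ≥0∞) ^ 2 ∂μ
            + ENNReal.ofReal (c / lam * η ^ 2 * σ ^ 2)
            + ENNReal.ofReal (c / lam * η ^ 2)
              * ∫⁻ ω, (‖gradient f (x u ω)‖₊ : ℝ≥0∞) ^ 2 ∂μ := by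
          have hptw : ∀ ω, Bnd (V ω) = ENNReal.ofReal c
              * (‖et u i ω + q u i ω‖₊ : ℝ≥0∞) ^ 2
              + ENNReal.ofReal (c / lam * η ^ 2 * σ ^ 2)
              + ENNReal.ofReal (c / lam * η ^ 2)
                * (‖gradient f (x u ω)‖₊ : ℝ≥0∞) ^ 2 := by
            intro ω
            simp only [hBnddef, hVdef]
            rw [enorm_sq_eq, enorm_sq_eq, ← ENNReal.ofReal_mul hc0.le,
              ← ENNReal.ofReal_mul (by positivity),
              ← ENNReal.ofReal_add (by positivity) (by positivity),
              ← ENNReal.ofReal_add (by positivity) (by positivity)]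
          simp_rw [hptw]
          have hgx : Measurable fun ω => (‖gradient f (x u ω)‖₊ : ℝ≥0∞) ^ 2 :=
            (hgradmeas.comp (hxg u)).nnnorm.coe_nnreal_ennreal.pow_const 2
          have heq2 : Measurable fun ω => (‖et u i ω + q u i ω‖₊ : ℝ≥0∞) ^ 2 :=
            (heqg u i).nnnorm.coe_nnreal_ennreal.pow_const 2
          rw [lintegral_add_right _ (show Measurable fun ω => ENNReal.ofReal (c / lam * η ^ 2)
              * (‖gradient f (x u ω)‖₊ : ℝ≥0∞) ^ 2 from measurable_const.mul hgx),
            lintegral_add_right _ measurable_const,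
            lintegral_const_mul _ heq2,
            lintegral_const_mul _ hgx,
            lintegral_const, measure_univ, mul_one]
      _ ≤ ENNReal.ofReal c * ∫⁻ ω, (‖et u i ω + q u i ω‖₊ : ℝ≥0∞) ^ 2 ∂μ
            + ENNReal.ofReal (c / lam * η ^ 2 * σ ^ 2)
            + ENNReal.ofReal (c / lam * η ^ 2) * ENNReal.ofReal (G ^ 2) := by
          gcongr
          exact hgradbound u
  -- uniform bound by induction
  have hden : (0:ℝ) < (1 - c) * lam := mul_pos h1c hlam
  have hBnn : (0:ℝ) ≤ c / ((1 - c) * lam) * η ^ 2 * (σ ^ 2 + G ^ 2) := by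
    apply mul_nonneg (mul_nonneg (div_nonneg hc0.le hden.le) (sq_nonneg η))
    positivity
  have hB : ∀ u i, ∫⁻ ω, (‖et u i ω + q u i ω‖₊ : ℝ≥0∞) ^ 2 ∂μ
      ≤ ENNReal.ofReal (c / ((1 - c) * lam) * η ^ 2 * (σ ^ 2 + G ^ 2)) := by
    intro u
    induction u with
    | zero =>
      intro i
      have hz : ∀ ω, et 0 i ω + q 0 i ω = (0 : EuclideanSpace ℝ (Fin d)) := fun ω => by
        rw [het0, hq0]; simp
      simp only [hz]
      simp
    | succ u ih =>
      intro i
      refine le_trans (hstep u i) ?_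
      calc ENNReal.ofReal c * ∫⁻ ω, (‖et u i ω + q u i ω‖₊ : ℝ≥0∞) ^ 2 ∂μ
            + ENNReal.ofReal (c / lam * η ^ 2 * σ ^ 2)
            + ENNReal.ofReal (c / lam * η ^ 2) * ENNReal.ofReal (G ^ 2)
          ≤ ENNReal.ofReal c
              * ENNReal.ofReal (c / ((1 - c) * lam) * η ^ 2 * (σ ^ 2 + G ^ 2))
            + ENNReal.ofReal (c / lam * η ^ 2 * σ ^ 2)
            + ENNReal.ofReal (c / lam * η ^ 2) * ENNReal.ofReal (G ^ 2) := by
            gcongr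
            exact ih i
        _ = ENNReal.ofReal (c * (c / ((1 - c) * lam) * η ^ 2 * (σ ^ 2 + G ^ 2))
              + c / lam * η ^ 2 * σ ^ 2 + c / lam * η ^ 2 * G ^ 2) := by
            rw [← ENNReal.ofReal_mul hc0.le, ← ENNReal.ofReal_mul (by positivity),
              ← ENNReal.ofReal_add (mul_nonneg hc0.le hBnn) (by positivity),
              ← ENNReal.ofReal_add (by positivity) (by positivity)]
        _ = ENNReal.ofReal (c / ((1 - c) * lam) * η ^ 2 * (σ ^ 2 + G ^ 2)) := by
            congr 1
            have h1cne : (1:ℝ) - c ≠ 0 := ne_of_gt h1c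
            field_simp
            ring
  -- averaging over the workers
  intro t
  have hbig : ∀ ω, (‖(N : ℝ)⁻¹ • ∑ i, (et (t+1) i ω + q (t+1) i ω)‖₊ : ℝ≥0∞) ^ 2
      ≤ ENNReal.ofReal (N : ℝ)⁻¹
        * ∑ i, (‖et (t+1) i ω + q (t+1) i ω‖₊ : ℝ≥0∞) ^ 2 := by
    intro ω
    have hN0 : (0:ℝ) < (N : ℝ) := by exact_mod_cast hN
    have hreal : ‖(N : ℝ)⁻¹ • ∑ i, (et (t+1) i ω + q (t+1) i ω)‖ ^ 2
        ≤ (N : ℝ)⁻¹ * ∑ i, ‖et (t+1) i ω + q (t+1) i ω‖ ^ 2 := by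
      have h1 : ‖(N : ℝ)⁻¹ • ∑ i, (et (t+1) i ω + q (t+1) i ω)‖
          = (N : ℝ)⁻¹ * ‖∑ i, (et (t+1) i ω + q (t+1) i ω)‖ := by
        rw [norm_smul, Real.norm_eq_abs, abs_of_nonneg (by positivity)]
      have h2 : ‖∑ i, (et (t+1) i ω + q (t+1) i ω)‖
          ≤ ∑ i, ‖et (t+1) i ω + q (t+1) i ω‖ := norm_sum_le _ _
      have h3 : (∑ i, ‖et (t+1) i ω + q (t+1) i ω‖) ^ 2
          ≤ (N : ℝ) * ∑ i, ‖et (t+1) i ω + q (t+1) i ω‖ ^ 2 := by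
        have h4 := sq_sum_le_card_mul_sum_sq (s := (Finset.univ : Finset (Fin N)))
          (f := fun i => ‖et (t+1) i ω + q (t+1) i ω‖)
        simpa using h4
      have h5 : ‖∑ i, (et (t+1) i ω + q (t+1) i ω)‖ ^ 2
          ≤ (∑ i, ‖et (t+1) i ω + q (t+1) i ω‖) ^ 2 := by
        have hnn : (0:ℝ) ≤ ‖∑ i, (et (t+1) i ω + q (t+1) i ω)‖ := norm_nonneg _
        nlinarith [h2]
      calc ‖(N : ℝ)⁻¹ • ∑ i, (et (t+1) i ω + q (t+1) i ω)‖ ^ 2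
          = ((N : ℝ)⁻¹) ^ 2 * ‖∑ i, (et (t+1) i ω + q (t+1) i ω)‖ ^ 2 := by
            rw [h1]; ring
        _ ≤ ((N : ℝ)⁻¹) ^ 2 * ((N : ℝ) * ∑ i, ‖et (t+1) i ω + q (t+1) i ω‖ ^ 2) := by
            apply mul_le_mul_of_nonneg_left _ (by positivity)
            exact le_trans h5 h3
        _ = (N : ℝ)⁻¹ * ∑ i, ‖et (t+1) i ω + q (t+1) i ω‖ ^ 2 := by
            field_simp
    calc (‖(N : ℝ)⁻¹ • ∑ i, (et (t+1) i ω + q (t+1) i ω)‖₊ : ℝ≥0∞) ^ 2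
        = ENNReal.ofReal (‖(N : ℝ)⁻¹ • ∑ i, (et (t+1) i ω + q (t+1) i ω)‖ ^ 2) :=
          enorm_sq_eq _
      _ ≤ ENNReal.ofReal ((N : ℝ)⁻¹ * ∑ i, ‖et (t+1) i ω + q (t+1) i ω‖ ^ 2) :=
          ENNReal.ofReal_le_ofReal hreal
      _ = ENNReal.ofReal (N : ℝ)⁻¹
            * ∑ i, (‖et (t+1) i ω + q (t+1) i ω‖₊ : ℝ≥0∞) ^ 2 := by
          rw [ENNReal.ofReal_mul (by positivity),
            ENNReal.ofReal_sum_of_nonneg (fun i _ => sq_nonneg _)]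
          congr 1
          exact Finset.sum_congr rfl fun i _ => (enorm_sq_eq _).symm
  calc ∫⁻ ω, (‖(N : ℝ)⁻¹ • ∑ i, (et (t+1) i ω + q (t+1) i ω)‖₊ : ℝ≥0∞) ^ 2 ∂μ
      ≤ ∫⁻ ω, ENNReal.ofReal (N : ℝ)⁻¹
          * ∑ i, (‖et (t+1) i ω + q (t+1) i ω‖₊ : ℝ≥0∞) ^ 2 ∂μ := lintegral_mono hbig
    _ = ENNReal.ofReal (N : ℝ)⁻¹
          * ∑ i, ∫⁻ ω, (‖et (t+1) i ω + q (t+1) i ω‖₊ : ℝ≥0∞) ^ 2 ∂μ := by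
        rw [lintegral_const_mul _
            (Finset.measurable_sum _ fun i _ => ((heqg (t+1) i).nnnorm.coe_nnreal_ennreal.pow_const 2)),
          lintegral_finset_sum _ fun i _ => ((heqg (t+1) i).nnnorm.coe_nnreal_ennreal.pow_const 2)]
    _ ≤ ENNReal.ofReal (N : ℝ)⁻¹ * ∑ _i : Fin N,
          ENNReal.ofReal (c / ((1 - c) * lam) * η ^ 2 * (σ ^ 2 + G ^ 2)) := by
        gcongr with i
        exact hB (t+1) i
    _ = ENNReal.ofReal ((c / ((1 - c) * lam)) * η ^ 2 * (σ ^ 2 + G ^ 2)) := by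
        rw [Finset.sum_const, Finset.card_univ, Fintype.card_fin, nsmul_eq_mul,
          ← ENNReal.ofReal_natCast N, ← ENNReal.ofReal_mul (by positivity),
          ← ENNReal.ofReal_mul (by positivity)]
        congr 1
        have hN0 : (N : ℝ) ≠ 0 := by
          have : (0:ℝ) < (N : ℝ) := by exact_mod_cast hN
          exact ne_of_gt this
        field_simp
end

section
/- Under the iConEF-v2 algorithm (p_t^i = η g_t^i + ẽ_t^i + q_t^i; Δ_t^i = Q(p_t^i); x_{t+1} = x_t − (1/N)Σ_i Δ_t^i; ẽ_{t+1}^i = Q(p_t^i − Δ_t^i); q_{t+1}^i = C(p_t^i − Δ_t^i − ẽ_{t+1}^i); ẽ_0^i = q_0^i = 0), with stochastic gradients satisfying E[g_t^i | x_t] = ∇f(x_t), E[||g_t^i − ∇f(x_t)||² | x_t] ≤ σ², E[||∇f(x_t)||²] ≤ G², conditionally independent across the N workers, error compressor C unbiased with E[||C(x) − x||² | x] ≤ θ||x||², and gradient compressor Q satisfying E[||Q(x) − x||² | x] ≤ δ||x||² where δ = c/((1+λ)(1+√θ)²) for some c ∈ (0,1), λ > 0: defining ζ_t^i = (ẽ_{t+1}^i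 + q_{t+1}^i) − p_t^i + Δ_t^i, it holds for every t that E[|| (1/N) Σ_{i=1}^N ζ_t^i ||²] ≤ ((1 − c + c/λ)/(1 − c)) · 2δ²θη²(σ² + G²)/N. -/
open MeasureTheory ProbabilityTheory
open scoped ENNReal BigOperators RealInnerProductSpace

namespace IconefV2Aux
noncomputable section
set_option maxHeartbeats 1000000

set_option linter.unusedSectionVars false

variable {β : Type*} [MeasurableSpace β]
variable {E : Type*} [NormedAddCommGroup E] [InnerProductSpace ℝ E] [CompleteSpace E]

lemma ofReal_norm_sq (z : E) : ENNReal.ofReal (‖z‖ ^ 2) = (‖z‖₊ : ℝ≥0∞) ^ 2 := by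
  rw [ENNReal.ofReal_pow (norm_nonneg z), ofReal_norm, enorm_eq_nnnorm]

lemma ofReal_mul_norm_sq {a : ℝ} (ha : 0 ≤ a) (z : E) :
    ENNReal.ofReal (a * ‖z‖ ^ 2) = ENNReal.ofReal a * (‖z‖₊ : ℝ≥0∞) ^ 2 := by
  rw [ENNReal.ofReal_mul ha, ofReal_norm_sq]

lemma nnnorm_smul_sq (r : ℝ) (z : E) :
    (‖r • z‖₊ : ℝ≥0∞) ^ 2 = ENNReal.ofReal (r ^ 2) * (‖z‖₊ : ℝ≥0∞) ^ 2 := by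
  rw [← ofReal_norm_sq, ← ofReal_norm_sq, norm_smul, mul_pow, Real.norm_eq_abs, sq_abs,
    ENNReal.ofReal_mul (sq_nonneg r)]

lemma memLp_of_lintegral {ν : Measure β} {v : β → E}
    (hm : AEStronglyMeasurable v ν) (h : ∫⁻ y, (‖v y‖₊ : ℝ≥0∞) ^ 2 ∂ν ≠ ∞) :
    MemLp v 2 ν := by
  refine ⟨hm, ?_⟩
  rw [eLpNorm_eq_lintegral_rpow_enorm_toReal (by norm_num) (by norm_num)]
  have : ∀ y, (‖v y‖₊ : ℝ≥0∞) ^ ((2 : ℝ≥0∞).toReal) = (‖v y‖₊ : ℝ≥0∞) ^ 2 := by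
    intro y; norm_num
  simp only [enorm_eq_nnnorm, this]
  exact ENNReal.rpow_lt_top_of_nonneg (by norm_num) h

lemma lintegral_sq_eq {ν : Measure β} {v : β → E} (hv : MemLp v 2 ν) :
    ∫⁻ y, (‖v y‖₊ : ℝ≥0∞) ^ 2 ∂ν = ENNReal.ofReal (∫ y, ‖v y‖ ^ 2 ∂ν) := by
  rw [MeasureTheory.ofReal_integral_eq_lintegral_ofReal
      (by simpa [sq] using hv.norm.integrable_sq)
      (Filter.Eventually.of_forall fun y => sq_nonneg _)]
  refine lintegral_congr fun y => (ofReal_norm_sq _).symm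

/-- finiteness of the second moment from a `MemLp` proof -/
lemma lintegral_sq_ne_top {ν : Measure β} {v : β → E} (hv : MemLp v 2 ν) :
    ∫⁻ y, (‖v y‖₊ : ℝ≥0∞) ^ 2 ∂ν ≠ ∞ := by
  rw [lintegral_sq_eq hv]; exact ENNReal.ofReal_ne_top

/-- variance decomposition with a constant shift -/
lemma variance_decomp {ν : Measure β} [IsProbabilityMeasure ν] {v : β → E}
    (hv : MemLp v 2 ν) (cst : E) :
    ∫⁻ y, (‖cst + v y‖₊ : ℝ≥0∞) ^ 2 ∂ν
      = ENNReal.ofReal (‖cst + ∫ y, v y ∂ν‖ ^ 2)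
        + ∫⁻ y, (‖v y - ∫ y, v y ∂ν‖₊ : ℝ≥0∞) ^ 2 ∂ν := by
  set m := ∫ y, v y ∂ν with hm
  have hvm : MemLp (fun y => v y - m) 2 ν := hv.sub (memLp_const m)
  have hcv : MemLp (fun y => cst + v y) 2 ν := (memLp_const cst).add hv
  rw [lintegral_sq_eq hcv, lintegral_sq_eq hvm, ← ENNReal.ofReal_add (by positivity)
    (integral_nonneg fun y => sq_nonneg _)]
  congr 1
  have hInt1 : Integrable (fun y => (2:ℝ) * (inner ℝ (cst + m) (v y - m) : ℝ)) ν := by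
    exact ((hvm.integrable one_le_two).const_inner _).const_mul 2
  have hInt2 : Integrable (fun y => ‖v y - m‖ ^ 2) ν := by
    simpa [sq] using hvm.norm.integrable_sq
  have key : (fun y => ‖cst + v y‖ ^ 2)
      = fun y => ‖cst + m‖ ^ 2 + ((2:ℝ) * (inner ℝ (cst + m) (v y - m) : ℝ) + ‖v y - m‖ ^ 2) := by
    funext y
    have h1 : cst + v y = (cst + m) + (v y - m) := by abel
    rw [h1, @norm_add_sq_real]; ring
  have hInt12 : Integrable
      (fun y => (2:ℝ) * (inner ℝ (cst + m) (v y - m) : ℝ) + ‖v y - m‖ ^ 2) ν :=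
    hInt1.add hInt2
  rw [key, integral_add (integrable_const _) hInt12,
    integral_add hInt1 hInt2, integral_const, probReal_univ]
  have hzero : ∫ y, (2:ℝ) * (inner ℝ (cst + m) (v y - m) : ℝ) ∂ν = 0 := by
    rw [integral_const_mul, integral_inner (hvm.integrable one_le_two)]
    have : ∫ y, (v y - m) ∂ν = 0 := by
      rw [integral_sub (hv.integrable one_le_two) (integrable_const m),
        integral_const, probReal_univ]
      simp [hm]
    rw [this, inner_zero_right, mul_zero]
  rw [hzero]; simp

/-- conditioning on an independent variable (lintegral form) -/
lemma condition_on {Ω' α : Type*} [MeasurableSpace Ω'] [MeasurableSpace α]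
    {μ : Measure Ω'} [IsFiniteMeasure μ] {X : Ω' → α} {Y : Ω' → β}
    (hX : Measurable X) (hY : Measurable Y) (hind : IndepFun X Y μ)
    {ν : Measure β} [SFinite ν] (hlaw : μ.map Y = ν) {F : α → β → ℝ≥0∞}
    (hF : Measurable (Function.uncurry F)) :
    ∫⁻ ω, F (X ω) (Y ω) ∂μ = ∫⁻ ω, ∫⁻ y, F (X ω) y ∂ν ∂μ := by
  have hmap := (indepFun_iff_map_prod_eq_prod_map_map hX.aemeasurable hY.aemeasurable).mp hind
  rw [hlaw] at hmap
  calc ∫⁻ ω, F (X ω) (Y ω) ∂μ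
      = ∫⁻ z, Function.uncurry F z ∂(μ.map fun ω => (X ω, Y ω)) :=
        (lintegral_map hF (hX.prodMk hY)).symm
    _ = ∫⁻ z, Function.uncurry F z ∂((μ.map X).prod ν) := by rw [hmap]
    _ = ∫⁻ x, ∫⁻ y, F x y ∂ν ∂(μ.map X) := lintegral_prod _ hF.aemeasurable
    _ = ∫⁻ ω, ∫⁻ y, F (X ω) y ∂ν ∂μ := lintegral_map (hF.lintegral_prod_right) hX

lemma young_sq {κ a b : ℝ} (hκ : 0 < κ) (ha : 0 ≤ a) (hb : 0 ≤ b) :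
    (a + b) ^ 2 ≤ (1 + κ) * a ^ 2 + (1 + 1/κ) * b ^ 2 := by
  have h1 : 1/κ * κ = 1 := one_div_mul_cancel hκ.ne'
  nlinarith [sq_nonneg (κ * a - b), mul_pos (one_div_pos.mpr hκ) hκ,
    mul_nonneg (mul_nonneg (one_div_pos.mpr hκ).le ha) hb]

lemma young_norm {κ : ℝ} (hκ : 0 < κ) (a b : E) :
    ‖a + b‖ ^ 2 ≤ (1 + κ) * ‖a‖ ^ 2 + (1 + 1/κ) * ‖b‖ ^ 2 := by
  calc ‖a + b‖ ^ 2 ≤ (‖a‖ + ‖b‖) ^ 2 := by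
        have := norm_add_le a b
        nlinarith [norm_nonneg (a + b), norm_nonneg a, norm_nonneg b]
    _ ≤ _ := young_sq hκ (norm_nonneg a) (norm_nonneg b)




lemma lintegral_four {A B Cc D : Type*} [MeasurableSpace A] [MeasurableSpace B]
    [MeasurableSpace Cc] [MeasurableSpace D]
    (νa : Measure A) (νb : Measure B) (νc : Measure Cc) (νd : Measure D)
    [SFinite νb] [SFinite νc] [SFinite νd]
    {F : A × B × Cc × D → ℝ≥0∞} (hF : Measurable F) :
    ∫⁻ s, F s ∂(νa.prod (νb.prod (νc.prod νd)))
      = ∫⁻ a, ∫⁻ b, ∫⁻ c, ∫⁻ e, F (a, b, c, e) ∂νd ∂νc ∂νb ∂νa := by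
  rw [lintegral_prod _ hF.aemeasurable]
  refine lintegral_congr fun a => ?_
  have h1 : Measurable fun y : B × Cc × D => F (a, y) := hF.comp measurable_prodMk_left
  rw [lintegral_prod (fun y : B × Cc × D => F (a, y)) h1.aemeasurable]
  refine lintegral_congr fun b => ?_
  have h2 : Measurable fun y : Cc × D => F (a, b, y) := h1.comp measurable_prodMk_left
  rw [lintegral_prod (fun y : Cc × D => F (a, b, y)) h2.aemeasurable]

variable {d N : ℕ} {Ωg ΩQ ΩC : Type} [MeasurableSpace Ωg] [MeasurableSpace ΩQ]
  [MeasurableSpace ΩC]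

/-- the deterministic trajectory map of iConEF-v2, as a function of the seed history -/
def traj (η : ℝ) (x0 : EuclideanSpace ℝ (Fin d))
    (G' : ℕ → Fin N → EuclideanSpace ℝ (Fin d) → Ωg → EuclideanSpace ℝ (Fin d))
    (Q : EuclideanSpace ℝ (Fin d) → ΩQ → EuclideanSpace ℝ (Fin d))
    (C : EuclideanSpace ℝ (Fin d) → ΩC → EuclideanSpace ℝ (Fin d)) :
    (t : ℕ) → ((Fin t × Fin N) → Ωg × ΩQ × ΩQ × ΩC) →
      EuclideanSpace ℝ (Fin d) × (Fin N → EuclideanSpace ℝ (Fin d))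
        × (Fin N → EuclideanSpace ℝ (Fin d))
  | 0, _ => (x0, fun _ => 0, fun _ => 0)
  | (t+1), h =>
      let prev := traj η x0 G' Q C t fun e => h (e.1.castSucc, e.2)
      let cur : Fin N → Ωg × ΩQ × ΩQ × ΩC := fun i => h (Fin.last t, i)
      let pp : Fin N → EuclideanSpace ℝ (Fin d) :=
        fun i => η • G' t i prev.1 (cur i).1 + prev.2.1 i + prev.2.2 i
      let Dp := fun i => Q (pp i) (cur i).2.1
      let ee := fun i => Q (pp i - Dp i) (cur i).2.2.1
      (prev.1 - (N:ℝ)⁻¹ • ∑ i, Dp i, ee,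
        fun i => C (pp i - Dp i - ee i) (cur i).2.2.2)

variable (η : ℝ) (x0 : EuclideanSpace ℝ (Fin d))
  (G' : ℕ → Fin N → EuclideanSpace ℝ (Fin d) → Ωg → EuclideanSpace ℝ (Fin d))
  (Q : EuclideanSpace ℝ (Fin d) → ΩQ → EuclideanSpace ℝ (Fin d))
  (C : EuclideanSpace ℝ (Fin d) → ΩC → EuclideanSpace ℝ (Fin d))

lemma traj_measurable
    (hGmeas : ∀ t i, Measurable (Function.uncurry (G' t i)))
    (hQmeas : Measurable (Function.uncurry Q))
    (hCmeas : Measurable (Function.uncurry C)) :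
    ∀ t : ℕ, Measurable (traj η x0 G' Q C t) := by
  intro t
  induction t with
  | zero => exact measurable_const
  | succ t ih =>
      have hprev : Measurable (fun h : (Fin (t+1) × Fin N) → Ωg × ΩQ × ΩQ × ΩC =>
          traj η x0 G' Q C t fun e => h (e.1.castSucc, e.2)) :=
        ih.comp (measurable_pi_lambda _ fun e => measurable_pi_apply _)
      have hX := measurable_fst.comp hprev
      have hE : ∀ i, Measurable (fun h : (Fin (t+1) × Fin N) → Ωg × ΩQ × ΩQ × ΩC =>
          (traj η x0 G' Q C t fun e => h (e.1.castSucc, e.2)).2.1 i) :=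
        fun i => (measurable_pi_apply i).comp (measurable_fst.comp (measurable_snd.comp hprev))
      have hQ' : ∀ i, Measurable (fun h : (Fin (t+1) × Fin N) → Ωg × ΩQ × ΩQ × ΩC =>
          (traj η x0 G' Q C t fun e => h (e.1.castSucc, e.2)).2.2 i) :=
        fun i => (measurable_pi_apply i).comp (measurable_snd.comp (measurable_snd.comp hprev))
      have hcur : ∀ i, Measurable (fun h : (Fin (t+1) × Fin N) → Ωg × ΩQ × ΩQ × ΩC =>
          h (Fin.last t, i)) := fun i => measurable_pi_apply _
      have hpp : ∀ i, Measurable (fun h : (Fin (t+1) × Fin N) → Ωg × ΩQ × ΩQ × ΩC =>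
          η • G' t i (traj η x0 G' Q C t fun e => h (e.1.castSucc, e.2)).1
              (h (Fin.last t, i)).1
            + (traj η x0 G' Q C t fun e => h (e.1.castSucc, e.2)).2.1 i
            + (traj η x0 G' Q C t fun e => h (e.1.castSucc, e.2)).2.2 i) := by
        intro i
        exact ((((hGmeas t i).comp (hX.prodMk ((hcur i).fst))).const_smul η).add
          (hE i)).add (hQ' i)
      have hDp : ∀ i, Measurable (fun h : (Fin (t+1) × Fin N) → Ωg × ΩQ × ΩQ × ΩC =>
          Q (η • G' t i (traj η x0 G' Q C t fun e => h (e.1.castSucc, e.2)).1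
              (h (Fin.last t, i)).1
            + (traj η x0 G' Q C t fun e => h (e.1.castSucc, e.2)).2.1 i
            + (traj η x0 G' Q C t fun e => h (e.1.castSucc, e.2)).2.2 i)
            (h (Fin.last t, i)).2.1) :=
        fun i => hQmeas.comp ((hpp i).prodMk ((hcur i).snd.fst))
      have hee : ∀ i, Measurable (fun h : (Fin (t+1) × Fin N) → Ωg × ΩQ × ΩQ × ΩC =>
          Q ((η • G' t i (traj η x0 G' Q C t fun e => h (e.1.castSucc, e.2)).1
              (h (Fin.last t, i)).1
            + (traj η x0 G' Q C t fun e => h (e.1.castSucc, e.2)).2.1 i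
            + (traj η x0 G' Q C t fun e => h (e.1.castSucc, e.2)).2.2 i)
            - Q (η • G' t i (traj η x0 G' Q C t fun e => h (e.1.castSucc, e.2)).1
              (h (Fin.last t, i)).1
            + (traj η x0 G' Q C t fun e => h (e.1.castSucc, e.2)).2.1 i
            + (traj η x0 G' Q C t fun e => h (e.1.castSucc, e.2)).2.2 i)
              (h (Fin.last t, i)).2.1)
            (h (Fin.last t, i)).2.2.1) :=
        fun i => hQmeas.comp ((((hpp i).sub (hDp i))).prodMk ((hcur i).snd.snd.fst))
      refine Measurable.prodMk ?_ (Measurable.prodMk ?_ ?_)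
      · exact hX.sub ((Finset.measurable_sum Finset.univ fun i _ => hDp i).const_smul (N : ℝ)⁻¹)
      · exact measurable_pi_lambda _ fun i => hee i
      · exact measurable_pi_lambda _ fun i =>
          hCmeas.comp (((((hpp i).sub (hDp i))).sub (hee i)).prodMk ((hcur i).snd.snd.snd))

/-- position at time `t` as a function of history -/
def trajX (t : ℕ) (h : (Fin t × Fin N) → Ωg × ΩQ × ΩQ × ΩC) : EuclideanSpace ℝ (Fin d) :=
  (traj η x0 G' Q C t h).1

/-- `ẽ t i + q t i` as a function of history -/
def trajEQ (t : ℕ) (i : Fin N) (h : (Fin t × Fin N) → Ωg × ΩQ × ΩQ × ΩC) :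
    EuclideanSpace ℝ (Fin d) :=
  (traj η x0 G' Q C t h).2.1 i + (traj η x0 G' Q C t h).2.2 i

/-- `p t i` as a function of history and the fresh gradient seed -/
def trajP (t : ℕ) (i : Fin N) (h : (Fin t × Fin N) → Ωg × ΩQ × ΩQ × ΩC) (u : Ωg) :
    EuclideanSpace ℝ (Fin d) :=
  trajEQ η x0 G' Q C t i h + η • G' t i (trajX η x0 G' Q C t h) u

/-- `p t i - Δ t i` -/
def trajA (t : ℕ) (i : Fin N) (h : (Fin t × Fin N) → Ωg × ΩQ × ΩQ × ΩC) (u : Ωg) (w1 : ΩQ) :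
    EuclideanSpace ℝ (Fin d) :=
  trajP η x0 G' Q C t i h u - Q (trajP η x0 G' Q C t i h u) w1

/-- `p t i - Δ t i - ẽ (t+1) i` -/
def trajB (t : ℕ) (i : Fin N) (h : (Fin t × Fin N) → Ωg × ΩQ × ΩQ × ΩC) (u : Ωg)
    (w1 w2 : ΩQ) : EuclideanSpace ℝ (Fin d) :=
  trajA η x0 G' Q C t i h u w1 - Q (trajA η x0 G' Q C t i h u w1) w2

/-- the residual `ζ t i` -/
def trajZ (t : ℕ) (i : Fin N) (h : (Fin t × Fin N) → Ωg × ΩQ × ΩQ × ΩC)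
    (s : Ωg × ΩQ × ΩQ × ΩC) : EuclideanSpace ℝ (Fin d) :=
  C (trajB η x0 G' Q C t i h s.1 s.2.1 s.2.2.1) s.2.2.2
    - trajB η x0 G' Q C t i h s.1 s.2.1 s.2.2.1

/-- `ẽ (t+1) i + q (t+1) i` -/
def trajR (t : ℕ) (i : Fin N) (h : (Fin t × Fin N) → Ωg × ΩQ × ΩQ × ΩC)
    (s : Ωg × ΩQ × ΩQ × ΩC) : EuclideanSpace ℝ (Fin d) :=
  Q (trajA η x0 G' Q C t i h s.1 s.2.1) s.2.2.1
    + C (trajB η x0 G' Q C t i h s.1 s.2.1 s.2.2.1) s.2.2.2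

lemma traj_zero_eq (h : (Fin 0 × Fin N) → Ωg × ΩQ × ΩQ × ΩC) :
    traj η x0 G' Q C 0 h
      = (x0, fun _ => (0 : EuclideanSpace ℝ (Fin d)), fun _ => 0) := rfl

lemma traj_succ_eq (t : ℕ) (h : (Fin (t+1) × Fin N) → Ωg × ΩQ × ΩQ × ΩC) :
    traj η x0 G' Q C (t+1) h =
      (let prev := traj η x0 G' Q C t fun e => h (e.1.castSucc, e.2)
       let cur : Fin N → Ωg × ΩQ × ΩQ × ΩC := fun i => h (Fin.last t, i)
       let pp : Fin N → EuclideanSpace ℝ (Fin d) :=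
         fun i => η • G' t i prev.1 (cur i).1 + prev.2.1 i + prev.2.2 i
       let Dp := fun i => Q (pp i) (cur i).2.1
       let ee := fun i => Q (pp i - Dp i) (cur i).2.2.1
       (prev.1 - (N:ℝ)⁻¹ • ∑ i, Dp i, ee,
         fun i => C (pp i - Dp i - ee i) (cur i).2.2.2)) := rfl

lemma trajX_eq (t : ℕ) (h : (Fin t × Fin N) → Ωg × ΩQ × ΩQ × ΩC) :
    trajX η x0 G' Q C t h = (traj η x0 G' Q C t h).1 := rfl

lemma trajEQ_eq (t : ℕ) (i : Fin N) (h : (Fin t × Fin N) → Ωg × ΩQ × ΩQ × ΩC) :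
    trajEQ η x0 G' Q C t i h
      = (traj η x0 G' Q C t h).2.1 i + (traj η x0 G' Q C t h).2.2 i := rfl

lemma trajP_eq (t : ℕ) (i : Fin N) (h : (Fin t × Fin N) → Ωg × ΩQ × ΩQ × ΩC) (u : Ωg) :
    trajP η x0 G' Q C t i h u
      = trajEQ η x0 G' Q C t i h + η • G' t i (trajX η x0 G' Q C t h) u := rfl

lemma trajA_eq (t : ℕ) (i : Fin N) (h : (Fin t × Fin N) → Ωg × ΩQ × ΩQ × ΩC)
    (u : Ωg) (w1 : ΩQ) :
    trajA η x0 G' Q C t i h u w1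
      = trajP η x0 G' Q C t i h u - Q (trajP η x0 G' Q C t i h u) w1 := rfl

lemma trajB_eq (t : ℕ) (i : Fin N) (h : (Fin t × Fin N) → Ωg × ΩQ × ΩQ × ΩC)
    (u : Ωg) (w1 w2 : ΩQ) :
    trajB η x0 G' Q C t i h u w1 w2
      = trajA η x0 G' Q C t i h u w1 - Q (trajA η x0 G' Q C t i h u w1) w2 := rfl

lemma trajZ_eq (t : ℕ) (i : Fin N) (h : (Fin t × Fin N) → Ωg × ΩQ × ΩQ × ΩC)
    (s : Ωg × ΩQ × ΩQ × ΩC) :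
    trajZ η x0 G' Q C t i h s
      = C (trajB η x0 G' Q C t i h s.1 s.2.1 s.2.2.1) s.2.2.2
          - trajB η x0 G' Q C t i h s.1 s.2.1 s.2.2.1 := rfl

lemma trajR_eq (t : ℕ) (i : Fin N) (h : (Fin t × Fin N) → Ωg × ΩQ × ΩQ × ΩC)
    (s : Ωg × ΩQ × ΩQ × ΩC) :
    trajR η x0 G' Q C t i h s
      = Q (trajA η x0 G' Q C t i h s.1 s.2.1) s.2.2.1
          + C (trajB η x0 G' Q C t i h s.1 s.2.1 s.2.2.1) s.2.2.2 := rfl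


attribute [irreducible] traj trajX trajEQ trajP trajA trajB trajZ trajR

section Meas
variable (hGmeas : ∀ t i, Measurable (Function.uncurry (G' t i)))
    (hQmeas : Measurable (Function.uncurry Q))
    (hCmeas : Measurable (Function.uncurry C))
include hGmeas hQmeas hCmeas

lemma trajX_measurable (t : ℕ) : Measurable (trajX η x0 G' Q C t) := by
  unfold trajX
  exact measurable_fst.comp (traj_measurable η x0 G' Q C hGmeas hQmeas hCmeas t)

lemma trajEQ_measurable (t : ℕ) (i : Fin N) : Measurable (trajEQ η x0 G' Q C t i) := by
  unfold trajEQ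
  have h := traj_measurable η x0 G' Q C hGmeas hQmeas hCmeas t
  exact ((measurable_pi_apply i).comp (measurable_fst.comp (measurable_snd.comp h))).add
    ((measurable_pi_apply i).comp (measurable_snd.comp (measurable_snd.comp h)))

lemma trajP_measurableW (t : ℕ) (i : Fin N) :
    Measurable (fun z : ((Fin t × Fin N) → Ωg × ΩQ × ΩQ × ΩC) × (Ωg × ΩQ × ΩQ × ΩC) =>
      trajP η x0 G' Q C t i z.1 z.2.1) := by
  unfold trajP
  exact ((trajEQ_measurable η x0 G' Q C hGmeas hQmeas hCmeas t i).comp measurable_fst).add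
    (((hGmeas t i).comp
      (((trajX_measurable η x0 G' Q C hGmeas hQmeas hCmeas t).comp measurable_fst).prodMk
        measurable_snd.fst)).const_smul η)


lemma trajP_measurableHU (t : ℕ) (i : Fin N) :
    Measurable (fun z : ((Fin t × Fin N) → Ωg × ΩQ × ΩQ × ΩC) × Ωg =>
      trajP η x0 G' Q C t i z.1 z.2) := by
  unfold trajP
  exact ((trajEQ_measurable η x0 G' Q C hGmeas hQmeas hCmeas t i).comp measurable_fst).add
    (((hGmeas t i).comp
      (((trajX_measurable η x0 G' Q C hGmeas hQmeas hCmeas t).comp measurable_fst).prodMk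
        measurable_snd)).const_smul η)

lemma trajA_measurableW (t : ℕ) (i : Fin N) :
    Measurable (fun z : ((Fin t × Fin N) → Ωg × ΩQ × ΩQ × ΩC) × (Ωg × ΩQ × ΩQ × ΩC) =>
      trajA η x0 G' Q C t i z.1 z.2.1 z.2.2.1) := by
  unfold trajA
  have hP := trajP_measurableW η x0 G' Q C hGmeas hQmeas hCmeas t i
  exact hP.sub (hQmeas.comp (hP.prodMk measurable_snd.snd.fst))

lemma trajB_measurableW (t : ℕ) (i : Fin N) :
    Measurable (fun z : ((Fin t × Fin N) → Ωg × ΩQ × ΩQ × ΩC) × (Ωg × ΩQ × ΩQ × ΩC) =>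
      trajB η x0 G' Q C t i z.1 z.2.1 z.2.2.1 z.2.2.2.1) := by
  unfold trajB
  have hA := trajA_measurableW η x0 G' Q C hGmeas hQmeas hCmeas t i
  exact hA.sub (hQmeas.comp (hA.prodMk measurable_snd.snd.snd.fst))

lemma trajZ_measurableW (t : ℕ) (i : Fin N) :
    Measurable (fun z : ((Fin t × Fin N) → Ωg × ΩQ × ΩQ × ΩC) × (Ωg × ΩQ × ΩQ × ΩC) =>
      trajZ η x0 G' Q C t i z.1 z.2) := by
  unfold trajZ
  have hB := trajB_measurableW η x0 G' Q C hGmeas hQmeas hCmeas t i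
  exact (hCmeas.comp (hB.prodMk measurable_snd.snd.snd.snd)).sub hB

lemma trajR_measurableW (t : ℕ) (i : Fin N) :
    Measurable (fun z : ((Fin t × Fin N) → Ωg × ΩQ × ΩQ × ΩC) × (Ωg × ΩQ × ΩQ × ΩC) =>
      trajR η x0 G' Q C t i z.1 z.2) := by
  unfold trajR
  have hA := trajA_measurableW η x0 G' Q C hGmeas hQmeas hCmeas t i
  have hB := trajB_measurableW η x0 G' Q C hGmeas hQmeas hCmeas t i
  exact (hQmeas.comp (hA.prodMk measurable_snd.snd.snd.fst)).add
    (hCmeas.comp (hB.prodMk measurable_snd.snd.snd.snd))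

end Meas

section Inner

variable {d N : ℕ} {Ωg ΩQ ΩC : Type} [MeasurableSpace Ωg] [MeasurableSpace ΩQ]
  [MeasurableSpace ΩC]
  {νg : Measure Ωg} {νQ : Measure ΩQ} {νC : Measure ΩC}
  [IsProbabilityMeasure νg] [IsProbabilityMeasure νQ] [IsProbabilityMeasure νC]
  (η : ℝ) (x0 : EuclideanSpace ℝ (Fin d))
  (G' : ℕ → Fin N → EuclideanSpace ℝ (Fin d) → Ωg → EuclideanSpace ℝ (Fin d))
  (Q : EuclideanSpace ℝ (Fin d) → ΩQ → EuclideanSpace ℝ (Fin d))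
  (C : EuclideanSpace ℝ (Fin d) → ΩC → EuclideanSpace ℝ (Fin d))
  (f : EuclideanSpace ℝ (Fin d) → ℝ) (σ θ δ : ℝ)
  (hGmeas : ∀ t i, Measurable (Function.uncurry (G' t i)))
  (hQmeas : Measurable (Function.uncurry Q))
  (hCmeas : Measurable (Function.uncurry C))

section Sec
include hGmeas hQmeas

lemma trajP_sec (t : ℕ) (i : Fin N) (h : (Fin t × Fin N) → Ωg × ΩQ × ΩQ × ΩC) :
    Measurable (fun u : Ωg => trajP η x0 G' Q C t i h u) := by
  unfold trajP
  exact measurable_const.add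
    (((hGmeas t i).comp (measurable_const.prodMk measurable_id)).const_smul η)

lemma trajA_sec (t : ℕ) (i : Fin N) (h : (Fin t × Fin N) → Ωg × ΩQ × ΩQ × ΩC) :
    Measurable (fun z : Ωg × ΩQ => trajA η x0 G' Q C t i h z.1 z.2) := by
  unfold trajA
  have hP : Measurable (fun z : Ωg × ΩQ => trajP η x0 G' Q C t i h z.1) :=
    (trajP_sec η x0 G' Q C hGmeas hQmeas t i h).comp measurable_fst
  exact hP.sub (hQmeas.comp (hP.prodMk measurable_snd))

lemma trajB_sec (t : ℕ) (i : Fin N) (h : (Fin t × Fin N) → Ωg × ΩQ × ΩQ × ΩC) :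
    Measurable (fun z : Ωg × ΩQ × ΩQ => trajB η x0 G' Q C t i h z.1 z.2.1 z.2.2) := by
  unfold trajB
  have hA : Measurable (fun z : Ωg × ΩQ × ΩQ => trajA η x0 G' Q C t i h z.1 z.2.1) :=
    (trajA_sec η x0 G' Q C hGmeas hQmeas t i h).comp
      (measurable_fst.prodMk measurable_snd.fst)
  exact hA.sub (hQmeas.comp (hA.prodMk measurable_snd.snd))

end Sec

section Sec2
include hGmeas hQmeas hCmeas

lemma trajZ_sec (t : ℕ) (i : Fin N) (h : (Fin t × Fin N) → Ωg × ΩQ × ΩQ × ΩC) :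
    Measurable (fun s : Ωg × ΩQ × ΩQ × ΩC => trajZ η x0 G' Q C t i h s) :=
  (trajZ_measurableW η x0 G' Q C hGmeas hQmeas hCmeas t i).comp measurable_prodMk_left

lemma trajR_sec (t : ℕ) (i : Fin N) (h : (Fin t × Fin N) → Ωg × ΩQ × ΩQ × ΩC) :
    Measurable (fun s : Ωg × ΩQ × ΩQ × ΩC => trajR η x0 G' Q C t i h s) :=
  (trajR_measurableW η x0 G' Q C hGmeas hQmeas hCmeas t i).comp measurable_prodMk_left

end Sec2

section PL

/-- inner expansion for the second moment of `p` -/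
lemma innerP (hGmeas : ∀ t i, Measurable (Function.uncurry (G' t i)))
    (hGmean : ∀ t i a, ∫ u, G' t i a u ∂νg = gradient f a)
    (hGvar : ∀ t i a,
      ∫⁻ u, (‖G' t i a u - gradient f a‖₊ : ℝ≥0∞) ^ 2 ∂νg ≤ ENNReal.ofReal (σ ^ 2))
    (t : ℕ) (i : Fin N) (h : (Fin t × Fin N) → Ωg × ΩQ × ΩQ × ΩC) :
    ∫⁻ u, (‖trajP η x0 G' Q C t i h u‖₊ : ℝ≥0∞) ^ 2 ∂νg
      ≤ ENNReal.ofReal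
          (‖trajEQ η x0 G' Q C t i h + η • gradient f (trajX η x0 G' Q C t h)‖ ^ 2
            + η ^ 2 * σ ^ 2) := by
  set X := trajX η x0 G' Q C t h with hX
  set EQ := trajEQ η x0 G' Q C t i h with hEQ
  have hmg : Measurable (fun u => G' t i X u) :=
    (hGmeas t i).comp (measurable_const.prodMk measurable_id)
  have hvm : MemLp (fun u => G' t i X u - gradient f X) 2 νg :=
    memLp_of_lintegral ((hmg.sub measurable_const).aestronglyMeasurable)
      (ne_top_of_le_ne_top ENNReal.ofReal_ne_top (hGvar t i X))
  have hv0 : MemLp (fun u => G' t i X u) 2 νg := by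
    have h2 := hvm.add (memLp_const (gradient f X))
    have hfe : ((fun u => G' t i X u - gradient f X) + fun _ => gradient f X)
        = fun u => G' t i X u := by funext u; simp
    exact hfe ▸ h2
  have hv : MemLp (fun u => η • G' t i X u) 2 νg := hv0.const_smul η
  have hmean : ∫ u, η • G' t i X u ∂νg = η • gradient f X := by
    rw [integral_smul, hGmean]
  have hdec := variance_decomp hv EQ
  have hPeq : (fun u => trajP η x0 G' Q C t i h u) = fun u => EQ + η • G' t i X u := by
    funext u; rw [hEQ, hX]; unfold trajP; rfl
  have h0 : ∫⁻ u, (‖trajP η x0 G' Q C t i h u‖₊ : ℝ≥0∞) ^ 2 ∂νg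
      = ∫⁻ u, (‖EQ + η • G' t i X u‖₊ : ℝ≥0∞) ^ 2 ∂νg :=
    lintegral_congr fun u => by rw [congrFun hPeq u]
  rw [h0, hdec, hmean]
  have hsub : ∀ u, η • G' t i X u - η • gradient f X = η • (G' t i X u - gradient f X) :=
    fun u => (smul_sub η _ _).symm
  have hterm2 : ∫⁻ u, (‖η • G' t i X u - η • gradient f X‖₊ : ℝ≥0∞) ^ 2 ∂νg
      ≤ ENNReal.ofReal (η ^ 2 * σ ^ 2) := by
    calc ∫⁻ u, (‖η • G' t i X u - η • gradient f X‖₊ : ℝ≥0∞) ^ 2 ∂νg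
        = ∫⁻ u, ENNReal.ofReal (η ^ 2) * (‖G' t i X u - gradient f X‖₊ : ℝ≥0∞) ^ 2 ∂νg := by
          refine lintegral_congr fun u => ?_; rw [hsub u, nnnorm_smul_sq]
      _ = ENNReal.ofReal (η ^ 2)
            * ∫⁻ u, (‖G' t i X u - gradient f X‖₊ : ℝ≥0∞) ^ 2 ∂νg := by
          exact lintegral_const_mul _ ((hmg.sub measurable_const).nnnorm.coe_nnreal_ennreal.pow_const 2)
      _ ≤ ENNReal.ofReal (η ^ 2) * ENNReal.ofReal (σ ^ 2) :=
          mul_le_mul_right (hGvar t i X) _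
      _ = ENNReal.ofReal (η ^ 2 * σ ^ 2) := (ENNReal.ofReal_mul (sq_nonneg η)).symm
  calc ENNReal.ofReal (‖EQ + η • gradient f X‖ ^ 2)
        + ∫⁻ u, (‖η • G' t i X u - η • gradient f X‖₊ : ℝ≥0∞) ^ 2 ∂νg
      ≤ ENNReal.ofReal (‖EQ + η • gradient f X‖ ^ 2) + ENNReal.ofReal (η ^ 2 * σ ^ 2) :=
        add_le_add_right hterm2 _
    _ = ENNReal.ofReal (‖EQ + η • gradient f X‖ ^ 2 + η ^ 2 * σ ^ 2) :=
        (ENNReal.ofReal_add (sq_nonneg _) (by positivity)).symm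

/-- marginal collapse for functions of the gradient seed only -/
lemma P0 (hGmeas : ∀ t i, Measurable (Function.uncurry (G' t i)))
    (hQmeas : Measurable (Function.uncurry Q))
    (t : ℕ) (i : Fin N) (h : (Fin t × Fin N) → Ωg × ΩQ × ΩQ × ΩC) :
    ∫⁻ s, (‖trajP η x0 G' Q C t i h s.1‖₊ : ℝ≥0∞) ^ 2 ∂(νg.prod (νQ.prod (νQ.prod νC)))
      = ∫⁻ u, (‖trajP η x0 G' Q C t i h u‖₊ : ℝ≥0∞) ^ 2 ∂νg := by
  have hm : Measurable (fun s : Ωg × ΩQ × ΩQ × ΩC =>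
      (‖trajP η x0 G' Q C t i h s.1‖₊ : ℝ≥0∞) ^ 2) :=
    (((trajP_sec η x0 G' Q C hGmeas hQmeas t i h).comp measurable_fst).nnnorm.coe_nnreal_ennreal).pow_const 2
  rw [lintegral_prod _ hm.aemeasurable]
  simp

end PL

lemma Z3 (hθ : 0 ≤ θ)
    (hCvar : ∀ a, ∫⁻ w, (‖C a w - a‖₊ : ℝ≥0∞) ^ 2 ∂νC ≤ ENNReal.ofReal (θ * ‖a‖ ^ 2))
    (b : EuclideanSpace ℝ (Fin d)) :
    ∫⁻ w, (‖C b w - b‖₊ : ℝ≥0∞) ^ 2 ∂νC ≤ ENNReal.ofReal θ * (‖b‖₊ : ℝ≥0∞) ^ 2 := by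
  refine le_trans (hCvar b) ?_
  rw [ofReal_mul_norm_sq hθ]

lemma Q3 (hδ : 0 ≤ δ)
    (hQvar : ∀ a, ∫⁻ w, (‖Q a w - a‖₊ : ℝ≥0∞) ^ 2 ∂νQ ≤ ENNReal.ofReal (δ * ‖a‖ ^ 2))
    (a : EuclideanSpace ℝ (Fin d)) :
    ∫⁻ w, (‖a - Q a w‖₊ : ℝ≥0∞) ^ 2 ∂νQ ≤ ENNReal.ofReal δ * (‖a‖₊ : ℝ≥0∞) ^ 2 := by
  have : ∀ w : ΩQ, (‖a - Q a w‖₊ : ℝ≥0∞) = (‖Q a w - a‖₊ : ℝ≥0∞) := by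
    intro w; rw [← enorm_eq_nnnorm, ← ofReal_norm, ← enorm_eq_nnnorm, ← ofReal_norm, norm_sub_rev]
  simp only [this]
  refine le_trans (hQvar a) ?_
  rw [ofReal_mul_norm_sq hδ]


section ZR

variable (hGmeas : ∀ t i, Measurable (Function.uncurry (G' t i)))
  (hQmeas : Measurable (Function.uncurry Q))
  (hCmeas : Measurable (Function.uncurry C))
  (hθ : 0 ≤ θ) (hδ : 0 ≤ δ)
  (hQvar : ∀ a, ∫⁻ w, (‖Q a w - a‖₊ : ℝ≥0∞) ^ 2 ∂νQ ≤ ENNReal.ofReal (δ * ‖a‖ ^ 2))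
  (hCmean : ∀ a, ∫ w, C a w ∂νC = a)
  (hCvar : ∀ a, ∫⁻ w, (‖C a w - a‖₊ : ℝ≥0∞) ^ 2 ∂νC ≤ ENNReal.ofReal (θ * ‖a‖ ^ 2))

include hCmeas hθ hCvar in
lemma hCmemLp (b : EuclideanSpace ℝ (Fin d)) : MemLp (fun w => C b w) 2 νC := by
  have h1 : MemLp (fun w => C b w - b) 2 νC :=
    memLp_of_lintegral
      (((hCmeas.comp (measurable_const.prodMk measurable_id)).sub
        measurable_const).aestronglyMeasurable)
      (ne_top_of_le_ne_top ENNReal.ofReal_ne_top (hCvar b))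
  have h2 := h1.add (memLp_const b)
  have hfe : ((fun w => C b w - b) + fun _ => b) = fun w => C b w := by funext w; simp
  exact hfe ▸ h2

include hGmeas hQmeas hCmeas hθ hδ hQvar hCvar in
lemma Z2 (t : ℕ) (i : Fin N) (h : (Fin t × Fin N) → Ωg × ΩQ × ΩQ × ΩC) (u : Ωg) (w1 : ΩQ) :
    ∫⁻ v, (‖trajZ η x0 G' Q C t i h (u, w1, v)‖₊ : ℝ≥0∞) ^ 2 ∂(νQ.prod νC)
      ≤ ENNReal.ofReal θ * (ENNReal.ofReal δ
          * (‖trajA η x0 G' Q C t i h u w1‖₊ : ℝ≥0∞) ^ 2) := by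
  have hmz : Measurable fun v : ΩQ × ΩC => trajZ η x0 G' Q C t i h (u, w1, v) :=
    (trajZ_sec η x0 G' Q C hGmeas hQmeas hCmeas t i h).comp
      (measurable_const.prodMk (measurable_const.prodMk measurable_id))
  rw [lintegral_prod (fun v : ΩQ × ΩC =>
    (‖trajZ η x0 G' Q C t i h (u, w1, v)‖₊ : ℝ≥0∞) ^ 2)
    (hmz.nnnorm.coe_nnreal_ennreal.pow_const 2).aemeasurable]
  have hze : ∀ w2 w3, trajZ η x0 G' Q C t i h (u, w1, w2, w3)
      = C (trajB η x0 G' Q C t i h u w1 w2) w3 - trajB η x0 G' Q C t i h u w1 w2 := by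
    intro w2 w3; unfold trajZ; rfl
  have hBm : Measurable fun w2 : ΩQ => trajB η x0 G' Q C t i h u w1 w2 :=
    (trajB_sec η x0 G' Q C hGmeas hQmeas t i h).comp
      (measurable_const.prodMk (measurable_const.prodMk measurable_id))
  calc ∫⁻ w2, ∫⁻ w3, (‖trajZ η x0 G' Q C t i h (u, w1, w2, w3)‖₊ : ℝ≥0∞) ^ 2 ∂νC ∂νQ
      ≤ ∫⁻ w2, ENNReal.ofReal θ * (‖trajB η x0 G' Q C t i h u w1 w2‖₊ : ℝ≥0∞) ^ 2 ∂νQ := by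
        refine lintegral_mono fun w2 => ?_
        have : ∫⁻ w3, (‖trajZ η x0 G' Q C t i h (u, w1, w2, w3)‖₊ : ℝ≥0∞) ^ 2 ∂νC
            = ∫⁻ w3, (‖C (trajB η x0 G' Q C t i h u w1 w2) w3
                - trajB η x0 G' Q C t i h u w1 w2‖₊ : ℝ≥0∞) ^ 2 ∂νC :=
          lintegral_congr fun w3 => by rw [hze]
        rw [this]
        exact Z3 C θ hθ hCvar _
    _ = ENNReal.ofReal θ
          * ∫⁻ w2, (‖trajB η x0 G' Q C t i h u w1 w2‖₊ : ℝ≥0∞) ^ 2 ∂νQ :=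
        lintegral_const_mul _ (hBm.nnnorm.coe_nnreal_ennreal.pow_const 2)
    _ ≤ ENNReal.ofReal θ * (ENNReal.ofReal δ
          * (‖trajA η x0 G' Q C t i h u w1‖₊ : ℝ≥0∞) ^ 2) := by
        refine mul_le_mul_right ?_ _
        have : ∫⁻ w2, (‖trajB η x0 G' Q C t i h u w1 w2‖₊ : ℝ≥0∞) ^ 2 ∂νQ
            = ∫⁻ w2, (‖trajA η x0 G' Q C t i h u w1
                - Q (trajA η x0 G' Q C t i h u w1) w2‖₊ : ℝ≥0∞) ^ 2 ∂νQ :=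
          lintegral_congr fun w2 => by unfold trajB; rfl
        rw [this]
        exact Q3 Q δ hδ hQvar _

include hGmeas hQmeas hCmeas hθ hδ hQvar hCvar in
lemma Z1 (t : ℕ) (i : Fin N) (h : (Fin t × Fin N) → Ωg × ΩQ × ΩQ × ΩC) (u : Ωg) :
    ∫⁻ v, (‖trajZ η x0 G' Q C t i h (u, v)‖₊ : ℝ≥0∞) ^ 2 ∂(νQ.prod (νQ.prod νC))
      ≤ ENNReal.ofReal θ * ENNReal.ofReal δ * (ENNReal.ofReal δ
          * (‖trajP η x0 G' Q C t i h u‖₊ : ℝ≥0∞) ^ 2) := by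
  have hmz : Measurable fun v : ΩQ × ΩQ × ΩC => trajZ η x0 G' Q C t i h (u, v) :=
    (trajZ_sec η x0 G' Q C hGmeas hQmeas hCmeas t i h).comp
      (measurable_const.prodMk measurable_id)
  rw [lintegral_prod (fun v : ΩQ × ΩQ × ΩC =>
    (‖trajZ η x0 G' Q C t i h (u, v)‖₊ : ℝ≥0∞) ^ 2)
    (hmz.nnnorm.coe_nnreal_ennreal.pow_const 2).aemeasurable]
  have hAm : Measurable fun w1 : ΩQ => trajA η x0 G' Q C t i h u w1 :=
    (trajA_sec η x0 G' Q C hGmeas hQmeas t i h).comp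
      (measurable_const.prodMk measurable_id)
  calc ∫⁻ w1, ∫⁻ v, (‖trajZ η x0 G' Q C t i h (u, w1, v)‖₊ : ℝ≥0∞) ^ 2 ∂(νQ.prod νC) ∂νQ
      ≤ ∫⁻ w1, ENNReal.ofReal θ * ENNReal.ofReal δ
          * (‖trajA η x0 G' Q C t i h u w1‖₊ : ℝ≥0∞) ^ 2 ∂νQ := by
        refine lintegral_mono fun w1 => ?_
        rw [mul_assoc]
        exact Z2 η x0 G' Q C θ δ hGmeas hQmeas hCmeas hθ hδ hQvar hCvar t i h u w1
    _ = ENNReal.ofReal θ * ENNReal.ofReal δ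
          * ∫⁻ w1, (‖trajA η x0 G' Q C t i h u w1‖₊ : ℝ≥0∞) ^ 2 ∂νQ :=
        lintegral_const_mul _ (hAm.nnnorm.coe_nnreal_ennreal.pow_const 2)
    _ ≤ _ := by
        refine mul_le_mul_right ?_ _
        have : ∫⁻ w1, (‖trajA η x0 G' Q C t i h u w1‖₊ : ℝ≥0∞) ^ 2 ∂νQ
            = ∫⁻ w1, (‖trajP η x0 G' Q C t i h u
                - Q (trajP η x0 G' Q C t i h u) w1‖₊ : ℝ≥0∞) ^ 2 ∂νQ :=
          lintegral_congr fun w1 => by unfold trajA; rfl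
        rw [this]
        exact Q3 Q δ hδ hQvar _

include hGmeas hQmeas hCmeas hθ hδ hQvar hCvar in
lemma Z0 (t : ℕ) (i : Fin N) (h : (Fin t × Fin N) → Ωg × ΩQ × ΩQ × ΩC) :
    ∫⁻ s, (‖trajZ η x0 G' Q C t i h s‖₊ : ℝ≥0∞) ^ 2 ∂(νg.prod (νQ.prod (νQ.prod νC)))
      ≤ ENNReal.ofReal (θ * δ * δ)
          * ∫⁻ u, (‖trajP η x0 G' Q C t i h u‖₊ : ℝ≥0∞) ^ 2 ∂νg := by
  have hmz := trajZ_sec η x0 G' Q C hGmeas hQmeas hCmeas t i h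
  rw [lintegral_prod (fun s : Ωg × ΩQ × ΩQ × ΩC =>
    (‖trajZ η x0 G' Q C t i h s‖₊ : ℝ≥0∞) ^ 2) (hmz.nnnorm.coe_nnreal_ennreal.pow_const 2).aemeasurable]
  have hPm := trajP_sec η x0 G' Q C hGmeas hQmeas t i h
  calc ∫⁻ u, ∫⁻ v, (‖trajZ η x0 G' Q C t i h (u, v)‖₊ : ℝ≥0∞) ^ 2 ∂(νQ.prod (νQ.prod νC)) ∂νg
      ≤ ∫⁻ u, ENNReal.ofReal θ * ENNReal.ofReal δ * ENNReal.ofReal δ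
          * (‖trajP η x0 G' Q C t i h u‖₊ : ℝ≥0∞) ^ 2 ∂νg := by
        refine lintegral_mono fun u => ?_
        rw [mul_assoc (ENNReal.ofReal θ * ENNReal.ofReal δ)]
        exact Z1 η x0 G' Q C θ δ hGmeas hQmeas hCmeas hθ hδ hQvar hCvar t i h u
    _ = ENNReal.ofReal θ * ENNReal.ofReal δ * ENNReal.ofReal δ
          * ∫⁻ u, (‖trajP η x0 G' Q C t i h u‖₊ : ℝ≥0∞) ^ 2 ∂νg :=
        lintegral_const_mul _ (hPm.nnnorm.coe_nnreal_ennreal.pow_const 2)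
    _ = _ := by rw [ENNReal.ofReal_mul (mul_nonneg hθ hδ), ENNReal.ofReal_mul hθ]

include hGmeas hQmeas hCmeas hθ hδ hQvar hCmean hCvar in
lemma R2 (t : ℕ) (i : Fin N) (h : (Fin t × Fin N) → Ωg × ΩQ × ΩQ × ΩC) (u : Ωg) (w1 : ΩQ) :
    ∫⁻ v, (‖trajR η x0 G' Q C t i h (u, w1, v)‖₊ : ℝ≥0∞) ^ 2 ∂(νQ.prod νC)
      ≤ (1 + ENNReal.ofReal θ * ENNReal.ofReal δ)
          * (‖trajA η x0 G' Q C t i h u w1‖₊ : ℝ≥0∞) ^ 2 := by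
  have hmr : Measurable fun v : ΩQ × ΩC => trajR η x0 G' Q C t i h (u, w1, v) :=
    (trajR_sec η x0 G' Q C hGmeas hQmeas hCmeas t i h).comp
      (measurable_const.prodMk (measurable_const.prodMk measurable_id))
  rw [lintegral_prod (fun v : ΩQ × ΩC =>
    (‖trajR η x0 G' Q C t i h (u, w1, v)‖₊ : ℝ≥0∞) ^ 2)
    (hmr.nnnorm.coe_nnreal_ennreal.pow_const 2).aemeasurable]
  set A := trajA η x0 G' Q C t i h u w1 with hA
  have hre : ∀ w2 w3, trajR η x0 G' Q C t i h (u, w1, w2, w3)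
      = Q A w2 + C (trajB η x0 G' Q C t i h u w1 w2) w3 := by
    intro w2 w3; rw [hA]; unfold trajR; rfl
  have hBe : ∀ w2, trajB η x0 G' Q C t i h u w1 w2 = A - Q A w2 := by
    intro w2; rw [hA]; unfold trajB; rfl
  have hBm : Measurable fun w2 : ΩQ => trajB η x0 G' Q C t i h u w1 w2 :=
    (trajB_sec η x0 G' Q C hGmeas hQmeas t i h).comp
      (measurable_const.prodMk (measurable_const.prodMk measurable_id))
  have hinner : ∀ w2 : ΩQ,
      ∫⁻ w3, (‖trajR η x0 G' Q C t i h (u, w1, w2, w3)‖₊ : ℝ≥0∞) ^ 2 ∂νC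
        ≤ (‖A‖₊ : ℝ≥0∞) ^ 2
          + ENNReal.ofReal θ * (‖trajB η x0 G' Q C t i h u w1 w2‖₊ : ℝ≥0∞) ^ 2 := by
    intro w2
    set B := trajB η x0 G' Q C t i h u w1 w2 with hB
    have h1 : ∫⁻ w3, (‖trajR η x0 G' Q C t i h (u, w1, w2, w3)‖₊ : ℝ≥0∞) ^ 2 ∂νC
        = ∫⁻ w3, (‖Q A w2 + C B w3‖₊ : ℝ≥0∞) ^ 2 ∂νC :=
      lintegral_congr fun w3 => by rw [hre w2 w3, hB]
    have hdec := variance_decomp (hCmemLp C θ hCmeas hθ hCvar B) (Q A w2)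
    rw [h1, hdec, hCmean B]
    have h2 : Q A w2 + B = A := by rw [hB, hBe w2]; abel
    rw [h2, ofReal_norm_sq]
    exact add_le_add_right (Z3 C θ hθ hCvar B) _
  calc ∫⁻ w2, ∫⁻ w3, (‖trajR η x0 G' Q C t i h (u, w1, w2, w3)‖₊ : ℝ≥0∞) ^ 2 ∂νC ∂νQ
      ≤ ∫⁻ w2, ((‖A‖₊ : ℝ≥0∞) ^ 2
          + ENNReal.ofReal θ * (‖trajB η x0 G' Q C t i h u w1 w2‖₊ : ℝ≥0∞) ^ 2) ∂νQ :=
        lintegral_mono hinner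
    _ = (‖A‖₊ : ℝ≥0∞) ^ 2 + ENNReal.ofReal θ
          * ∫⁻ w2, (‖trajB η x0 G' Q C t i h u w1 w2‖₊ : ℝ≥0∞) ^ 2 ∂νQ := by
        rw [lintegral_add_left measurable_const, lintegral_const, measure_univ, mul_one,
          lintegral_const_mul _ (hBm.nnnorm.coe_nnreal_ennreal.pow_const 2)]
    _ ≤ (‖A‖₊ : ℝ≥0∞) ^ 2 + ENNReal.ofReal θ
          * (ENNReal.ofReal δ * (‖A‖₊ : ℝ≥0∞) ^ 2) := by
        refine add_le_add_right (mul_le_mul_right ?_ _) _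
        have : ∫⁻ w2, (‖trajB η x0 G' Q C t i h u w1 w2‖₊ : ℝ≥0∞) ^ 2 ∂νQ
            = ∫⁻ w2, (‖A - Q A w2‖₊ : ℝ≥0∞) ^ 2 ∂νQ :=
          lintegral_congr fun w2 => by rw [hBe w2]
        rw [this]
        exact Q3 Q δ hδ hQvar A
    _ = (1 + ENNReal.ofReal θ * ENNReal.ofReal δ) * (‖A‖₊ : ℝ≥0∞) ^ 2 := by ring

include hGmeas hQmeas hCmeas hθ hδ hQvar hCmean hCvar in
lemma R0 (t : ℕ) (i : Fin N) (h : (Fin t × Fin N) → Ωg × ΩQ × ΩQ × ΩC) :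
    ∫⁻ s, (‖trajR η x0 G' Q C t i h s‖₊ : ℝ≥0∞) ^ 2 ∂(νg.prod (νQ.prod (νQ.prod νC)))
      ≤ ENNReal.ofReal ((1 + θ * δ) * δ)
          * ∫⁻ u, (‖trajP η x0 G' Q C t i h u‖₊ : ℝ≥0∞) ^ 2 ∂νg := by
  have hmr := trajR_sec η x0 G' Q C hGmeas hQmeas hCmeas t i h
  rw [lintegral_prod (fun s : Ωg × ΩQ × ΩQ × ΩC =>
    (‖trajR η x0 G' Q C t i h s‖₊ : ℝ≥0∞) ^ 2) (hmr.nnnorm.coe_nnreal_ennreal.pow_const 2).aemeasurable]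
  have hPm := trajP_sec η x0 G' Q C hGmeas hQmeas t i h
  have hstep1 : ∀ u : Ωg,
      ∫⁻ v, (‖trajR η x0 G' Q C t i h (u, v)‖₊ : ℝ≥0∞) ^ 2 ∂(νQ.prod (νQ.prod νC))
        ≤ (1 + ENNReal.ofReal θ * ENNReal.ofReal δ)
            * (ENNReal.ofReal δ * (‖trajP η x0 G' Q C t i h u‖₊ : ℝ≥0∞) ^ 2) := by
    intro u
    have hmru : Measurable fun v : ΩQ × ΩQ × ΩC => trajR η x0 G' Q C t i h (u, v) :=
      hmr.comp (measurable_const.prodMk measurable_id)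
    rw [lintegral_prod (fun v : ΩQ × ΩQ × ΩC =>
      (‖trajR η x0 G' Q C t i h (u, v)‖₊ : ℝ≥0∞) ^ 2)
      (hmru.nnnorm.coe_nnreal_ennreal.pow_const 2).aemeasurable]
    have hAm : Measurable fun w1 : ΩQ => trajA η x0 G' Q C t i h u w1 :=
      (trajA_sec η x0 G' Q C hGmeas hQmeas t i h).comp
        (measurable_const.prodMk measurable_id)
    calc ∫⁻ w1, ∫⁻ v, (‖trajR η x0 G' Q C t i h (u, w1, v)‖₊ : ℝ≥0∞) ^ 2 ∂(νQ.prod νC) ∂νQ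
        ≤ ∫⁻ w1, (1 + ENNReal.ofReal θ * ENNReal.ofReal δ)
            * (‖trajA η x0 G' Q C t i h u w1‖₊ : ℝ≥0∞) ^ 2 ∂νQ :=
          lintegral_mono fun w1 =>
            R2 η x0 G' Q C θ δ hGmeas hQmeas hCmeas hθ hδ hQvar hCmean hCvar t i h u w1
      _ = (1 + ENNReal.ofReal θ * ENNReal.ofReal δ)
            * ∫⁻ w1, (‖trajA η x0 G' Q C t i h u w1‖₊ : ℝ≥0∞) ^ 2 ∂νQ :=
          lintegral_const_mul _ (hAm.nnnorm.coe_nnreal_ennreal.pow_const 2)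
      _ ≤ _ := by
          refine mul_le_mul_right ?_ _
          have : ∫⁻ w1, (‖trajA η x0 G' Q C t i h u w1‖₊ : ℝ≥0∞) ^ 2 ∂νQ
              = ∫⁻ w1, (‖trajP η x0 G' Q C t i h u
                  - Q (trajP η x0 G' Q C t i h u) w1‖₊ : ℝ≥0∞) ^ 2 ∂νQ :=
            lintegral_congr fun w1 => by unfold trajA; rfl
          rw [this]
          exact Q3 Q δ hδ hQvar _
  calc ∫⁻ u, ∫⁻ v, (‖trajR η x0 G' Q C t i h (u, v)‖₊ : ℝ≥0∞) ^ 2 ∂(νQ.prod (νQ.prod νC)) ∂νg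
      ≤ ∫⁻ u, (1 + ENNReal.ofReal θ * ENNReal.ofReal δ)
          * (ENNReal.ofReal δ * (‖trajP η x0 G' Q C t i h u‖₊ : ℝ≥0∞) ^ 2) ∂νg :=
        lintegral_mono hstep1
    _ = (1 + ENNReal.ofReal θ * ENNReal.ofReal δ) * ENNReal.ofReal δ
          * ∫⁻ u, (‖trajP η x0 G' Q C t i h u‖₊ : ℝ≥0∞) ^ 2 ∂νg := by
        rw [← lintegral_const_mul _ (hPm.nnnorm.coe_nnreal_ennreal.pow_const 2)]
        refine lintegral_congr fun u => by ring
    _ = _ := by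
        congr 1
        rw [ENNReal.ofReal_mul (by positivity), ENNReal.ofReal_add (by norm_num)
          (mul_nonneg hθ hδ), ENNReal.ofReal_one, ENNReal.ofReal_mul hθ]

end ZR

section ZMean

variable (hGmeas : ∀ t i, Measurable (Function.uncurry (G' t i)))
  (hQmeas : Measurable (Function.uncurry Q))
  (hCmeas : Measurable (Function.uncurry C))
  (hθ : 0 ≤ θ) (hδ : 0 ≤ δ)
  (hGmean : ∀ t i a, ∫ u, G' t i a u ∂νg = gradient f a)
  (hGvar : ∀ t i a,
    ∫⁻ u, (‖G' t i a u - gradient f a‖₊ : ℝ≥0∞) ^ 2 ∂νg ≤ ENNReal.ofReal (σ ^ 2))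
  (hQvar : ∀ a, ∫⁻ w, (‖Q a w - a‖₊ : ℝ≥0∞) ^ 2 ∂νQ ≤ ENNReal.ofReal (δ * ‖a‖ ^ 2))
  (hCmean : ∀ a, ∫ w, C a w ∂νC = a)
  (hCvar : ∀ a, ∫⁻ w, (‖C a w - a‖₊ : ℝ≥0∞) ^ 2 ∂νC ≤ ENNReal.ofReal (θ * ‖a‖ ^ 2))

include hGmeas hGmean hGvar in
lemma pfin (t : ℕ) (i : Fin N) (h : (Fin t × Fin N) → Ωg × ΩQ × ΩQ × ΩC) :
    ∫⁻ u, (‖trajP η x0 G' Q C t i h u‖₊ : ℝ≥0∞) ^ 2 ∂νg ≠ ∞ :=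
  ne_top_of_le_ne_top ENNReal.ofReal_ne_top
    (innerP η x0 G' Q C f σ hGmeas hGmean hGvar t i h)

include hGmeas hQmeas hCmeas hθ hδ hQvar hCvar in
lemma Zmem2 (t : ℕ) (i : Fin N) (h : (Fin t × Fin N) → Ωg × ΩQ × ΩQ × ΩC)
    (u : Ωg) (w1 : ΩQ) :
    MemLp (fun v : ΩQ × ΩC => trajZ η x0 G' Q C t i h (u, w1, v)) 2 (νQ.prod νC) :=
  memLp_of_lintegral
    (((trajZ_sec η x0 G' Q C hGmeas hQmeas hCmeas t i h).comp
      (measurable_const.prodMk (measurable_const.prodMk measurable_id))).aestronglyMeasurable)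
    (ne_top_of_le_ne_top
      (ENNReal.mul_ne_top ENNReal.ofReal_ne_top
        (ENNReal.mul_ne_top ENNReal.ofReal_ne_top
          (ENNReal.pow_ne_top ENNReal.coe_ne_top)))
      (Z2 η x0 G' Q C θ δ hGmeas hQmeas hCmeas hθ hδ hQvar hCvar t i h u w1))

include hGmeas hQmeas hCmeas hθ hδ hQvar hCvar in
lemma Zmem3 (t : ℕ) (i : Fin N) (h : (Fin t × Fin N) → Ωg × ΩQ × ΩQ × ΩC) (u : Ωg) :
    MemLp (fun v : ΩQ × ΩQ × ΩC => trajZ η x0 G' Q C t i h (u, v)) 2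
      (νQ.prod (νQ.prod νC)) :=
  memLp_of_lintegral
    (((trajZ_sec η x0 G' Q C hGmeas hQmeas hCmeas t i h).comp
      (measurable_const.prodMk measurable_id)).aestronglyMeasurable)
    (ne_top_of_le_ne_top
      (ENNReal.mul_ne_top (ENNReal.mul_ne_top ENNReal.ofReal_ne_top ENNReal.ofReal_ne_top)
        (ENNReal.mul_ne_top ENNReal.ofReal_ne_top
          (ENNReal.pow_ne_top ENNReal.coe_ne_top)))
      (Z1 η x0 G' Q C θ δ hGmeas hQmeas hCmeas hθ hδ hQvar hCvar t i h u))

include hGmeas hQmeas hCmeas hθ hδ hGmean hGvar hQvar hCvar in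
lemma ZmemS (t : ℕ) (i : Fin N) (h : (Fin t × Fin N) → Ωg × ΩQ × ΩQ × ΩC) :
    MemLp (fun s => trajZ η x0 G' Q C t i h s) 2 (νg.prod (νQ.prod (νQ.prod νC))) :=
  memLp_of_lintegral
    ((trajZ_sec η x0 G' Q C hGmeas hQmeas hCmeas t i h).aestronglyMeasurable)
    (ne_top_of_le_ne_top
      (ENNReal.mul_ne_top ENNReal.ofReal_ne_top
        (pfin η x0 G' Q C f σ hGmeas hGmean hGvar t i h))
      (Z0 η x0 G' Q C θ δ hGmeas hQmeas hCmeas hθ hδ hQvar hCvar t i h))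

include hGmeas hQmeas hCmeas hθ hδ hGmean hGvar hQvar hCmean hCvar in
lemma Zmean (t : ℕ) (i : Fin N) (h : (Fin t × Fin N) → Ωg × ΩQ × ΩQ × ΩC) :
    ∫ s, trajZ η x0 G' Q C t i h s ∂(νg.prod (νQ.prod (νQ.prod νC))) = 0 := by
  have hIntS : Integrable (fun s => trajZ η x0 G' Q C t i h s)
      (νg.prod (νQ.prod (νQ.prod νC))) :=
    (ZmemS η x0 G' Q C f σ θ δ hGmeas hQmeas hCmeas hθ hδ hGmean hGvar hQvar
      hCvar t i h).integrable one_le_two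
  rw [MeasureTheory.integral_prod _ hIntS]
  have hin : ∀ u : Ωg, ∫ v, trajZ η x0 G' Q C t i h (u, v) ∂(νQ.prod (νQ.prod νC)) = 0 := by
    intro u
    have hInt3 : Integrable (fun v => trajZ η x0 G' Q C t i h (u, v))
        (νQ.prod (νQ.prod νC)) :=
      (Zmem3 η x0 G' Q C θ δ hGmeas hQmeas hCmeas hθ hδ hQvar hCvar t i h u).integrable
        one_le_two
    rw [MeasureTheory.integral_prod _ hInt3]
    have hin2 : ∀ w1 : ΩQ, ∫ v2, trajZ η x0 G' Q C t i h (u, w1, v2) ∂(νQ.prod νC) = 0 := by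
      intro w1
      have hInt2 : Integrable (fun v2 => trajZ η x0 G' Q C t i h (u, w1, v2))
          (νQ.prod νC) :=
        (Zmem2 η x0 G' Q C θ δ hGmeas hQmeas hCmeas hθ hδ hQvar hCvar t i h u w1).integrable
          one_le_two
      rw [MeasureTheory.integral_prod _ hInt2]
      have hin3 : ∀ w2 : ΩQ, ∫ w3, trajZ η x0 G' Q C t i h (u, w1, w2, w3) ∂νC = 0 := by
        intro w2
        have hze : (fun w3 : ΩC => trajZ η x0 G' Q C t i h (u, w1, w2, w3))
            = fun w3 => C (trajB η x0 G' Q C t i h u w1 w2) w3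
                - trajB η x0 G' Q C t i h u w1 w2 := by
          funext w3; unfold trajZ; rfl
        rw [hze, integral_sub ((hCmemLp C θ hCmeas hθ hCvar _).integrable one_le_two)
          (integrable_const _), hCmean, integral_const, probReal_univ]
        simp
      have : (fun w2 : ΩQ => ∫ w3, trajZ η x0 G' Q C t i h (u, w1, w2, w3) ∂νC)
          = fun _ => 0 := funext hin3
      rw [this, integral_zero]
    have : (fun w1 : ΩQ => ∫ v2, trajZ η x0 G' Q C t i h (u, w1, v2) ∂(νQ.prod νC))
        = fun _ => 0 := funext hin2
    rw [this, integral_zero]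
  have : (fun u : Ωg => ∫ v, trajZ η x0 G' Q C t i h (u, v) ∂(νQ.prod (νQ.prod νC)))
      = fun _ => 0 := funext hin
  rw [this, integral_zero]

end ZMean

end Inner
lemma realR_bound (σ G δ θ c lam η : ℝ) (hθ : 0 ≤ θ)
    (hδ0 : 0 < δ) (hδ1 : δ < 1) (hc0 : 0 < c) (hc1 : c < 1) (hlam : 0 < lam)
    (hδeq : δ = c / ((1 + lam) * (1 + Real.sqrt θ) ^ 2)) :
    (1 + θ * δ) * δ * ((1 + 1/lam) * η^2 * G^2 + η^2 * σ^2
        + (1 + lam) * (c / lam * η ^ 2 * (σ ^ 2 + G ^ 2) / (1 - c)))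
      ≤ c / lam * η ^ 2 * (σ ^ 2 + G ^ 2) / (1 - c) := by
  have hsq : Real.sqrt θ ^ 2 = θ := Real.sq_sqrt hθ
  have hsnn : 0 ≤ Real.sqrt θ := Real.sqrt_nonneg θ
  have h1c : (0:ℝ) < 1 - c := by linarith
  have hK0 : 0 ≤ c / lam * η ^ 2 * (σ ^ 2 + G ^ 2) / (1 - c) := by positivity
  have hpos1 : (0:ℝ) < (1 + lam) * (1 + Real.sqrt θ) ^ 2 := by positivity
  have hδval : δ * ((1 + lam) * (1 + Real.sqrt θ) ^ 2) = c := by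
    rw [hδeq, div_mul_cancel₀ _ hpos1.ne']
  have hA : (1 + θ * δ) * δ ≤ c / (1 + lam) := by
    have h2' : 1 + θ * δ ≤ (1 + Real.sqrt θ) ^ 2 := by nlinarith
    have h4 : (1 + θ * δ) * δ ≤ (1 + Real.sqrt θ) ^ 2 * δ :=
      mul_le_mul_of_nonneg_right h2' hδ0.le
    have h5 : (1 + Real.sqrt θ) ^ 2 * δ = c / (1 + lam) := by
      rw [eq_div_iff (by positivity : (1:ℝ) + lam ≠ 0)]
      linear_combination hδval
    linarith
  have hSv : (1 + 1/lam) * η^2 * G^2 + η^2 * σ^2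
      ≤ (1 + 1/lam) * η^2 * (σ^2 + G^2) := by
    have hl : (0:ℝ) < 1/lam := by positivity
    nlinarith [sq_nonneg η, sq_nonneg σ, mul_nonneg (sq_nonneg η) (sq_nonneg σ)]
  have hM2 : (0:ℝ) ≤ (1 + 1/lam) * η^2 * (σ^2 + G^2)
      + (1 + lam) * (c / lam * η ^ 2 * (σ ^ 2 + G ^ 2) / (1 - c)) := by positivity
  have hAnn : (0:ℝ) ≤ (1 + θ * δ) * δ := by positivity
  calc (1 + θ * δ) * δ * ((1 + 1/lam) * η^2 * G^2 + η^2 * σ^2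
          + (1 + lam) * (c / lam * η ^ 2 * (σ ^ 2 + G ^ 2) / (1 - c)))
      ≤ (1 + θ * δ) * δ * ((1 + 1/lam) * η^2 * (σ^2 + G^2)
          + (1 + lam) * (c / lam * η ^ 2 * (σ ^ 2 + G ^ 2) / (1 - c))) :=
        mul_le_mul_of_nonneg_left (by linarith) hAnn
    _ ≤ c / (1 + lam) * ((1 + 1/lam) * η^2 * (σ^2 + G^2)
          + (1 + lam) * (c / lam * η ^ 2 * (σ ^ 2 + G ^ 2) / (1 - c))) :=
        mul_le_mul_of_nonneg_right hA hM2
    _ = c / lam * η ^ 2 * (σ ^ 2 + G ^ 2) / (1 - c) := by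
        field_simp
        ring

lemma realFinal_bound (N : ℕ) (hN : 0 < N) (σ G δ θ c lam η : ℝ) (hθ : 0 ≤ θ)
    (hδ0 : 0 < δ) (hc0 : 0 < c) (hc1 : c < 1) (hlam : 0 < lam) :
    ((N:ℝ)⁻¹)^2 * ((N:ℝ) * (θ * δ * δ * ((1 + 1/1) * η^2 * G^2 + η^2 * σ^2
        + (1 + 1) * (c / lam * η ^ 2 * (σ ^ 2 + G ^ 2) / (1 - c)))))
      ≤ ((1 - c + c / lam) / (1 - c))
          * (2 * δ ^ 2 * θ * η ^ 2 * (σ ^ 2 + G ^ 2) / N) := by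
  have hNpos : (0:ℝ) < N := by exact_mod_cast hN
  have h1c : (0:ℝ) < 1 - c := by linarith
  have hK0 : 0 ≤ c / lam * η ^ 2 * (σ ^ 2 + G ^ 2) / (1 - c) := by positivity
  have hPBle : (1 + 1/1) * η^2 * G^2 + η^2 * σ^2
        + (1 + 1) * (c / lam * η ^ 2 * (σ ^ 2 + G ^ 2) / (1 - c))
      ≤ 2*η^2*(σ^2+G^2) + 2*(c / lam * η ^ 2 * (σ ^ 2 + G ^ 2) / (1 - c)) := by
    nlinarith [sq_nonneg η, sq_nonneg σ, mul_nonneg (sq_nonneg η) (sq_nonneg σ)]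
  have hE : (1 - c + c/lam)/(1-c) * (2*δ^2*θ*η^2*(σ^2+G^2))
      = θ*δ*δ*(2*η^2*(σ^2+G^2)
          + 2*(c / lam * η ^ 2 * (σ ^ 2 + G ^ 2) / (1 - c))) := by
    field_simp
  have hstep : θ*δ*δ*((1 + 1/1) * η^2 * G^2 + η^2 * σ^2
        + (1 + 1) * (c / lam * η ^ 2 * (σ ^ 2 + G ^ 2) / (1 - c)))
      ≤ θ*δ*δ*(2*η^2*(σ^2+G^2)
          + 2*(c / lam * η ^ 2 * (σ ^ 2 + G ^ 2) / (1 - c))) :=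
    mul_le_mul_of_nonneg_left hPBle (by positivity)
  calc ((N:ℝ)⁻¹)^2 * ((N:ℝ) * (θ * δ * δ * ((1 + 1/1) * η^2 * G^2 + η^2 * σ^2
          + (1 + 1) * (c / lam * η ^ 2 * (σ ^ 2 + G ^ 2) / (1 - c)))))
      = θ*δ*δ*((1 + 1/1) * η^2 * G^2 + η^2 * σ^2
          + (1 + 1) * (c / lam * η ^ 2 * (σ ^ 2 + G ^ 2) / (1 - c))) / N := by
        field_simp
    _ ≤ θ*δ*δ*(2*η^2*(σ^2+G^2)
          + 2*(c / lam * η ^ 2 * (σ ^ 2 + G ^ 2) / (1 - c))) / N := by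
        rw [div_eq_mul_inv, div_eq_mul_inv]
        exact mul_le_mul_of_nonneg_right hstep (by positivity)
    _ = ((1 - c + c / lam) / (1 - c))
          * (2 * δ ^ 2 * θ * η ^ 2 * (σ ^ 2 + G ^ 2) / N) := by
        have h2 : ((1 - c + c / lam) / (1 - c))
              * (2 * δ ^ 2 * θ * η ^ 2 * (σ ^ 2 + G ^ 2) / N)
            = (((1 - c + c / lam) / (1 - c))
              * (2 * δ ^ 2 * θ * η ^ 2 * (σ ^ 2 + G ^ 2))) / N := by ring
        rw [h2, hE]

end
end IconefV2Aux

set_option maxHeartbeats 2000000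
open IconefV2Aux

/-- **iConEF-v2 residual bound (Lemma 6).**
Under iConEF-v2 (`p t i = η • g t i + ẽ t i + q t i`, `Δ t i = Q (p t i)`,
`x (t+1) = x t - (1/N) • ∑ i, Δ t i`, `ẽ (t+1) i = Q (p t i - Δ t i)`,
`q (t+1) i = C (p t i - Δ t i - ẽ (t+1) i)`, `ẽ 0 i = q 0 i = 0`), with unbiased
stochastic gradients of variance `≤ σ²`, `E[‖∇f(x t)‖²] ≤ G²`, fresh independent
seeds (hence conditional independence across the `N` workers), an unbiased error
compressor `C` with `E[‖C a - a‖²|a] ≤ θ‖a‖²`, and a gradient compressor `Q` with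
`E[‖Q a - a‖²|a] ≤ δ‖a‖²` where `δ = c/((1+λ)(1+√θ)²)` for some `c ∈ (0,1)`,
`λ > 0`: defining `ζ t i = (ẽ (t+1) i + q (t+1) i) - p t i + Δ t i`, for every `t`,
`E[‖(1/N) ∑ i, ζ t i‖²] ≤ ((1-c+c/λ)/(1-c)) · 2δ²θη²(σ²+G²)/N`. -/
theorem iconef_v2_residual_bound
    (d N : ℕ) (hN : 0 < N)
    (σ G δ θ c lam η : ℝ)
    (hσ : 0 ≤ σ) (hG : 0 ≤ G) (hθ : 0 ≤ θ)
    (hδ0 : 0 < δ) (hδ1 : δ < 1) (hc : c ∈ Set.Ioo (0 : ℝ) 1) (hlam : 0 < lam)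
    (hδeq : δ = c / ((1 + lam) * (1 + Real.sqrt θ) ^ 2))
    (hη : 0 < η)
    (f : EuclideanSpace ℝ (Fin d) → ℝ) (hf : Differentiable ℝ f)
    -- seed spaces for the stochastic gradients and the compressor calls
    {Ωg ΩQ ΩC : Type} [MeasurableSpace Ωg] [MeasurableSpace ΩQ] [MeasurableSpace ΩC]
    (νg : Measure Ωg) (νQ : Measure ΩQ) (νC : Measure ΩC)
    [IsProbabilityMeasure νg] [IsProbabilityMeasure νQ] [IsProbabilityMeasure νC]
    (G' : ℕ → Fin N → EuclideanSpace ℝ (Fin d) → Ωg → EuclideanSpace ℝ (Fin d))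
    (Q : EuclideanSpace ℝ (Fin d) → ΩQ → EuclideanSpace ℝ (Fin d))
    (C : EuclideanSpace ℝ (Fin d) → ΩC → EuclideanSpace ℝ (Fin d))
    (hGmeas : ∀ t i, Measurable (Function.uncurry (G' t i)))
    (hQmeas : Measurable (Function.uncurry Q))
    (hCmeas : Measurable (Function.uncurry C))
    -- Assumption 2: unbiased stochastic gradients with bounded variance
    (hGmean : ∀ t i a, ∫ ω, G' t i a ω ∂νg = gradient f a)
    (hGvar : ∀ t i a,
      ∫⁻ ω, (‖G' t i a ω - gradient f a‖₊ : ℝ≥0∞) ^ 2 ∂νg ≤ ENNReal.ofReal (σ ^ 2))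
    -- Assumption 4: contractive gradient compressor
    (hQvar : ∀ a, ∫⁻ ω, (‖Q a ω - a‖₊ : ℝ≥0∞) ^ 2 ∂νQ ≤ ENNReal.ofReal (δ * ‖a‖ ^ 2))
    -- Assumption 3: unbiased error compressor
    (hCmean : ∀ a, ∫ ω, C a ω ∂νC = a)
    (hCvar : ∀ a, ∫⁻ ω, (‖C a ω - a‖₊ : ℝ≥0∞) ^ 2 ∂νC ≤ ENNReal.ofReal (θ * ‖a‖ ^ 2))
    -- the underlying sample space carrying i.i.d. fresh seeds for every (t, i):
    -- one gradient seed and two Q seeds plus one C seed per step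
    {Ω : Type} [MeasurableSpace Ω] (μ : Measure Ω) [IsProbabilityMeasure μ]
    (seed : ℕ → Fin N → Ω → Ωg × ΩQ × ΩQ × ΩC)
    (hseedMeas : ∀ t i, Measurable (seed t i))
    (hseedLaw : ∀ t i, Measure.map (seed t i) μ = νg.prod (νQ.prod (νQ.prod νC)))
    (hseedIndep : iIndepFun
      (fun q : ℕ × Fin N => seed q.1 q.2) μ)
    -- the iConEF-v2 trajectories
    (x0 : EuclideanSpace ℝ (Fin d))
    (x : ℕ → Ω → EuclideanSpace ℝ (Fin d))
    (et q g p Δ : ℕ → Fin N → Ω → EuclideanSpace ℝ (Fin d))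
    (hx0 : ∀ ω, x 0 ω = x0)
    (het0 : ∀ i ω, et 0 i ω = 0)
    (hq0 : ∀ i ω, q 0 i ω = 0)
    (hg : ∀ t i ω, g t i ω = G' t i (x t ω) (seed t i ω).1)
    (hp : ∀ t i ω, p t i ω = η • g t i ω + et t i ω + q t i ω)
    (hΔ : ∀ t i ω, Δ t i ω = Q (p t i ω) (seed t i ω).2.1)
    (hx : ∀ t ω, x (t + 1) ω = x t ω - (N : ℝ)⁻¹ • ∑ i, Δ t i ω)
    (het : ∀ t i ω, et (t + 1) i ω = Q (p t i ω - Δ t i ω) (seed t i ω).2.2.1)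
    (hq : ∀ t i ω,
      q (t + 1) i ω = C (p t i ω - Δ t i ω - et (t + 1) i ω) (seed t i ω).2.2.2)
    -- Assumption 2: bounded expected squared gradient norm
    (hgradbound : ∀ t,
      ∫⁻ ω, (‖gradient f (x t ω)‖₊ : ℝ≥0∞) ^ 2 ∂μ ≤ ENNReal.ofReal (G ^ 2))
    -- the combined error-compression residual
    (ζ : ℕ → Fin N → Ω → EuclideanSpace ℝ (Fin d))
    (hζ : ∀ t i ω,
      ζ t i ω = et (t + 1) i ω + q (t + 1) i ω - p t i ω + Δ t i ω) :
    ∀ t : ℕ,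
      ∫⁻ ω, (‖(N : ℝ)⁻¹ • ∑ i, ζ t i ω‖₊ : ℝ≥0∞) ^ 2 ∂μ
        ≤ ENNReal.ofReal (((1 - c + c / lam) / (1 - c)) *
            (2 * δ ^ 2 * θ * η ^ 2 * (σ ^ 2 + G ^ 2) / (N : ℝ))) := by
  obtain ⟨hc0, hc1⟩ := hc
  have hNpos : (0:ℝ) < N := by exact_mod_cast hN
  have h1c : (0:ℝ) < 1 - c := by linarith
  set K : ℝ := c / lam * η ^ 2 * (σ ^ 2 + G ^ 2) / (1 - c) with hKdef
  have hK0 : 0 ≤ K := by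
    rw [hKdef, div_eq_mul_inv]
    have h3 : 0 < (1 - c)⁻¹ := by positivity
    positivity
  set Xh : (t : ℕ) → Ω → (Fin t × Fin N → Ωg × ΩQ × ΩQ × ΩC) :=
    fun t ω e => seed e.1 e.2 ω with hXhdef
  have hXhmeas : ∀ t, Measurable (Xh t) :=
    fun t => measurable_pi_lambda _ fun e => hseedMeas _ _
  have spec : ∀ t ω, traj η x0 G' Q C t (Xh t ω)
      = (x t ω, fun i => et t i ω, fun i => q t i ω) := by
    intro t
    induction t with
    | zero =>
        intro ω
        rw [traj_zero_eq, hx0 ω]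
        refine Prod.ext rfl (Prod.ext ?_ ?_) <;> funext i
        · exact (het0 i ω).symm
        · exact (hq0 i ω).symm
    | succ t ih =>
        intro ω
        have hrestr : (fun e : Fin t × Fin N => Xh (t+1) ω (e.1.castSucc, e.2))
            = Xh t ω := by
          funext e; simp [hXhdef, Fin.coe_castSucc]
        have hcur : ∀ i : Fin N, Xh (t+1) ω (Fin.last t, i) = seed t i ω := by
          intro i; simp [hXhdef, Fin.val_last]
        rw [traj_succ_eq]
        dsimp only
        rw [hrestr, ih ω]
        dsimp only
        simp only [hcur, ← hg, ← hp, ← hΔ, ← hx, ← het, ← hq]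
  have specX : ∀ t ω, x t ω = trajX η x0 G' Q C t (Xh t ω) := by
    intro t ω; rw [trajX_eq, spec t ω]
  have specEQ : ∀ t (i : Fin N) ω,
      et t i ω + q t i ω = trajEQ η x0 G' Q C t i (Xh t ω) := by
    intro t i ω; rw [trajEQ_eq, spec t ω]
  have specP : ∀ t (i : Fin N) ω,
      p t i ω = trajP η x0 G' Q C t i (Xh t ω) (seed t i ω).1 := by
    intro t i ω
    rw [trajP_eq, ← specX, ← specEQ, hp, hg]
    abel
  have specA : ∀ t (i : Fin N) ω,
      p t i ω - Δ t i ω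
        = trajA η x0 G' Q C t i (Xh t ω) (seed t i ω).1 (seed t i ω).2.1 := by
    intro t i ω
    rw [trajA_eq, ← specP, hΔ]
  have specB : ∀ t (i : Fin N) ω,
      trajB η x0 G' Q C t i (Xh t ω) (seed t i ω).1 (seed t i ω).2.1 (seed t i ω).2.2.1
        = p t i ω - Δ t i ω - Q (p t i ω - Δ t i ω) (seed t i ω).2.2.1 := by
    intro t i ω
    rw [trajB_eq, ← specA]
  have specZ : ∀ t (i : Fin N) ω,
      ζ t i ω = trajZ η x0 G' Q C t i (Xh t ω) (seed t i ω) := by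
    intro t i ω
    rw [trajZ_eq, specB, hζ, hq, het]
    abel
  have specR : ∀ t (i : Fin N) ω,
      et (t+1) i ω + q (t+1) i ω = trajR η x0 G' Q C t i (Xh t ω) (seed t i ω) := by
    intro t i ω
    rw [trajR_eq, specB, ← specA, hq, het]
  classical
  have hIndepJ : ∀ t (J : Finset (Fin N)) (i : Fin N), i ∉ J →
      IndepFun (fun ω => (Xh t ω, fun j : ↥J => seed t ↑j ω)) (seed t i) μ := by
    intro t J i hiJ
    set S : Finset (ℕ × Fin N) :=
      (Finset.range t ×ˢ (Finset.univ : Finset (Fin N))) ∪ ({t} ×ˢ J) with hS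
    have hmem1 : ∀ e : Fin t × Fin N, ((e.1 : ℕ), e.2) ∈ S := fun e =>
      Finset.mem_union_left _ (Finset.mem_product.mpr
        ⟨Finset.mem_range.mpr e.1.isLt, Finset.mem_univ _⟩)
    have hmem2 : ∀ j : ↥J, ((t : ℕ), (j : Fin N)) ∈ S := fun j =>
      Finset.mem_union_right _ (Finset.mem_product.mpr
        ⟨Finset.mem_singleton_self t, j.2⟩)
    have hd : Disjoint S {(t, i)} := by
      rw [Finset.disjoint_singleton_right]
      intro hmem
      rcases Finset.mem_union.mp hmem with h | h
      · exact absurd (Finset.mem_range.mp (Finset.mem_product.mp h).1) (lt_irrefl t)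
      · exact hiJ (Finset.mem_product.mp h).2
    have base := hseedIndep.indepFun_finset S {(t, i)} hd
      (fun e => hseedMeas e.1 e.2)
    have hφ : Measurable (fun v : (↥S → Ωg × ΩQ × ΩQ × ΩC) =>
        ((fun e : Fin t × Fin N => v ⟨((e.1 : ℕ), e.2), hmem1 e⟩),
          fun j : ↥J => v ⟨((t : ℕ), (j : Fin N)), hmem2 j⟩)) :=
      (measurable_pi_lambda _ fun e => measurable_pi_apply _).prodMk
        (measurable_pi_lambda _ fun j => measurable_pi_apply _)
    have hψ : Measurable
        (fun w : (↥({(t, i)} : Finset (ℕ × Fin N)) → Ωg × ΩQ × ΩQ × ΩC) =>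
          w ⟨(t, i), Finset.mem_singleton_self _⟩) := measurable_pi_apply _
    exact base.comp hφ hψ
  have hIndep1 : ∀ t (i : Fin N), IndepFun (Xh t) (seed t i) μ := by
    intro t i
    exact (hIndepJ t ∅ i (Finset.notMem_empty i)).comp measurable_fst measurable_id
  set Rt : ℕ → Fin N → ℝ≥0∞ :=
    fun t i => ∫⁻ ω, (‖et t i ω + q t i ω‖₊ : ℝ≥0∞) ^ 2 ∂μ with hRtdef
  set Pt2 : ℕ → Fin N → ℝ≥0∞ :=
    fun t i => ∫⁻ ω, ∫⁻ u, (‖trajP η x0 G' Q C t i (Xh t ω) u‖₊ : ℝ≥0∞) ^ 2 ∂νg ∂μ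
    with hPt2def
  have hPmeanMeas : ∀ t (i : Fin N), Measurable fun ω =>
      ∫⁻ u, (‖trajP η x0 G' Q C t i (Xh t ω) u‖₊ : ℝ≥0∞) ^ 2 ∂νg := by
    intro t i
    have h1 : Measurable fun z : ((Fin t × Fin N) → Ωg × ΩQ × ΩQ × ΩC) × Ωg =>
        (‖trajP η x0 G' Q C t i z.1 z.2‖₊ : ℝ≥0∞) ^ 2 :=
      (trajP_measurableHU η x0 G' Q C hGmeas hQmeas hCmeas t i).nnnorm.coe_nnreal_ennreal.pow_const 2
    exact (Measurable.lintegral_prod_right' h1).comp (hXhmeas t)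
  have hgradm : Measurable (gradient f) := by
    have h1 := measurable_fderiv ℝ f
    have h2 : Continuous fun L : EuclideanSpace ℝ (Fin d) →L[ℝ] ℝ =>
        (InnerProductSpace.toDual ℝ (EuclideanSpace ℝ (Fin d))).symm L :=
      (InnerProductSpace.toDual ℝ (EuclideanSpace ℝ (Fin d))).symm.continuous
    exact h2.measurable.comp h1
  have hxmeas : ∀ t, Measurable (x t) := by
    intro t
    have hxe : (x t) = fun ω => trajX η x0 G' Q C t (Xh t ω) :=
      funext fun ω => specX t ω
    rw [hxe]
    exact (trajX_measurable η x0 G' Q C hGmeas hQmeas hCmeas t).comp (hXhmeas t)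
  have hEQmeas : ∀ t (i : Fin N), Measurable fun ω => et t i ω + q t i ω := by
    intro t i
    have heq : (fun ω => et t i ω + q t i ω)
        = fun ω => trajEQ η x0 G' Q C t i (Xh t ω) := funext fun ω => specEQ t i ω
    rw [heq]
    exact (trajEQ_measurable η x0 G' Q C hGmeas hQmeas hCmeas t i).comp (hXhmeas t)
  have keyP : ∀ (κ : ℝ), 0 < κ → ∀ t (i : Fin N),
      Pt2 t i ≤ ENNReal.ofReal ((1 + 1/κ) * η^2 * G^2 + η^2 * σ^2)
        + ENNReal.ofReal (1 + κ) * Rt t i := by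
    intro κ hκ t i
    have step1 : Pt2 t i ≤ ∫⁻ ω, ENNReal.ofReal
        (‖trajEQ η x0 G' Q C t i (Xh t ω)
            + η • gradient f (trajX η x0 G' Q C t (Xh t ω))‖ ^ 2 + η^2 * σ^2) ∂μ := by
      rw [hPt2def]
      exact lintegral_mono fun ω =>
        innerP η x0 G' Q C f σ hGmeas hGmean hGvar t i (Xh t ω)
    refine le_trans step1 ?_
    have step2 : ∀ ω, ENNReal.ofReal
        (‖trajEQ η x0 G' Q C t i (Xh t ω)
            + η • gradient f (trajX η x0 G' Q C t (Xh t ω))‖ ^ 2 + η^2 * σ^2)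
        ≤ ENNReal.ofReal (1 + κ) * (‖et t i ω + q t i ω‖₊ : ℝ≥0∞) ^ 2
          + (ENNReal.ofReal ((1 + 1/κ) * η^2) * (‖gradient f (x t ω)‖₊ : ℝ≥0∞) ^ 2
            + ENNReal.ofReal (η^2 * σ^2)) := by
      intro ω
      have hy := young_norm hκ (trajEQ η x0 G' Q C t i (Xh t ω))
        (η • gradient f (trajX η x0 G' Q C t (Xh t ω)))
      have hsm : ‖η • gradient f (trajX η x0 G' Q C t (Xh t ω))‖ ^ 2
          = η^2 * ‖gradient f (trajX η x0 G' Q C t (Xh t ω))‖ ^ 2 := by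
        rw [norm_smul, mul_pow, Real.norm_eq_abs, sq_abs]
      have hb : ‖trajEQ η x0 G' Q C t i (Xh t ω)
            + η • gradient f (trajX η x0 G' Q C t (Xh t ω))‖ ^ 2 + η^2 * σ^2
          ≤ (1 + κ) * ‖trajEQ η x0 G' Q C t i (Xh t ω)‖ ^ 2
            + ((1 + 1/κ) * η^2 * ‖gradient f (trajX η x0 G' Q C t (Xh t ω))‖ ^ 2
              + η^2 * σ^2) := by
        rw [hsm] at hy
        nlinarith [hy]
      refine le_trans (ENNReal.ofReal_le_ofReal hb) ?_
      rw [← specEQ t i ω, ← specX t ω]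
      have hA1 : (0:ℝ) ≤ (1 + κ) * ‖et t i ω + q t i ω‖ ^ 2 := by positivity
      have hB1 : (0:ℝ) ≤ (1 + 1/κ) * η^2 * ‖gradient f (x t ω)‖ ^ 2 + η^2 * σ^2 := by
        positivity
      have hC1 : (0:ℝ) ≤ (1 + 1/κ) * η^2 * ‖gradient f (x t ω)‖ ^ 2 := by positivity
      have hD1 : (0:ℝ) ≤ η^2 * σ^2 := by positivity
      rw [ENNReal.ofReal_add hA1 hB1, ENNReal.ofReal_add hC1 hD1]
      rw [ofReal_mul_norm_sq (by positivity : (0:ℝ) ≤ 1 + κ),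
        ofReal_mul_norm_sq (by positivity : (0:ℝ) ≤ (1 + 1/κ) * η^2)]
    refine le_trans (lintegral_mono step2) ?_
    have hgx : Measurable fun ω => gradient f (x t ω) := hgradm.comp (hxmeas t)
    rw [lintegral_add_left (((hEQmeas t i).nnnorm.coe_nnreal_ennreal.pow_const 2).const_mul _)]
    rw [lintegral_add_left ((hgx.nnnorm.coe_nnreal_ennreal.pow_const 2).const_mul _)]
    rw [lintegral_const, measure_univ, mul_one]
    rw [lintegral_const_mul _ ((hEQmeas t i).nnnorm.coe_nnreal_ennreal.pow_const 2)]
    rw [lintegral_const_mul _ (hgx.nnnorm.coe_nnreal_ennreal.pow_const 2)]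
    have h3 : ENNReal.ofReal ((1 + 1/κ) * η^2)
          * ∫⁻ ω, (‖gradient f (x t ω)‖₊ : ℝ≥0∞) ^ 2 ∂μ
        + ENNReal.ofReal (η^2 * σ^2)
        ≤ ENNReal.ofReal ((1 + 1/κ) * η^2 * G^2 + η^2 * σ^2) := by
      rw [ENNReal.ofReal_add (by positivity : (0:ℝ) ≤ (1 + 1/κ) * η^2 * G^2)
        (by positivity : (0:ℝ) ≤ η^2 * σ^2)]
      refine add_le_add_left ?_ _
      refine le_trans (mul_le_mul_right (hgradbound t) _) ?_
      rw [← ENNReal.ofReal_mul (by positivity : (0:ℝ) ≤ (1 + 1/κ) * η^2)]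
    calc ENNReal.ofReal (1 + κ) * Rt t i
          + (ENNReal.ofReal ((1 + 1/κ) * η^2)
              * ∫⁻ ω, (‖gradient f (x t ω)‖₊ : ℝ≥0∞) ^ 2 ∂μ
            + ENNReal.ofReal (η^2 * σ^2))
        ≤ ENNReal.ofReal (1 + κ) * Rt t i
            + ENNReal.ofReal ((1 + 1/κ) * η^2 * G^2 + η^2 * σ^2) :=
          add_le_add_right h3 _
      _ = _ := by rw [add_comm]
  have keyR : ∀ t (i : Fin N),
      Rt (t+1) i ≤ ENNReal.ofReal ((1 + θ * δ) * δ) * Pt2 t i := by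
    intro t i
    have e1 : Rt (t+1) i
        = ∫⁻ ω, (‖trajR η x0 G' Q C t i (Xh t ω) (seed t i ω)‖₊ : ℝ≥0∞) ^ 2 ∂μ := by
      rw [hRtdef]
      exact lintegral_congr fun ω => by rw [specR t i ω]
    have hFm : Measurable (Function.uncurry fun h s =>
        (‖trajR η x0 G' Q C t i h s‖₊ : ℝ≥0∞) ^ 2) :=
      (trajR_measurableW η x0 G' Q C hGmeas hQmeas hCmeas t i).nnnorm.coe_nnreal_ennreal.pow_const 2
    have e2 : ∫⁻ ω, (‖trajR η x0 G' Q C t i (Xh t ω) (seed t i ω)‖₊ : ℝ≥0∞) ^ 2 ∂μ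
        = ∫⁻ ω, ∫⁻ s, (‖trajR η x0 G' Q C t i (Xh t ω) s‖₊ : ℝ≥0∞) ^ 2
            ∂(νg.prod (νQ.prod (νQ.prod νC))) ∂μ :=
      condition_on (F := fun h s => (‖trajR η x0 G' Q C t i h s‖₊ : ℝ≥0∞) ^ 2)
        (hXhmeas t) (hseedMeas t i) (hIndep1 t i) (hseedLaw t i) hFm
    rw [e1, e2]
    calc ∫⁻ ω, ∫⁻ s, (‖trajR η x0 G' Q C t i (Xh t ω) s‖₊ : ℝ≥0∞) ^ 2
          ∂(νg.prod (νQ.prod (νQ.prod νC))) ∂μ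
        ≤ ∫⁻ ω, ENNReal.ofReal ((1 + θ * δ) * δ)
            * ∫⁻ u, (‖trajP η x0 G' Q C t i (Xh t ω) u‖₊ : ℝ≥0∞) ^ 2 ∂νg ∂μ :=
          lintegral_mono fun ω => R0 η x0 G' Q C θ δ hGmeas hQmeas hCmeas hθ hδ0.le
            hQvar hCmean hCvar t i (Xh t ω)
      _ = _ := by
          rw [lintegral_const_mul _ (hPmeanMeas t i), hPt2def]
  have hRbound : ∀ t (i : Fin N), Rt t i ≤ ENNReal.ofReal K := by
    intro t
    induction t with
    | zero =>
        intro i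
        have hz : Rt 0 i = 0 := by
          rw [hRtdef]
          have hzz : ∀ ω : Ω, (‖et 0 i ω + q 0 i ω‖₊ : ℝ≥0∞) ^ 2 = 0 := by
            intro ω; simp [het0, hq0]
          simp only [hzz, lintegral_zero]
        rw [hz]
        exact zero_le
    | succ t ih =>
        intro i
        have h2 := keyP lam hlam t i
        have hb1 : ENNReal.ofReal (1 + lam) * Rt t i
            ≤ ENNReal.ofReal ((1 + lam) * K) := by
          rw [ENNReal.ofReal_mul (by positivity : (0:ℝ) ≤ 1 + lam)]
          exact mul_le_mul_right (ih i) _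
        have h3 : Pt2 t i ≤ ENNReal.ofReal ((1 + 1/lam) * η^2 * G^2 + η^2 * σ^2
            + (1 + lam) * K) := by
          refine le_trans h2 (le_trans (add_le_add_right hb1 _) ?_)
          rw [ENNReal.ofReal_add
            (by positivity : (0:ℝ) ≤ (1 + 1/lam) * η^2 * G^2 + η^2 * σ^2)
            (by positivity : (0:ℝ) ≤ (1 + lam) * K)]
        refine le_trans (keyR t i) ?_
        refine le_trans (mul_le_mul_right h3 _) ?_
        rw [← ENNReal.ofReal_mul (by positivity : (0:ℝ) ≤ (1 + θ * δ) * δ)]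
        refine ENNReal.ofReal_le_ofReal ?_
        rw [hKdef]
        exact realR_bound σ G δ θ c lam η hθ hδ0 hδ1 hc0 hc1 hlam hδeq
  -- now fix t and conclude
  intro t
  have hPt2bound : ∀ i : Fin N, Pt2 t i
      ≤ ENNReal.ofReal ((1 + 1/1) * η^2 * G^2 + η^2 * σ^2 + (1 + 1) * K) := by
    intro i
    refine le_trans (keyP 1 one_pos t i) ?_
    have hb1 : ENNReal.ofReal (1 + 1) * Rt t i ≤ ENNReal.ofReal ((1 + 1) * K) := by
      rw [ENNReal.ofReal_mul (by norm_num : (0:ℝ) ≤ 1 + 1)]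
      exact mul_le_mul_right (hRbound t i) _
    refine le_trans (add_le_add_right hb1 _) ?_
    rw [ENNReal.ofReal_add
      (by positivity : (0:ℝ) ≤ (1 + 1/1) * η^2 * G^2 + η^2 * σ^2)
      (by positivity : (0:ℝ) ≤ (1 + 1) * K)]
  set PB : ℝ := (1 + 1/1) * η^2 * G^2 + η^2 * σ^2 + (1 + 1) * K with hPBdef
  have hPB0 : 0 ≤ PB := by rw [hPBdef]; positivity
  have hZt2 : ∀ i : Fin N,
      ∫⁻ ω, ∫⁻ s, (‖trajZ η x0 G' Q C t i (Xh t ω) s‖₊ : ℝ≥0∞) ^ 2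
          ∂(νg.prod (νQ.prod (νQ.prod νC))) ∂μ
        ≤ ENNReal.ofReal (θ * δ * δ * PB) := by
    intro i
    calc ∫⁻ ω, ∫⁻ s, (‖trajZ η x0 G' Q C t i (Xh t ω) s‖₊ : ℝ≥0∞) ^ 2
          ∂(νg.prod (νQ.prod (νQ.prod νC))) ∂μ
        ≤ ∫⁻ ω, ENNReal.ofReal (θ * δ * δ)
            * ∫⁻ u, (‖trajP η x0 G' Q C t i (Xh t ω) u‖₊ : ℝ≥0∞) ^ 2 ∂νg ∂μ :=
          lintegral_mono fun ω => Z0 η x0 G' Q C θ δ hGmeas hQmeas hCmeas hθ hδ0.le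
            hQvar hCvar t i (Xh t ω)
      _ = ENNReal.ofReal (θ * δ * δ) * Pt2 t i := by
          rw [lintegral_const_mul _ (hPmeanMeas t i), hPt2def]
      _ ≤ ENNReal.ofReal (θ * δ * δ) * ENNReal.ofReal PB :=
          mul_le_mul_right (hPt2bound i) _
      _ = ENNReal.ofReal (θ * δ * δ * PB) := by
          rw [← ENNReal.ofReal_mul (by positivity : (0:ℝ) ≤ θ * δ * δ)]
  have hζmeas : ∀ i : Fin N, Measurable (ζ t i) := by
    intro i
    have hze : ζ t i = fun ω => trajZ η x0 G' Q C t i (Xh t ω) (seed t i ω) :=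
      funext fun ω => specZ t i ω
    rw [hze]
    exact (trajZ_measurableW η x0 G' Q C hGmeas hQmeas hCmeas t i).comp
      ((hXhmeas t).prodMk (hseedMeas t i))
  have keySum : ∀ J : Finset (Fin N),
      ∫⁻ ω, (‖∑ j ∈ J, ζ t j ω‖₊ : ℝ≥0∞) ^ 2 ∂μ
        ≤ (J.card : ℝ≥0∞) * ENNReal.ofReal (θ * δ * δ * PB) := by
    intro J
    induction J using Finset.induction_on with
    | empty => simp
    | @insert i J hiJ ihJ =>
        set SJf : ((Fin t × Fin N) → Ωg × ΩQ × ΩQ × ΩC) × (↥J → Ωg × ΩQ × ΩQ × ΩC)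
            → EuclideanSpace ℝ (Fin d) :=
          fun z => ∑ j : ↥J, trajZ η x0 G' Q C t ↑j z.1 (z.2 j) with hSJf
        have hSJmeas : Measurable SJf := by
          rw [hSJf]
          exact Finset.measurable_sum _ fun j _ =>
            (trajZ_measurableW η x0 G' Q C hGmeas hQmeas hCmeas t ↑j).comp
              (measurable_fst.prodMk ((measurable_pi_apply j).comp measurable_snd))
        have hXJm : Measurable (fun ω => (Xh t ω, fun j : ↥J => seed t ↑j ω)) :=
          (hXhmeas t).prodMk (measurable_pi_lambda _ fun j => hseedMeas t ↑j)
        have hFm : Measurable (Function.uncurry fun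
            (z : ((Fin t × Fin N) → Ωg × ΩQ × ΩQ × ΩC) × (↥J → Ωg × ΩQ × ΩQ × ΩC))
            (s : Ωg × ΩQ × ΩQ × ΩC) =>
            (‖SJf z + trajZ η x0 G' Q C t i z.1 s‖₊ : ℝ≥0∞) ^ 2) :=
          ((hSJmeas.comp measurable_fst).add
            ((trajZ_measurableW η x0 G' Q C hGmeas hQmeas hCmeas t i).comp
              ((measurable_fst.fst).prodMk measurable_snd))).nnnorm.coe_nnreal_ennreal.pow_const 2
        have hsum1 : ∀ ω, ∑ j ∈ J, ζ t j ω
            = SJf (Xh t ω, fun j : ↥J => seed t ↑j ω) := by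
          intro ω
          rw [hSJf]
          calc ∑ j ∈ J, ζ t j ω
              = ∑ j ∈ J.attach, ζ t ↑j ω := (Finset.sum_attach J fun j => ζ t j ω).symm
            _ = _ := by
                rw [← Finset.univ_eq_attach]
                exact Finset.sum_congr rfl fun j _ => specZ t ↑j ω
        calc ∫⁻ ω, (‖∑ j ∈ insert i J, ζ t j ω‖₊ : ℝ≥0∞) ^ 2 ∂μ
            = ∫⁻ ω, (‖SJf (Xh t ω, fun j : ↥J => seed t ↑j ω)
                + trajZ η x0 G' Q C t i (Xh t ω) (seed t i ω)‖₊ : ℝ≥0∞) ^ 2 ∂μ := by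
              refine lintegral_congr fun ω => ?_
              rw [Finset.sum_insert hiJ, hsum1 ω, specZ t i ω, add_comm]
          _ = ∫⁻ ω, ∫⁻ s, (‖SJf (Xh t ω, fun j : ↥J => seed t ↑j ω)
                + trajZ η x0 G' Q C t i (Xh t ω) s‖₊ : ℝ≥0∞) ^ 2
                ∂(νg.prod (νQ.prod (νQ.prod νC))) ∂μ :=
              condition_on (F := fun z s =>
                  (‖SJf z + trajZ η x0 G' Q C t i z.1 s‖₊ : ℝ≥0∞) ^ 2)
                hXJm (hseedMeas t i) (hIndepJ t J i hiJ) (hseedLaw t i) hFm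
          _ = ∫⁻ ω, (ENNReal.ofReal (‖SJf (Xh t ω, fun j : ↥J => seed t ↑j ω)‖ ^ 2)
                + ∫⁻ s, (‖trajZ η x0 G' Q C t i (Xh t ω) s‖₊ : ℝ≥0∞) ^ 2
                  ∂(νg.prod (νQ.prod (νQ.prod νC)))) ∂μ := by
              refine lintegral_congr fun ω => ?_
              have hvd := variance_decomp
                (ZmemS η x0 G' Q C f σ θ δ hGmeas hQmeas hCmeas hθ hδ0.le hGmean hGvar
                  hQvar hCvar t i (Xh t ω))
                (SJf (Xh t ω, fun j : ↥J => seed t ↑j ω))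
              rw [hvd, Zmean η x0 G' Q C f σ θ δ hGmeas hQmeas hCmeas hθ hδ0.le hGmean
                hGvar hQvar hCmean hCvar t i (Xh t ω)]
              simp
          _ = (∫⁻ ω, (‖∑ j ∈ J, ζ t j ω‖₊ : ℝ≥0∞) ^ 2 ∂μ)
                + ∫⁻ ω, ∫⁻ s, (‖trajZ η x0 G' Q C t i (Xh t ω) s‖₊ : ℝ≥0∞) ^ 2
                  ∂(νg.prod (νQ.prod (νQ.prod νC))) ∂μ := by
              have hm0 : Measurable fun ω =>
                  (‖SJf (Xh t ω, fun j : ↥J => seed t ↑j ω)‖₊ : ℝ≥0∞) ^ 2 :=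
                ((hSJmeas.comp hXJm).nnnorm.coe_nnreal_ennreal).pow_const 2
              have hm1 : Measurable fun ω =>
                  ENNReal.ofReal (‖SJf (Xh t ω, fun j : ↥J => seed t ↑j ω)‖ ^ 2) := by
                simpa only [ofReal_norm_sq] using hm0
              rw [lintegral_add_left hm1]
              congr 1
              refine lintegral_congr fun ω => ?_
              rw [ofReal_norm_sq, ← hsum1 ω]
          _ ≤ (J.card : ℝ≥0∞) * ENNReal.ofReal (θ * δ * δ * PB)
                + ENNReal.ofReal (θ * δ * δ * PB) := add_le_add ihJ (hZt2 i)
          _ = ((insert i J).card : ℝ≥0∞) * ENNReal.ofReal (θ * δ * δ * PB) := by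
              rw [Finset.card_insert_of_notMem hiJ]
              push_cast
              ring
  have hsummeas : Measurable fun ω => (‖∑ j, ζ t j ω‖₊ : ℝ≥0∞) ^ 2 :=
    ((Finset.measurable_sum _ fun j _ => hζmeas j).nnnorm.coe_nnreal_ennreal).pow_const 2
  have hfinreal : ((N:ℝ)⁻¹)^2 * ((N:ℝ) * (θ * δ * δ * PB))
      ≤ ((1 - c + c / lam) / (1 - c)) * (2 * δ ^ 2 * θ * η ^ 2 * (σ ^ 2 + G ^ 2) / N) := by
    rw [hPBdef, hKdef]
    exact realFinal_bound N hN σ G δ θ c lam η hθ hδ0 hc0 hc1 hlam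
  calc ∫⁻ ω, (‖(N : ℝ)⁻¹ • ∑ i, ζ t i ω‖₊ : ℝ≥0∞) ^ 2 ∂μ
      = ∫⁻ ω, ENNReal.ofReal (((N:ℝ)⁻¹)^2) * (‖∑ i, ζ t i ω‖₊ : ℝ≥0∞) ^ 2 ∂μ :=
        lintegral_congr fun ω => nnnorm_smul_sq _ _
    _ = ENNReal.ofReal (((N:ℝ)⁻¹)^2) * ∫⁻ ω, (‖∑ i, ζ t i ω‖₊ : ℝ≥0∞) ^ 2 ∂μ :=
        lintegral_const_mul _ hsummeas
    _ ≤ ENNReal.ofReal (((N:ℝ)⁻¹)^2)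
          * (((Finset.univ : Finset (Fin N)).card : ℝ≥0∞)
              * ENNReal.ofReal (θ * δ * δ * PB)) :=
        mul_le_mul_right (keySum Finset.univ) _
    _ = ENNReal.ofReal (((N:ℝ)⁻¹)^2 * ((N:ℝ) * (θ * δ * δ * PB))) := by
        rw [Finset.card_univ, Fintype.card_fin]
        rw [← ENNReal.ofReal_natCast N]
        rw [← ENNReal.ofReal_mul (by positivity : (0:ℝ) ≤ (N:ℝ)),
          ← ENNReal.ofReal_mul (by positivity : (0:ℝ) ≤ ((N:ℝ)⁻¹)^2)]
    _ ≤ ENNReal.ofReal (((1 - c + c / lam) / (1 - c)) *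
          (2 * δ ^ 2 * θ * η ^ 2 * (σ ^ 2 + G ^ 2) / (N : ℝ))) :=
        ENNReal.ofReal_le_ofReal hfinreal
end

section
/- Let u ∈ ℝ^d and let C be a random unbiased compressor with E[C(x) | x] = x and E[||C(x) − x||² | x] ≤ θ||x||² for some θ ≥ 0. Form the two-stage compression e = ẽ + q, where ẽ = C(u) and q = C(u − ẽ), the two calls to C using independent randomness. Then E[e] = u and E[||e − u||²] ≤ θ²||u||². -/
open MeasureTheory
open scoped ENNReal

private lemma le_one_add_sq (a : ℝ≥0∞) : a ≤ 1 + a ^ 2 := by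
  rcases le_total a 1 with h | h
  · exact h.trans le_self_add
  · refine le_trans ?_ le_add_self
    calc a = a * 1 := (mul_one a).symm
    _ ≤ a * a := mul_le_mul_right h a
    _ = a ^ 2 := (sq a).symm

/-- **Two-stage unbiased compression.**
Let `C` be a random unbiased compressor with `E[C x] = x` and
`E[‖C x - x‖²] ≤ θ‖x‖²` (θ ≥ 0), where the randomness of each call is drawn from a
probability measure `ν` (fresh and independent across the two calls, modeled by the
product measure `ν.prod ν`).  For `u ∈ ℝ^d`, setting `ẽ = C u` (first seed) and
`q = C (u - ẽ)` (second seed), the sum `e = ẽ + q` satisfies `E[e] = u` and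
`E[‖e - u‖²] ≤ θ²‖u‖²`. -/
theorem two_stage_unbiased_compression
    (d : ℕ) (θ : ℝ) (hθ : 0 ≤ θ)
    {ΩC : Type*} [MeasurableSpace ΩC] (ν : Measure ΩC) [IsProbabilityMeasure ν]
    (C : EuclideanSpace ℝ (Fin d) → ΩC → EuclideanSpace ℝ (Fin d))
    (hCmeas : Measurable (Function.uncurry C))
    (hCmean : ∀ x, ∫ ω, C x ω ∂ν = x)
    (hCvar : ∀ x, ∫⁻ ω, (‖C x ω - x‖₊ : ℝ≥0∞) ^ 2 ∂ν ≤ ENNReal.ofReal (θ * ‖x‖ ^ 2))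
    (u : EuclideanSpace ℝ (Fin d))
    (e : ΩC × ΩC → EuclideanSpace ℝ (Fin d))
    (he : ∀ ω : ΩC × ΩC, e ω = C u ω.1 + C (u - C u ω.1) ω.2) :
    (∫ ω, e ω ∂(ν.prod ν)) = u ∧
      ∫⁻ ω, (‖e ω - u‖₊ : ℝ≥0∞) ^ 2 ∂(ν.prod ν) ≤ ENNReal.ofReal (θ ^ 2 * ‖u‖ ^ 2) := by
  -- measurability of each fixed-input call
  have hmeasx : ∀ x, Measurable (fun ω => C x ω) :=
    fun x => hCmeas.comp (measurable_prodMk_left)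
  -- integrability of each fixed-input call
  have hint : ∀ x, Integrable (fun ω => C x ω) ν := by
    intro x
    refine ⟨(hmeasx x).aestronglyMeasurable, ?_⟩
    rw [HasFiniteIntegral]
    have hb : ∀ ω, (‖C x ω‖₊ : ℝ≥0∞)
        ≤ (‖C x ω - x‖₊ : ℝ≥0∞) ^ 2 + (1 + (‖x‖₊ : ℝ≥0∞)) := by
      intro ω
      have h1 : (‖C x ω‖₊ : ℝ≥0∞) ≤ (‖C x ω - x‖₊ : ℝ≥0∞) + (‖x‖₊ : ℝ≥0∞) := by
        have : C x ω = (C x ω - x) + x := by abel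
        calc (‖C x ω‖₊ : ℝ≥0∞) = (‖(C x ω - x) + x‖₊ : ℝ≥0∞) := by rw [← this]
        _ ≤ (‖C x ω - x‖₊ : ℝ≥0∞) + (‖x‖₊ : ℝ≥0∞) := by
            exact_mod_cast nnnorm_add_le _ _
      calc (‖C x ω‖₊ : ℝ≥0∞) ≤ (‖C x ω - x‖₊ : ℝ≥0∞) + (‖x‖₊ : ℝ≥0∞) := h1
      _ ≤ (1 + (‖C x ω - x‖₊ : ℝ≥0∞) ^ 2) + (‖x‖₊ : ℝ≥0∞) :=
          add_le_add_left (le_one_add_sq _) _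
      _ = (‖C x ω - x‖₊ : ℝ≥0∞) ^ 2 + (1 + (‖x‖₊ : ℝ≥0∞)) := by ring
    calc ∫⁻ ω, (‖C x ω‖₊ : ℝ≥0∞) ∂ν
        ≤ ∫⁻ ω, ((‖C x ω - x‖₊ : ℝ≥0∞) ^ 2 + (1 + (‖x‖₊ : ℝ≥0∞))) ∂ν :=
          lintegral_mono hb
      _ = (∫⁻ ω, (‖C x ω - x‖₊ : ℝ≥0∞) ^ 2 ∂ν) + (1 + (‖x‖₊ : ℝ≥0∞)) := by
          rw [lintegral_add_right _ measurable_const, lintegral_const, measure_univ, mul_one]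
      _ ≤ ENNReal.ofReal (θ * ‖x‖ ^ 2) + (1 + (‖x‖₊ : ℝ≥0∞)) :=
          add_le_add_left (hCvar x) _
      _ < ⊤ := by
          apply ENNReal.add_lt_top.2
          exact ⟨ENNReal.ofReal_lt_top, ENNReal.add_lt_top.2 ⟨ENNReal.one_lt_top,
            ENNReal.coe_lt_top⟩⟩
  -- measurability of e
  have hemeas : Measurable e := by
    have h1 : Measurable (fun ω : ΩC × ΩC => C u ω.1) :=
      (hmeasx u).comp measurable_fst
    have h2 : Measurable (fun ω : ΩC × ΩC => C (u - C u ω.1) ω.2) := by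
      have : Measurable (fun ω : ΩC × ΩC => ((u - C u ω.1, ω.2) : _ × ΩC)) :=
        (measurable_const.sub h1).prodMk measurable_snd
      exact hCmeas.comp this
    have : e = fun ω => C u ω.1 + C (u - C u ω.1) ω.2 := funext he
    rw [this]; exact h1.add h2
  -- the variance bound
  have hdiff : ∀ ω : ΩC × ΩC,
      e ω - u = C (u - C u ω.1) ω.2 - (u - C u ω.1) := by
    intro ω; rw [he ω]; abel
  have hvar : ∫⁻ ω, (‖e ω - u‖₊ : ℝ≥0∞) ^ 2 ∂(ν.prod ν)
      ≤ ENNReal.ofReal (θ ^ 2 * ‖u‖ ^ 2) := by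
    have hfmeas : Measurable (fun ω : ΩC × ΩC => (‖e ω - u‖₊ : ℝ≥0∞) ^ 2) :=
      ((hemeas.sub measurable_const).enorm).pow_const 2
    rw [lintegral_prod _ hfmeas.aemeasurable]
    have hinner : ∀ ω₁, ∫⁻ ω₂, (‖e (ω₁, ω₂) - u‖₊ : ℝ≥0∞) ^ 2 ∂ν
        ≤ ENNReal.ofReal θ * (‖C u ω₁ - u‖₊ : ℝ≥0∞) ^ 2 := by
      intro ω₁
      have : ∀ ω₂, (‖e (ω₁, ω₂) - u‖₊ : ℝ≥0∞) ^ 2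
          = (‖C (u - C u ω₁) ω₂ - (u - C u ω₁)‖₊ : ℝ≥0∞) ^ 2 := by
        intro ω₂; rw [hdiff (ω₁, ω₂)]
      simp only [this]
      calc ∫⁻ ω₂, (‖C (u - C u ω₁) ω₂ - (u - C u ω₁)‖₊ : ℝ≥0∞) ^ 2 ∂ν
          ≤ ENNReal.ofReal (θ * ‖u - C u ω₁‖ ^ 2) := hCvar _
        _ = ENNReal.ofReal θ * ENNReal.ofReal (‖u - C u ω₁‖ ^ 2) := by
            rw [ENNReal.ofReal_mul hθ]
        _ = ENNReal.ofReal θ * (‖C u ω₁ - u‖₊ : ℝ≥0∞) ^ 2 := by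
            congr 1
            rw [ENNReal.ofReal_pow (norm_nonneg _), ofReal_norm, enorm_eq_nnnorm,
              ← nnnorm_neg]
            congr 2
            abel
    calc ∫⁻ ω₁, ∫⁻ ω₂, (‖e (ω₁, ω₂) - u‖₊ : ℝ≥0∞) ^ 2 ∂ν ∂ν
        ≤ ∫⁻ ω₁, ENNReal.ofReal θ * (‖C u ω₁ - u‖₊ : ℝ≥0∞) ^ 2 ∂ν :=
          lintegral_mono hinner
      _ = ENNReal.ofReal θ * ∫⁻ ω₁, (‖C u ω₁ - u‖₊ : ℝ≥0∞) ^ 2 ∂ν :=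
          lintegral_const_mul _ (((hmeasx u).sub measurable_const).enorm.pow_const 2)
      _ ≤ ENNReal.ofReal θ * ENNReal.ofReal (θ * ‖u‖ ^ 2) :=
          mul_le_mul_right (hCvar u) _
      _ = ENNReal.ofReal (θ ^ 2 * ‖u‖ ^ 2) := by
          rw [← ENNReal.ofReal_mul hθ]; ring_nf
  refine ⟨?_, hvar⟩
  -- integrability of e on the product
  have heint : Integrable e (ν.prod ν) := by
    refine ⟨hemeas.aestronglyMeasurable, ?_⟩
    rw [HasFiniteIntegral]
    have hb : ∀ ω, (‖e ω‖₊ : ℝ≥0∞)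
        ≤ (‖e ω - u‖₊ : ℝ≥0∞) ^ 2 + (1 + (‖u‖₊ : ℝ≥0∞)) := by
      intro ω
      have h1 : (‖e ω‖₊ : ℝ≥0∞) ≤ (‖e ω - u‖₊ : ℝ≥0∞) + (‖u‖₊ : ℝ≥0∞) := by
        have : e ω = (e ω - u) + u := by abel
        calc (‖e ω‖₊ : ℝ≥0∞) = (‖(e ω - u) + u‖₊ : ℝ≥0∞) := by rw [← this]
        _ ≤ (‖e ω - u‖₊ : ℝ≥0∞) + (‖u‖₊ : ℝ≥0∞) := by exact_mod_cast nnnorm_add_le _ _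
      calc (‖e ω‖₊ : ℝ≥0∞) ≤ (‖e ω - u‖₊ : ℝ≥0∞) + (‖u‖₊ : ℝ≥0∞) := h1
      _ ≤ (1 + (‖e ω - u‖₊ : ℝ≥0∞) ^ 2) + (‖u‖₊ : ℝ≥0∞) :=
          add_le_add_left (le_one_add_sq _) _
      _ = (‖e ω - u‖₊ : ℝ≥0∞) ^ 2 + (1 + (‖u‖₊ : ℝ≥0∞)) := by ring
    calc ∫⁻ ω, (‖e ω‖₊ : ℝ≥0∞) ∂(ν.prod ν)
        ≤ ∫⁻ ω, ((‖e ω - u‖₊ : ℝ≥0∞) ^ 2 + (1 + (‖u‖₊ : ℝ≥0∞))) ∂(ν.prod ν) :=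
          lintegral_mono hb
      _ = (∫⁻ ω, (‖e ω - u‖₊ : ℝ≥0∞) ^ 2 ∂(ν.prod ν)) + (1 + (‖u‖₊ : ℝ≥0∞)) := by
          rw [lintegral_add_right _ measurable_const, lintegral_const, measure_univ, mul_one]
      _ ≤ ENNReal.ofReal (θ ^ 2 * ‖u‖ ^ 2) + (1 + (‖u‖₊ : ℝ≥0∞)) :=
          add_le_add_left hvar _
      _ < ⊤ := by
          apply ENNReal.add_lt_top.2
          exact ⟨ENNReal.ofReal_lt_top, ENNReal.add_lt_top.2 ⟨ENNReal.one_lt_top,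
            ENNReal.coe_lt_top⟩⟩
  -- the mean
  rw [MeasureTheory.integral_prod _ heint]
  have hinner : ∀ ω₁, ∫ ω₂, e (ω₁, ω₂) ∂ν = u := by
    intro ω₁
    have : (fun ω₂ => e (ω₁, ω₂)) = fun ω₂ => C u ω₁ + C (u - C u ω₁) ω₂ :=
      funext fun ω₂ => he (ω₁, ω₂)
    rw [this, integral_add (integrable_const _) (hint _), integral_const,
      probReal_univ, one_smul, hCmean]
    abel
  simp only [hinner, integral_const, probReal_univ, one_smul]
end

section
/- Let u ∈ ℝ^d, let Q be a random compressor with E[||Q(x) − x||² | x] ≤ δ||x||² for some δ ∈ (0,1), and let C be a random unbiased compressor with E[C(x) | x] = x and E[||C(x) − x||² | x] ≤ θ||x||² for some θ ≥ 0. Form e = ẽ + q, where ẽ = Q(u) and q = C(u − ẽ), the two compressor calls using independent randomness. Then E[e] = u and E[||e − u||²] ≤ δθ||u||². -/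
open MeasureTheory
open scoped ENNReal

lemma my_integrable_of_sq {Ω : Type*} [MeasurableSpace Ω] {μ : Measure Ω} [IsFiniteMeasure μ]
    {E : Type*} [NormedAddCommGroup E] {g : Ω → E}
    (hg : AEStronglyMeasurable g μ)
    (h : ∫⁻ ω, (‖g ω‖₊ : ℝ≥0∞) ^ 2 ∂μ < ⊤) : Integrable g μ := by
  refine ⟨hg, ?_⟩
  have hb : ∀ ω, (‖g ω‖₊ : ℝ≥0∞) ≤ 1 + (‖g ω‖₊ : ℝ≥0∞) ^ 2 := by
    intro ω
    rcases le_total ((‖g ω‖₊ : ℝ≥0∞)) 1 with h1 | h1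
    · exact le_add_right h1
    · exact le_add_left (le_self_pow₀ h1 two_ne_zero)
  calc ∫⁻ ω, (‖g ω‖₊ : ℝ≥0∞) ∂μ
      ≤ ∫⁻ ω, (1 + (‖g ω‖₊ : ℝ≥0∞) ^ 2) ∂μ := lintegral_mono hb
    _ = μ Set.univ + ∫⁻ ω, (‖g ω‖₊ : ℝ≥0∞) ^ 2 ∂μ := by
        rw [lintegral_add_left measurable_const, lintegral_const, one_mul]
    _ < ⊤ := ENNReal.add_lt_top.2 ⟨measure_lt_top μ _, h⟩

/-- **Contractive-then-unbiased two-stage compression.**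
Let `Q` be a random compressor with `E[‖Q x - x‖²] ≤ δ‖x‖²` (δ ∈ (0,1)) and `C` a
random unbiased compressor with `E[C x] = x` and `E[‖C x - x‖²] ≤ θ‖x‖²` (θ ≥ 0),
their randomness drawn from probability measures `νQ`, `νC` with independent fresh
calls (modeled by `νQ.prod νC`).  For `u ∈ ℝ^d`, setting `ẽ = Q u` and
`q = C (u - ẽ)`, the sum `e = ẽ + q` satisfies `E[e] = u` and
`E[‖e - u‖²] ≤ δθ‖u‖²`. -/
theorem contractive_then_unbiased_compression
    (d : ℕ) (δ θ : ℝ) (hδ0 : 0 < δ) (hδ1 : δ < 1) (hθ : 0 ≤ θ)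
    {ΩQ ΩC : Type*} [MeasurableSpace ΩQ] [MeasurableSpace ΩC]
    (νQ : Measure ΩQ) (νC : Measure ΩC)
    [IsProbabilityMeasure νQ] [IsProbabilityMeasure νC]
    (Q : EuclideanSpace ℝ (Fin d) → ΩQ → EuclideanSpace ℝ (Fin d))
    (C : EuclideanSpace ℝ (Fin d) → ΩC → EuclideanSpace ℝ (Fin d))
    (hQmeas : Measurable (Function.uncurry Q))
    (hCmeas : Measurable (Function.uncurry C))
    (hQvar : ∀ x, ∫⁻ ω, (‖Q x ω - x‖₊ : ℝ≥0∞) ^ 2 ∂νQ ≤ ENNReal.ofReal (δ * ‖x‖ ^ 2))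
    (hCmean : ∀ x, ∫ ω, C x ω ∂νC = x)
    (hCvar : ∀ x, ∫⁻ ω, (‖C x ω - x‖₊ : ℝ≥0∞) ^ 2 ∂νC ≤ ENNReal.ofReal (θ * ‖x‖ ^ 2))
    (u : EuclideanSpace ℝ (Fin d))
    (e : ΩQ × ΩC → EuclideanSpace ℝ (Fin d))
    (he : ∀ ω : ΩQ × ΩC, e ω = Q u ω.1 + C (u - Q u ω.1) ω.2) :
    (∫ ω, e ω ∂(νQ.prod νC)) = u ∧
      ∫⁻ ω, (‖e ω - u‖₊ : ℝ≥0∞) ^ 2 ∂(νQ.prod νC) ≤ ENNReal.ofReal (δ * θ * ‖u‖ ^ 2) := by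
  set x : ΩQ → EuclideanSpace ℝ (Fin d) := fun ω₁ => u - Q u ω₁ with hxdef
  -- measurability
  have hQu : Measurable (fun ω₁ => Q u ω₁) :=
    hQmeas.comp (measurable_const.prodMk measurable_id)
  have hx : Measurable x := measurable_const.sub hQu
  have hCc : ∀ y, Measurable (fun ω₂ => C y ω₂) := fun y =>
    hCmeas.comp (measurable_const.prodMk measurable_id)
  have hf : Measurable (fun ω : ΩQ × ΩC => C (x ω.1) ω.2 - x ω.1) := by
    have h1 : Measurable (fun ω : ΩQ × ΩC => C (x ω.1) ω.2) :=
      hCmeas.comp ((hx.comp measurable_fst).prodMk measurable_snd)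
    exact h1.sub (hx.comp measurable_fst)
  have hediff : ∀ ω : ΩQ × ΩC, e ω - u = C (x ω.1) ω.2 - x ω.1 := by
    intro ω; rw [he ω, hxdef]; beta_reduce; abel
  -- second moment bound
  have key : ∫⁻ ω, (‖e ω - u‖₊ : ℝ≥0∞) ^ 2 ∂(νQ.prod νC)
      ≤ ENNReal.ofReal (δ * θ * ‖u‖ ^ 2) := by
    calc ∫⁻ ω, (‖e ω - u‖₊ : ℝ≥0∞) ^ 2 ∂(νQ.prod νC)
        = ∫⁻ ω, (‖C (x ω.1) ω.2 - x ω.1‖₊ : ℝ≥0∞) ^ 2 ∂(νQ.prod νC) := by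
          simp_rw [hediff]
      _ = ∫⁻ ω₁, ∫⁻ ω₂, (‖C (x ω₁) ω₂ - x ω₁‖₊ : ℝ≥0∞) ^ 2 ∂νC ∂νQ := by
          exact lintegral_prod _ ((hf.nnnorm.coe_nnreal_ennreal.pow_const 2).aemeasurable)
      _ ≤ ∫⁻ ω₁, ENNReal.ofReal (θ * ‖x ω₁‖ ^ 2) ∂νQ :=
          lintegral_mono fun ω₁ => hCvar (x ω₁)
      _ = ∫⁻ ω₁, ENNReal.ofReal θ * (‖Q u ω₁ - u‖₊ : ℝ≥0∞) ^ 2 ∂νQ := by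
          congr 1; funext ω₁
          rw [ENNReal.ofReal_mul hθ, ENNReal.ofReal_pow (norm_nonneg _),
            ofReal_norm, enorm_eq_nnnorm]
          simp only [hxdef]
          congr 3
          rw [← nnnorm_neg, neg_sub]
      _ = ENNReal.ofReal θ * ∫⁻ ω₁, (‖Q u ω₁ - u‖₊ : ℝ≥0∞) ^ 2 ∂νQ :=
          lintegral_const_mul _ ((hQu.sub measurable_const).nnnorm.coe_nnreal_ennreal.pow_const 2)
      _ ≤ ENNReal.ofReal θ * ENNReal.ofReal (δ * ‖u‖ ^ 2) :=
          mul_le_mul_right (hQvar u) _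
      _ = ENNReal.ofReal (δ * θ * ‖u‖ ^ 2) := by
          rw [← ENNReal.ofReal_mul hθ]; ring_nf
  refine ⟨?_, key⟩
  -- mean
  have hfin : ∫⁻ ω, (‖e ω - u‖₊ : ℝ≥0∞) ^ 2 ∂(νQ.prod νC) < ⊤ :=
    lt_of_le_of_lt key ENNReal.ofReal_lt_top
  have hf_int : Integrable (fun ω => e ω - u) (νQ.prod νC) := by
    refine my_integrable_of_sq ?_ hfin
    have : Measurable (fun ω => e ω - u) := by
      have := hf; simp_rw [← hediff] at this; exact this
    exact this.aestronglyMeasurable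
  have hCx_int : ∀ y, Integrable (fun ω₂ => C y ω₂) νC := by
    intro y
    have h1 : Integrable (fun ω₂ => C y ω₂ - y) νC := by
      refine my_integrable_of_sq ((hCc y).sub measurable_const).aestronglyMeasurable ?_
      exact lt_of_le_of_lt (hCvar y) ENNReal.ofReal_lt_top
    exact (h1.add (integrable_const y)).congr
      (Filter.Eventually.of_forall fun ω => by simp)
  have hinner : ∀ y : EuclideanSpace ℝ (Fin d), ∫ ω₂, (C y ω₂ - y) ∂νC = 0 := by
    intro y
    rw [integral_sub (hCx_int y) (integrable_const y), hCmean, integral_const,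
      probReal_univ, one_smul, sub_self]
  have hf0 : ∫ ω, (e ω - u) ∂(νQ.prod νC) = 0 := by
    have hfi : Integrable (fun ω : ΩQ × ΩC => C (x ω.1) ω.2 - x ω.1) (νQ.prod νC) := by
      refine hf_int.congr (Filter.Eventually.of_forall fun ω => hediff ω)
    calc ∫ ω, (e ω - u) ∂(νQ.prod νC)
        = ∫ ω : ΩQ × ΩC, (C (x ω.1) ω.2 - x ω.1) ∂(νQ.prod νC) := by
          exact integral_congr_ae (Filter.Eventually.of_forall hediff)
      _ = ∫ ω₁, ∫ ω₂, (C (x ω₁) ω₂ - x ω₁) ∂νC ∂νQ := integral_prod _ hfi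
      _ = ∫ ω₁, (0 : EuclideanSpace ℝ (Fin d)) ∂νQ := by
          congr 1; funext ω₁; exact hinner (x ω₁)
      _ = 0 := integral_zero _ _
  have he_int : Integrable e (νQ.prod νC) := by
    exact (hf_int.add (integrable_const u)).congr
      (Filter.Eventually.of_forall fun ω => by simp)
  have : ∫ ω, (e ω - u) ∂(νQ.prod νC) = (∫ ω, e ω ∂(νQ.prod νC)) - u := by
    rw [integral_sub he_int (integrable_const u), integral_const, probReal_univ,
      one_smul]
  rw [this] at hf0
  exact sub_eq_zero.mp hf0
end

section
/- Let p be a random vector in ℝ^d, let Δ = Q(p) where Q is a random compressor satisfying E[||Q(x) − x||² | x] ≤ δ||x||² for some δ ∈ (0,1), and let ζ be a random vector with E[ζ | p, Δ] = 0 and E[||ζ||² | p, Δ] ≤ θ||p − Δ||² for some θ ≥ 0. Then E[||p − Δ + ζ||²] ≤ (1 + √θ)² · δ · E[||p||²]. -/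
open MeasureTheory
open scoped ENNReal

lemma young_real {E : Type*} [SeminormedAddCommGroup E] (e z : E) {α : ℝ} (hα : 0 < α) :
    ‖e + z‖ ^ 2 ≤ (1 + α) * ‖e‖ ^ 2 + (1 + α⁻¹) * ‖z‖ ^ 2 := by
  have h1 : ‖e + z‖ ≤ ‖e‖ + ‖z‖ := norm_add_le _ _
  have h2 : ‖e + z‖ ^ 2 ≤ (‖e‖ + ‖z‖) ^ 2 := by
    apply pow_le_pow_left₀ (norm_nonneg _) h1
  have h3 : α * α⁻¹ = 1 := mul_inv_cancel₀ hα.ne'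
  nlinarith [mul_nonneg (inv_nonneg.2 hα.le) (sq_nonneg (α * ‖e‖ - ‖z‖)), h3,
    norm_nonneg e, norm_nonneg z, sq_nonneg (‖e‖ - ‖z‖)]

lemma young_enn {E : Type*} [SeminormedAddCommGroup E] (e z : E) {α : ℝ} (hα : 0 ≤ α) :
    (‖e + z‖₊ : ℝ≥0∞) ^ 2 ≤ (1 + ENNReal.ofReal α) * (‖e‖₊ : ℝ≥0∞) ^ 2
      + (1 + (ENNReal.ofReal α)⁻¹) * (‖z‖₊ : ℝ≥0∞) ^ 2 := by
  rcases eq_or_lt_of_le hα with h0 | hα'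
  · subst h0
    by_cases hz : ‖z‖₊ = 0
    · simp only [ENNReal.ofReal_zero, add_zero]
      have hb : (‖e + z‖₊ : ℝ≥0∞) ≤ (‖e‖₊ : ℝ≥0∞) + (‖z‖₊ : ℝ≥0∞) := by
        exact_mod_cast nnnorm_add_le e z
      rw [hz] at hb
      simp only [ENNReal.coe_zero, add_zero] at hb
      calc (‖e + z‖₊ : ℝ≥0∞) ^ 2 ≤ (‖e‖₊ : ℝ≥0∞) ^ 2 := by gcongr
        _ = 1 * (‖e‖₊ : ℝ≥0∞) ^ 2 := (one_mul _).symm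
        _ ≤ 1 * (‖e‖₊ : ℝ≥0∞) ^ 2 + (1 + (0:ℝ≥0∞)⁻¹) * (‖z‖₊ : ℝ≥0∞) ^ 2 := le_self_add
    · have : (1 + ((ENNReal.ofReal 0)⁻¹ : ℝ≥0∞)) * (‖z‖₊ : ℝ≥0∞) ^ 2 = ⊤ := by
        rw [ENNReal.ofReal_zero, ENNReal.inv_zero]
        simp [add_mul, ENNReal.mul_eq_top, pow_eq_zero_iff, hz]
      rw [this]
      simp
  · have key := young_real e z hα'
    have he : ∀ x : E, ((‖x‖₊ : ℝ≥0∞)) ^ 2 = ENNReal.ofReal (‖x‖ ^ 2) := by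
      intro x
      rw [ENNReal.ofReal_pow (norm_nonneg _), ← coe_nnnorm, ENNReal.ofReal_coe_nnreal]
    rw [he, he, he, ← ENNReal.ofReal_inv_of_pos hα',
      ← ENNReal.ofReal_one, ← ENNReal.ofReal_add zero_le_one hα,
      ← ENNReal.ofReal_add zero_le_one (inv_nonneg.2 hα),
      ← ENNReal.ofReal_mul (by positivity), ← ENNReal.ofReal_mul (by positivity),
      ← ENNReal.ofReal_add (by positivity) (by positivity)]
    exact ENNReal.ofReal_le_ofReal key

/-- **Young-inequality bound for compressed error feedback.**
Let `p` be a random vector (a function of the base randomness `ω₀ ∼ μ₀`), let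
`Δ = Q p` where `Q` is a random compressor with `E[‖Q x - x‖²] ≤ δ‖x‖²` (δ ∈ (0,1))
drawn from a fresh seed `∼ νQ`, and let `ζ = Z p Δ` be a random vector generated from
`(p, Δ)` and a fresh seed `∼ νZ` whose conditional mean is `0` and whose conditional
second moment is at most `θ‖p - Δ‖²` (θ ≥ 0).  Then, over the product randomness,
`E[‖p - Δ + ζ‖²] ≤ (1 + √θ)² δ E[‖p‖²]`. -/
theorem young_bound_compressed_error
    (d : ℕ) (δ θ : ℝ) (hδ0 : 0 < δ) (hδ1 : δ < 1) (hθ : 0 ≤ θ)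
    {Ω₀ ΩQ ΩZ : Type*} [MeasurableSpace Ω₀] [MeasurableSpace ΩQ] [MeasurableSpace ΩZ]
    (μ₀ : Measure Ω₀) (νQ : Measure ΩQ) (νZ : Measure ΩZ)
    [IsProbabilityMeasure μ₀] [IsProbabilityMeasure νQ] [IsProbabilityMeasure νZ]
    (p : Ω₀ → EuclideanSpace ℝ (Fin d)) (hpmeas : Measurable p)
    (Q : EuclideanSpace ℝ (Fin d) → ΩQ → EuclideanSpace ℝ (Fin d))
    (hQmeas : Measurable (Function.uncurry Q))
    (hQvar : ∀ x, ∫⁻ ω, (‖Q x ω - x‖₊ : ℝ≥0∞) ^ 2 ∂νQ ≤ ENNReal.ofReal (δ * ‖x‖ ^ 2))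
    (Z : EuclideanSpace ℝ (Fin d) → EuclideanSpace ℝ (Fin d) → ΩZ →
      EuclideanSpace ℝ (Fin d))
    (hZmeas : Measurable fun q : (EuclideanSpace ℝ (Fin d) × EuclideanSpace ℝ (Fin d)) × ΩZ =>
      Z q.1.1 q.1.2 q.2)
    (hZmean : ∀ a b, ∫ ω, Z a b ω ∂νZ = 0)
    (hZvar : ∀ a b, ∫⁻ ω, (‖Z a b ω‖₊ : ℝ≥0∞) ^ 2 ∂νZ ≤ ENNReal.ofReal (θ * ‖a - b‖ ^ 2)) :
    ∫⁻ ω, (‖p ω.1 - Q (p ω.1) ω.2.1 + Z (p ω.1) (Q (p ω.1) ω.2.1) ω.2.2‖₊ : ℝ≥0∞) ^ 2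
        ∂(μ₀.prod (νQ.prod νZ))
      ≤ ENNReal.ofReal ((1 + Real.sqrt θ) ^ 2 * δ) *
          ∫⁻ ω₀, (‖p ω₀‖₊ : ℝ≥0∞) ^ 2 ∂μ₀ := by
  set c : ℝ≥0∞ := ENNReal.ofReal (Real.sqrt θ) with hc
  have hcne : c ≠ ⊤ := ENNReal.ofReal_ne_top
  have hθc : ENNReal.ofReal θ = c ^ 2 := by
    rw [hc, ← ENNReal.ofReal_pow (Real.sqrt_nonneg θ), Real.sq_sqrt hθ]
  -- inner bound over νZ
  have inner : ∀ a b : EuclideanSpace ℝ (Fin d),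
      ∫⁻ ωZ, (‖a - b + Z a b ωZ‖₊ : ℝ≥0∞) ^ 2 ∂νZ ≤ (1 + c) ^ 2 * (‖a - b‖₊ : ℝ≥0∞) ^ 2 := by
    intro a b
    have hmZ0 : Measurable fun ωZ => Z a b ωZ :=
      hZmeas.comp' (measurable_prodMk_left : Measurable fun ω : ΩZ => ((a, b), ω))
    have hmZ : Measurable fun ωZ => ((‖Z a b ωZ‖₊ : ℝ≥0∞)) ^ 2 := hmZ0.enorm.pow_const 2
    have hvar : ∫⁻ ωZ, ((‖Z a b ωZ‖₊ : ℝ≥0∞)) ^ 2 ∂νZ ≤ c ^ 2 * (‖a - b‖₊ : ℝ≥0∞) ^ 2 := by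
      refine (hZvar a b).trans_eq ?_
      rw [ENNReal.ofReal_mul hθ, hθc, ENNReal.ofReal_pow (norm_nonneg _),
        ← coe_nnnorm, ENNReal.ofReal_coe_nnreal]
    calc ∫⁻ ωZ, (‖a - b + Z a b ωZ‖₊ : ℝ≥0∞) ^ 2 ∂νZ
        ≤ ∫⁻ ωZ, ((1 + c) * (‖a - b‖₊ : ℝ≥0∞) ^ 2
            + (1 + c⁻¹) * (‖Z a b ωZ‖₊ : ℝ≥0∞) ^ 2) ∂νZ :=
          lintegral_mono fun ωZ => young_enn _ _ (Real.sqrt_nonneg θ)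
      _ = (1 + c) * (‖a - b‖₊ : ℝ≥0∞) ^ 2
            + (1 + c⁻¹) * ∫⁻ ωZ, ((‖Z a b ωZ‖₊ : ℝ≥0∞)) ^ 2 ∂νZ := by
          rw [lintegral_add_left measurable_const, lintegral_const_mul _ hmZ, lintegral_const,
            measure_univ, mul_one]
      _ ≤ (1 + c) * (‖a - b‖₊ : ℝ≥0∞) ^ 2 + (1 + c⁻¹) * (c ^ 2 * (‖a - b‖₊ : ℝ≥0∞) ^ 2) := by
          gcongr
      _ = ((1 + c) + (1 + c⁻¹) * c ^ 2) * (‖a - b‖₊ : ℝ≥0∞) ^ 2 := by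
          ring
      _ = (1 + c) ^ 2 * (‖a - b‖₊ : ℝ≥0∞) ^ 2 := by
          congr 1
          have hc2 : (1 + c⁻¹) * c ^ 2 = c ^ 2 + c := by
            rcases eq_or_ne c 0 with h | h
            · simp [h]
            · rw [add_mul, one_mul, pow_two, ← mul_assoc, ENNReal.inv_mul_cancel h hcne,
                one_mul, ← pow_two]
          rw [hc2]; ring
  -- bound over νQ
  have mid : ∀ a : EuclideanSpace ℝ (Fin d),
      ∫⁻ ωQ, ∫⁻ ωZ, (‖a - Q a ωQ + Z a (Q a ωQ) ωZ‖₊ : ℝ≥0∞) ^ 2 ∂νZ ∂νQ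
        ≤ (1 + c) ^ 2 * ENNReal.ofReal δ * (‖a‖₊ : ℝ≥0∞) ^ 2 := by
    intro a
    have hmQ0 : Measurable fun ωQ => Q a ωQ :=
      hQmeas.comp' (measurable_prodMk_left : Measurable fun ω : ΩQ => (a, ω))
    have hmQ : Measurable fun ωQ => ((‖a - Q a ωQ‖₊ : ℝ≥0∞)) ^ 2 :=
      (measurable_const.sub hmQ0).enorm.pow_const 2
    calc ∫⁻ ωQ, ∫⁻ ωZ, (‖a - Q a ωQ + Z a (Q a ωQ) ωZ‖₊ : ℝ≥0∞) ^ 2 ∂νZ ∂νQ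
        ≤ ∫⁻ ωQ, (1 + c) ^ 2 * (‖a - Q a ωQ‖₊ : ℝ≥0∞) ^ 2 ∂νQ :=
          lintegral_mono fun ωQ => inner a (Q a ωQ)
      _ = (1 + c) ^ 2 * ∫⁻ ωQ, ((‖a - Q a ωQ‖₊ : ℝ≥0∞)) ^ 2 ∂νQ :=
          lintegral_const_mul _ hmQ
      _ ≤ (1 + c) ^ 2 * ENNReal.ofReal (δ * ‖a‖ ^ 2) := by
          gcongr
          have hrev : ∀ ω, (‖a - Q a ω‖₊ : ℝ≥0∞) = (‖Q a ω - a‖₊ : ℝ≥0∞) := by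
            intro ω
            congr 1
            exact NNReal.coe_injective (by simp [coe_nnnorm, norm_sub_rev])
          simp only [hrev]
          exact hQvar a
      _ = (1 + c) ^ 2 * ENNReal.ofReal δ * (‖a‖₊ : ℝ≥0∞) ^ 2 := by
          rw [ENNReal.ofReal_mul hδ0.le, ENNReal.ofReal_pow (norm_nonneg _),
            ← coe_nnnorm, ENNReal.ofReal_coe_nnreal, mul_assoc]
  -- measurability of the whole integrand
  have hp1 : Measurable fun ω : Ω₀ × ΩQ × ΩZ => p ω.1 := hpmeas.comp' measurable_fst
  have hQp : Measurable fun ω : Ω₀ × ΩQ × ΩZ => Q (p ω.1) ω.2.1 :=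
    hQmeas.comp' (hp1.prodMk measurable_snd.fst :
      Measurable fun ω : Ω₀ × ΩQ × ΩZ => (p ω.1, ω.2.1))
  have hZp : Measurable fun ω : Ω₀ × ΩQ × ΩZ => Z (p ω.1) (Q (p ω.1) ω.2.1) ω.2.2 :=
    hZmeas.comp' ((hp1.prodMk hQp).prodMk measurable_snd.snd :
      Measurable fun ω : Ω₀ × ΩQ × ΩZ => ((p ω.1, Q (p ω.1) ω.2.1), ω.2.2))
  have hF : Measurable fun ω : Ω₀ × ΩQ × ΩZ =>
      (‖p ω.1 - Q (p ω.1) ω.2.1 + Z (p ω.1) (Q (p ω.1) ω.2.1) ω.2.2‖₊ : ℝ≥0∞) ^ 2 :=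
    (((hp1.sub hQp).add hZp).enorm).pow_const 2
  have hconst : ENNReal.ofReal ((1 + Real.sqrt θ) ^ 2 * δ) = (1 + c) ^ 2 * ENNReal.ofReal δ := by
    rw [ENNReal.ofReal_mul (by positivity), ENNReal.ofReal_pow (by positivity),
      ENNReal.ofReal_add zero_le_one (Real.sqrt_nonneg θ), ENNReal.ofReal_one]
  calc ∫⁻ ω, (‖p ω.1 - Q (p ω.1) ω.2.1 + Z (p ω.1) (Q (p ω.1) ω.2.1) ω.2.2‖₊ : ℝ≥0∞) ^ 2
        ∂(μ₀.prod (νQ.prod νZ))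
      = ∫⁻ ω₀, ∫⁻ ωqz, (‖p ω₀ - Q (p ω₀) ωqz.1 + Z (p ω₀) (Q (p ω₀) ωqz.1) ωqz.2‖₊ : ℝ≥0∞) ^ 2
          ∂(νQ.prod νZ) ∂μ₀ := lintegral_prod _ hF.aemeasurable
    _ = ∫⁻ ω₀, ∫⁻ ωQ, ∫⁻ ωZ,
          (‖p ω₀ - Q (p ω₀) ωQ + Z (p ω₀) (Q (p ω₀) ωQ) ωZ‖₊ : ℝ≥0∞) ^ 2 ∂νZ ∂νQ ∂μ₀ := by
        refine lintegral_congr fun ω₀ => ?_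
        exact lintegral_prod _ ((hF.comp'
          (measurable_prodMk_left : Measurable fun ωqz : ΩQ × ΩZ => (ω₀, ωqz)))).aemeasurable
    _ ≤ ∫⁻ ω₀, (1 + c) ^ 2 * ENNReal.ofReal δ * (‖p ω₀‖₊ : ℝ≥0∞) ^ 2 ∂μ₀ :=
        lintegral_mono fun ω₀ => mid (p ω₀)
    _ = (1 + c) ^ 2 * ENNReal.ofReal δ * ∫⁻ ω₀, (‖p ω₀‖₊ : ℝ≥0∞) ^ 2 ∂μ₀ :=
        lintegral_const_mul _ (hpmeas.enorm.pow_const 2)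
    _ = ENNReal.ofReal ((1 + Real.sqrt θ) ^ 2 * δ) * ∫⁻ ω₀, (‖p ω₀‖₊ : ℝ≥0∞) ^ 2 ∂μ₀ := by
        rw [hconst]
end
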